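/- arXiv:2402.01953 — 3 statements merged into one kernel-verified Lean document; each statement's English description precedes it below -/
import Mathlib

section
/- Let d = 3 and let Q_2 = [2/5,3/5]^3 ∈ Q_1^(3)(F^(3)). Then for every real p > 1 and every integer m ≥ 1, E_{p,m}(Q_2, Γ(Q_2)^c) ≤ 7(12·5^m − 16). -/
open Set MeasureTheory Filter
open scoped Classical

noncomputable section

/-- Points of `ℝ^d` with the Euclidean metric. -/
abbrev Pt (d : ℕ) := EuclideanSpace ℝ (Fin d)

/-- The closed cube `∏ [(lᵢ-1)/5ⁿ, lᵢ/5ⁿ]`. -/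
def cube (d n : ℕ) (l : Fin d → ℕ) : Set (Pt d) :=
  {x | ∀ i, ((l i : ℝ) - 1) / 5 ^ n ≤ x i ∧ x i ≤ (l i : ℝ) / 5 ^ n}

/-- The collection `𝒬ₙ⁽ᵈ⁾` of level-`n` cubes. -/
def Qcol (d n : ℕ) : Set (Set (Pt d)) :=
  {Q | ∃ l : Fin d → ℕ, (∀ i, 1 ≤ l i ∧ l i ≤ 5 ^ n) ∧ Q = cube d n l}

/-- `𝒬ₙ⁽ᵈ⁾(A)`: the level-`n` cubes whose interior meets `A`. -/
def QcolOf (d n : ℕ) (A : Set (Pt d)) : Set (Set (Pt d)) :=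
  {Q | Q ∈ Qcol d n ∧ (interior Q ∩ A).Nonempty}

/-- `F₀⁽ᵈ⁾ = [0,1]^d`. -/
def F0 (d : ℕ) : Set (Pt d) := {x | ∀ i, x i ∈ Icc (0 : ℝ) 1}

/-- `F₁⁽ᵈ⁾`. -/
def F1 (d : ℕ) : Set (Pt d) :=
  F0 d \ ⋃ i : Fin d, {x | (∀ j, j < i → x j ∈ Ioo (2/5 : ℝ) (3/5)) ∧
    x i ∈ Ioo (1/5 : ℝ) (2/5) ∪ Ioo (3/5 : ℝ) (4/5) ∧
    ∀ j, i < j → x j ∈ Ioo (2/5 : ℝ) (3/5)}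

/-- The orientation-preserving affine map from `[0,1]^d` onto the cube indexed by `l` at
level `n`. -/
def psi (d n : ℕ) (l : Fin d → ℕ) (x : Pt d) : Pt d :=
  WithLp.toLp 2 (fun i => ((l i : ℝ) - 1) / 5 ^ n + x i / 5 ^ n)

/-- The approximations `Fₙ⁽ᵈ⁾`. -/
def Fn (d : ℕ) : ℕ → Set (Pt d)
  | 0 => F0 d
  | 1 => F1 d
  | n + 2 => ⋃ l ∈ {l : Fin d → ℕ | cube d 1 l ∈ QcolOf d 1 (F1 d)}, psi d 1 l '' Fn d (n + 1)

/-- The fractal `F⁽ᵈ⁾`. -/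
def Fset (d : ℕ) : Set (Pt d) := ⋂ n, Fn d n

/-- `G₁⁽ᵈ⁾`: union of the level-1 cubes of `F₁⁽ᵈ⁾` which meet the boundary of `[0,1]^d`. -/
def G1 (d : ℕ) : Set (Pt d) :=
  ⋃ Q ∈ {Q | Q ∈ QcolOf d 1 (F1 d) ∧ (Q ∩ frontier (F0 d)).Nonempty}, Q

/-- The approximations `Gₙ⁽ᵈ⁾`. -/
def Gn (d : ℕ) : ℕ → Set (Pt d)
  | 0 => F0 d
  | 1 => G1 d
  | n + 2 => ⋃ l ∈ {l : Fin d → ℕ | cube d 1 l ∈ QcolOf d 1 (G1 d)}, psi d 1 l '' Gn d (n + 1)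

/-- The boundary fractal `G⁽ᵈ⁾ = [0,1]^d ∩ ⋂_{n ≥ 1} Gₙ⁽ᵈ⁾`. -/
def Gset (d : ℕ) : Set (Pt d) := F0 d ∩ ⋂ n, ⋂ (_ : 1 ≤ n), Gn d n

/-- The discrete `p`-energy `𝓔ₚⁿ(f)` on the level-`n` cubes of `F⁽ᵈ⁾`. -/
def energy (d n : ℕ) (p : ℝ) (f : Set (Pt d) → ℝ) : ℝ :=
  (1 / 2) * ∑' Q : QcolOf d n (Fset d), ∑' Q' : QcolOf d n (Fset d),
    if ((Q : Set (Pt d)) ∩ (Q' : Set (Pt d))).Nonempty then |f Q - f Q'| ^ p else 0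

/-- `Sᵐ(A)`: level-`(n+m)` cubes of `F⁽ᵈ⁾` contained in some cube of `A`. -/
def Sm (d n m : ℕ) (A : Set (Set (Pt d))) : Set (Set (Pt d)) :=
  {Q | Q ∈ QcolOf d (n + m) (Fset d) ∧ ∃ Q' ∈ A, Q ⊆ Q'}

/-- The effective `p`-conductance `𝓔_{p,m}(A₁, A₂)`. -/
def conduct (d n m : ℕ) (p : ℝ) (A₁ A₂ : Set (Set (Pt d))) : ℝ :=
  sInf {e : ℝ | ∃ f : Set (Pt d) → ℝ,
    (∀ Q ∈ Sm d n m A₁, f Q = 1) ∧ (∀ Q ∈ Sm d n m A₂, f Q = 0) ∧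
    e = energy d (n + m) p f}

/-- `Γ(Q)`: level-`n` cubes of `F⁽ᵈ⁾` meeting `Q`. -/
def Gam (d n : ℕ) (Q : Set (Pt d)) : Set (Set (Pt d)) :=
  {Q' | Q' ∈ QcolOf d n (Fset d) ∧ (Q' ∩ Q).Nonempty}

/-- `Γ(Q)ᶜ = 𝒬ₙ⁽ᵈ⁾(F⁽ᵈ⁾) \ Γ(Q)`. -/
def GamC (d n : ℕ) (Q : Set (Pt d)) : Set (Set (Pt d)) :=
  QcolOf d n (Fset d) \ Gam d n Q

/-- The corner cube `[0, 1/5]^d`. -/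
def Qone (d : ℕ) : Set (Pt d) := {x | ∀ i, x i ∈ Icc (0 : ℝ) (1/5)}

/-- The center cube `[2/5, 3/5]^d`. -/
def Qtwo (d : ℕ) : Set (Pt d) := {x | ∀ i, x i ∈ Icc (2/5 : ℝ) (3/5)}

end

lemma interior_cube_lt (n : ℕ) (l : Fin 3 → ℕ) {x : Pt 3} (hx : x ∈ interior (cube 3 n l))
    (i : Fin 3) : ((l i : ℝ) - 1)/5^n < x i ∧ x i < (l i : ℝ)/5^n := by
  obtain ⟨ε, hε, hball⟩ := Metric.isOpen_iff.mp isOpen_interior x hx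
  have hsub : Metric.ball x ε ⊆ cube 3 n l := hball.trans interior_subset
  have hy : x + (ε/2) • (EuclideanSpace.single i (1:ℝ)) ∈ cube 3 n l := by
    apply hsub
    rw [Metric.mem_ball, dist_eq_norm]
    simp [norm_smul, EuclideanSpace.norm_single, abs_of_pos hε]
    linarith
  have hz : x - (ε/2) • (EuclideanSpace.single i (1:ℝ)) ∈ cube 3 n l := by
    apply hsub
    rw [Metric.mem_ball, dist_eq_norm]
    simp [norm_smul, EuclideanSpace.norm_single, abs_of_pos hε]
    linarith
  have h1 := (hy i).2
  have h2 := (hz i).1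
  simp [EuclideanSpace.single_apply] at h1 h2
  constructor <;> linarith

lemma pow_pos5 (n : ℕ) : (0:ℝ) < 5 ^ n := by positivity

/-- midpoint of the cube -/
lemma mid_mem_cube (n : ℕ) (l : Fin 3 → ℕ) :
    (WithLp.toLp 2 (fun j => ((l j : ℝ) - 1/2)/5^n) : Pt 3) ∈ cube 3 n l := by
  intro i
  have := pow_pos5 n
  constructor <;> [skip; skip] <;>
  · show _ ≤ _
    simp only [PiLp.toLp_apply]
    rw [div_le_div_iff₀ (by positivity) (by positivity)]
    ring_nf
    nlinarith [this]

/-- cube ⊆ Qtwo iff index bounds -/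
lemma cube_subset_qtwo (m : ℕ) (l : Fin 3 → ℕ) :
    cube 3 (1+m) l ⊆ Qtwo 3 ↔ ∀ j, 2*5^m + 1 ≤ l j ∧ l j ≤ 3*5^m := by
  have h5 : (0:ℝ) < 5 ^ (1+m) := pow_pos5 _
  constructor
  · intro h j
    have hx := h (mid_mem_cube (1+m) l) j
    obtain ⟨h1, h2⟩ := hx
    have e1 : (2:ℝ)/5 * 5^(1+m) = 2*5^m := by rw [pow_add]; ring
    have e2 : (3:ℝ)/5 * 5^(1+m) = 3*5^m := by rw [pow_add]; ring
    rw [le_div_iff₀ h5] at h1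
    rw [div_le_iff₀ h5] at h2
    rw [e1] at h1; rw [e2] at h2
    constructor
    · have hr : (2*(5:ℝ)^m : ℝ) < ((l j : ℕ) : ℝ) := by linarith
      have : (2*5^m : ℕ) < l j := by exact_mod_cast hr
      omega
    · have hr : ((l j : ℕ) : ℝ) < 3*(5:ℝ)^m + 1 := by linarith
      have : (l j : ℕ) < 3*5^m + 1 := by exact_mod_cast hr
      omega
  · intro h x hx j
    have h1 := (hx j).1
    have h2 := (hx j).2
    have hb := h j
    have c1 : ((2*5^m+1 : ℕ):ℝ) ≤ l j := by exact_mod_cast hb.1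
    have c2 : ((l j : ℕ):ℝ) ≤ ((3*5^m : ℕ):ℝ) := by exact_mod_cast hb.2
    push_cast at c1 c2
    have e1 : (2:ℝ)/5 * 5^(1+m) = 2*5^m := by rw [pow_add]; ring
    have e2 : (3:ℝ)/5 * 5^(1+m) = 3*5^m := by rw [pow_add]; ring
    constructor
    · show (2:ℝ)/5 ≤ x j
      have : (2:ℝ)/5 ≤ ((l j:ℝ)-1)/5^(1+m) := by
        rw [le_div_iff₀ h5, e1]; linarith
      linarith
    · show x j ≤ (3:ℝ)/5
      have : (l j:ℝ)/5^(1+m) ≤ 3/5 := by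
        rw [div_le_iff₀ h5, e2]; linarith
      linarith

/-- adjacency gives index proximity -/
lemma adjacent_idx (n : ℕ) (l l' : Fin 3 → ℕ)
    (h : (cube 3 n l ∩ cube 3 n l').Nonempty) (j : Fin 3) :
    l j ≤ l' j + 1 ∧ l' j ≤ l j + 1 := by
  obtain ⟨x, hx, hx'⟩ := h
  have h5 : (0:ℝ) < 5 ^ n := pow_pos5 _
  have h1 : ((l j:ℝ) - 1)/5^n ≤ (l' j:ℝ)/5^n := le_trans (hx j).1 (hx' j).2
  have h2 : ((l' j:ℝ) - 1)/5^n ≤ (l j:ℝ)/5^n := le_trans (hx' j).1 (hx j).2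
  rw [div_le_div_iff₀ h5 h5] at h1 h2
  constructor
  · have : ((l j:ℕ):ℝ) ≤ ((l' j + 1:ℕ):ℝ) := by push_cast; nlinarith
    exact_mod_cast this
  · have : ((l' j:ℕ):ℝ) ≤ ((l j + 1:ℕ):ℝ) := by push_cast; nlinarith
    exact_mod_cast this

/-- finiteness -/
lemma qcolOf_finite (n : ℕ) : (QcolOf 3 n (Fset 3)).Finite := by
  apply Set.Finite.subset (Set.Finite.image (cube 3 n)
    (Set.Finite.pi (fun i : Fin 3 => Set.finite_Iic (5^n))))
  rintro Q ⟨⟨l, hl, rfl⟩, -⟩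
  exact ⟨l, fun i _ => (hl i).2, rfl⟩

lemma fset_subset_F1 : Fset 3 ⊆ F1 3 := by
  intro x hx
  have := Set.mem_iInter.mp hx 1
  simpa [Fn] using this

/-- A level-(1+m) cube adjacent to the center cube from outside across a face
cannot meet `F1` in its interior: exclusion of single-extreme indices. -/
lemma not_single_extreme (m : ℕ) (l' : Fin 3 → ℕ) (x : Pt 3)
    (hx : x ∈ interior (cube 3 (1+m) l')) (hxF : x ∈ F1 3)
    (i : Fin 3) (hi : l' i = 2*5^m ∨ l' i = 3*5^m+1)
    (hoth : ∀ j, j ≠ i → 2*5^m+1 ≤ l' j ∧ l' j ≤ 3*5^m) : False := by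
  have h5 : (0:ℝ) < 5 ^ (1+m) := pow_pos5 _
  have h1m : (1:ℝ) ≤ 5^m := one_le_pow₀ (by norm_num)
  have e1 : (2:ℝ)/5 * 5^(1+m) = 2*5^m := by rw [pow_add]; ring
  have e2 : (3:ℝ)/5 * 5^(1+m) = 3*5^m := by rw [pow_add]; ring
  have e3 : (1:ℝ)/5 * 5^(1+m) = 5^m := by rw [pow_add]; ring
  have e4 : (4:ℝ)/5 * 5^(1+m) = 4*5^m := by rw [pow_add]; ring
  have hmul : ∀ j, ((l' j:ℝ) - 1) < x j * 5^(1+m) ∧ x j * 5^(1+m) < l' j := by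
    intro j
    have h := interior_cube_lt (1+m) l' hx j
    exact ⟨(div_lt_iff₀ h5).mp h.1, (lt_div_iff₀ h5).mp h.2⟩
  have hIoo : ∀ j, j ≠ i → x j ∈ Ioo (2/5 : ℝ) (3/5) := by
    intro j hj
    have hb := hoth j hj
    have c1 : (2*(5:ℝ)^m+1 : ℝ) ≤ (l' j : ℕ) := by exact_mod_cast hb.1
    have c2 : ((l' j : ℕ) : ℝ) ≤ 3*(5:ℝ)^m := by exact_mod_cast hb.2
    constructor
    · have : (2:ℝ)/5 * 5^(1+m) < x j * 5^(1+m) := by rw [e1]; linarith [(hmul j).1]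
      exact lt_of_mul_lt_mul_right (by linarith) (le_of_lt h5)
    · have : x j * 5^(1+m) < (3:ℝ)/5 * 5^(1+m) := by rw [e2]; linarith [(hmul j).2]
      exact lt_of_mul_lt_mul_right (by linarith) (le_of_lt h5)
  have hImid : x i ∈ Ioo (1/5 : ℝ) (2/5) ∪ Ioo (3/5 : ℝ) (4/5) := by
    rcases hi with hc | hc
    · left
      have c : ((l' i : ℕ) : ℝ) = 2*(5:ℝ)^m := by rw [hc]; push_cast; ring
      constructor
      · have : (1:ℝ)/5 * 5^(1+m) < x i * 5^(1+m) := by rw [e3]; linarith [(hmul i).1]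
        exact lt_of_mul_lt_mul_right (by linarith) (le_of_lt h5)
      · have : x i * 5^(1+m) < (2:ℝ)/5 * 5^(1+m) := by rw [e1]; linarith [(hmul i).2]
        exact lt_of_mul_lt_mul_right (by linarith) (le_of_lt h5)
    · right
      have c : ((l' i : ℕ) : ℝ) = 3*(5:ℝ)^m+1 := by rw [hc]; push_cast; ring
      constructor
      · have : (3:ℝ)/5 * 5^(1+m) < x i * 5^(1+m) := by rw [e2]; linarith [(hmul i).1]
        exact lt_of_mul_lt_mul_right (by linarith) (le_of_lt h5)
      · have : x i * 5^(1+m) < (4:ℝ)/5 * 5^(1+m) := by rw [e4]; linarith [(hmul i).2]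
        exact lt_of_mul_lt_mul_right (by linarith) (le_of_lt h5)
  exact hxF.2 (Set.mem_iUnion.mpr ⟨i,
    ⟨fun j hj => hIoo j (ne_of_lt hj), hImid, fun j hj => hIoo j (ne_of_gt hj)⟩⟩)


/-- whether an index value is extreme (on the boundary ring around the center cube) -/
def isExt (m : ℕ) (v : ℕ) : Prop := v = 2*5^m ∨ v = 3*5^m+1

lemma fin3cases : ∀ j : Fin 3, j = 0 ∨ j = 1 ∨ j = 2 := by decide

lemma third : ∀ i j : Fin 3, i ≠ j → ∃ k : Fin 3, k ≠ i ∧ k ≠ j ∧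
    ∀ j' : Fin 3, j' = i ∨ j' = j ∨ j' = k := by decide

/-- pick the (unique) non-extreme coordinate -/
noncomputable def pick (m : ℕ) (l' : Fin 3 → ℕ) : Fin 3 :=
  if ¬ isExt m (l' 0) then 0 else if ¬ isExt m (l' 1) then 1 else 2

lemma pick_spec (m : ℕ) (l' : Fin 3 → ℕ)
    (h : ∃ j, ¬ isExt m (l' j))
    (huniq : ∀ i j : Fin 3, ¬ isExt m (l' i) → ¬ isExt m (l' j) → i = j) :
    ¬ isExt m (l' (pick m l')) ∧ ∀ j, j ≠ pick m l' → isExt m (l' j) := by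
  obtain ⟨j₀, hj₀⟩ := h
  by_cases c0 : isExt m (l' 0)
  · by_cases c1 : isExt m (l' 1)
    · have hp : pick m l' = 2 := by simp [pick, c0, c1]
      have h2 : ¬ isExt m (l' 2) := by
        rcases fin3cases j₀ with h|h|h <;> subst h
        · exact absurd c0 hj₀
        · exact absurd c1 hj₀
        · exact hj₀
      rw [hp]
      refine ⟨h2, fun j hj => ?_⟩
      rcases fin3cases j with h|h|h <;> subst h
      · exact c0
      · exact c1
      · exact absurd rfl hj
    · have hp : pick m l' = 1 := by simp [pick, c0, c1]
      rw [hp]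
      refine ⟨c1, fun j hj => ?_⟩
      rcases fin3cases j with h|h|h <;> subst h
      · exact c0
      · exact absurd rfl hj
      · by_contra h2
        exact absurd (huniq 1 2 c1 h2) (by decide)
  · have hp : pick m l' = 0 := by simp [pick, c0]
    rw [hp]
    refine ⟨c0, fun j hj => ?_⟩
    rcases fin3cases j with h|h|h <;> subst h
    · exact absurd rfl hj
    · by_contra h1
      exact absurd (huniq 0 1 c0 h1) (by decide)
    · by_contra h2
      exact absurd (huniq 0 2 c0 h2) (by decide)

/-- bad pair predicate -/
def BadP (Q Q' : Set (Pt 3)) : Prop :=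
  (Q ∩ Q').Nonempty ∧ Q ⊆ Qtwo 3 ∧ ¬ Q' ⊆ Qtwo 3

/-- Upper bound on the conductance of the center cube `Q₂ = [2/5,3/5]³` in `F⁽³⁾`. -/
theorem statement5 (p : ℝ) (hp : 1 < p) (m : ℕ) (hm : 1 ≤ m) :
    conduct 3 1 m p {Qtwo 3} (GamC 3 1 (Qtwo 3)) ≤ 7 * (12 * 5 ^ m - 16 : ℝ) := by
  classical
  have hp0 : (0:ℝ) < p := lt_trans one_pos hp
  set f : Set (Pt 3) → ℝ := fun S => if S ⊆ Qtwo 3 then 1 else 0 with hf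
  haveI : Fintype ↥(QcolOf 3 (1+m) (Fset 3)) := (qcolOf_finite (1+m)).fintype
  -- Step A : conduct ≤ energy of f
  have hA : conduct 3 1 m p {Qtwo 3} (GamC 3 1 (Qtwo 3)) ≤ energy 3 (1+m) p f := by
    unfold conduct
    apply csInf_le
    · refine ⟨0, fun e he => ?_⟩
      obtain ⟨g, -, -, rfl⟩ := he
      unfold energy
      apply mul_nonneg (by norm_num)
      refine tsum_nonneg fun Q => tsum_nonneg fun Q' => ?_
      split_ifs with h
      · exact Real.rpow_nonneg (abs_nonneg _) _
      · exact le_refl 0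
    · refine ⟨f, ?_, ?_, rfl⟩
      · rintro Q ⟨hQ, Q', hQ', hsub⟩
        rw [Set.mem_singleton_iff] at hQ'
        subst hQ'
        simp only [hf]
        rw [if_pos hsub]
      · rintro Q ⟨hQ, Q'', hQ'', hsub⟩
        obtain ⟨hQ''col, hQ''not⟩ := hQ''
        have hne : Q.Nonempty := by
          obtain ⟨x, hx, -⟩ := hQ.2
          exact ⟨x, interior_subset hx⟩
        have hnot : ¬ Q ⊆ Qtwo 3 := by
          intro hsub2
          obtain ⟨x, hx⟩ := hne
          exact hQ''not ⟨hQ''col, ⟨x, hsub hx, hsub2 hx⟩⟩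
        simp only [hf]
        rw [if_neg hnot]
  set B : Finset (↥(QcolOf 3 (1+m) (Fset 3)) × ↥(QcolOf 3 (1+m) (Fset 3))) :=
    Finset.univ.filter (fun pp => BadP (pp.1 : Set (Pt 3)) (pp.2 : Set (Pt 3))) with hB
  -- Step B : energy of f ≤ card B
  have hB2 : energy 3 (1+m) p f ≤ (B.card : ℝ) := by
    have hterm : ∀ Q Q' : ↥(QcolOf 3 (1+m) (Fset 3)),
        (if ((Q : Set (Pt 3)) ∩ (Q' : Set (Pt 3))).Nonempty then |f ↑Q - f ↑Q'| ^ p else 0)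
          ≤ (if BadP (Q : Set (Pt 3)) (Q' : Set (Pt 3)) then (1:ℝ) else 0) + (if BadP (Q' : Set (Pt 3)) (Q : Set (Pt 3)) then (1:ℝ) else 0) := by
      intro Q Q'
      by_cases hadj : ((Q : Set (Pt 3)) ∩ (Q' : Set (Pt 3))).Nonempty
      · rw [if_pos hadj]
        by_cases h1 : (Q : Set (Pt 3)) ⊆ Qtwo 3 <;> by_cases h2 : (Q' : Set (Pt 3)) ⊆ Qtwo 3
        · have he : |f ↑Q - f ↑Q'| = 0 := by simp [hf, h1, h2]
          rw [he, Real.zero_rpow (ne_of_gt hp0)]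
          split_ifs <;> norm_num
        · have hb : BadP (Q : Set (Pt 3)) (Q' : Set (Pt 3)) := ⟨hadj, h1, h2⟩
          have he : |f ↑Q - f ↑Q'| = 1 := by simp [hf, h1, h2]
          rw [he, Real.one_rpow, if_pos hb]
          split_ifs <;> norm_num
        · have hb : BadP (Q' : Set (Pt 3)) (Q : Set (Pt 3)) := ⟨by rwa [Set.inter_comm] at hadj, h2, h1⟩
          have he : |f ↑Q - f ↑Q'| = 1 := by simp [hf, h1, h2]
          rw [he, Real.one_rpow]
          rw [if_pos hb]
          split_ifs <;> norm_num
        · have he : |f ↑Q - f ↑Q'| = 0 := by simp [hf, h1, h2]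
          rw [he, Real.zero_rpow (ne_of_gt hp0)]
          split_ifs <;> norm_num
      · rw [if_neg hadj]
        split_ifs <;> norm_num
    unfold energy
    simp only [tsum_fintype]
    have hsum : (∑ Q : ↥(QcolOf 3 (1+m) (Fset 3)), ∑ Q' : ↥(QcolOf 3 (1+m) (Fset 3)),
        (if ((Q : Set (Pt 3)) ∩ (Q' : Set (Pt 3))).Nonempty then |f ↑Q - f ↑Q'| ^ p else 0))
        ≤ 2 * (B.card : ℝ) := by
      have step1 : (∑ Q : ↥(QcolOf 3 (1+m) (Fset 3)), ∑ Q' : ↥(QcolOf 3 (1+m) (Fset 3)),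
          (if ((Q : Set (Pt 3)) ∩ (Q' : Set (Pt 3))).Nonempty then |f ↑Q - f ↑Q'| ^ p else 0))
          ≤ ∑ Q : ↥(QcolOf 3 (1+m) (Fset 3)), ∑ Q' : ↥(QcolOf 3 (1+m) (Fset 3)),
            ((if BadP (Q : Set (Pt 3)) (Q' : Set (Pt 3)) then (1:ℝ) else 0) + (if BadP (Q' : Set (Pt 3)) (Q : Set (Pt 3)) then (1:ℝ) else 0)) :=
        Finset.sum_le_sum fun Q _ => Finset.sum_le_sum fun Q' _ => hterm Q Q'
      have step2 : (∑ Q : ↥(QcolOf 3 (1+m) (Fset 3)), ∑ Q' : ↥(QcolOf 3 (1+m) (Fset 3)),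
          (if BadP (Q : Set (Pt 3)) (Q' : Set (Pt 3)) then (1:ℝ) else 0)) = (B.card : ℝ) := by
        rw [← Finset.sum_product', Finset.univ_product_univ, Finset.sum_boole]
        try rw [hB]
      have step3 : (∑ Q : ↥(QcolOf 3 (1+m) (Fset 3)), ∑ Q' : ↥(QcolOf 3 (1+m) (Fset 3)),
          (if BadP (Q' : Set (Pt 3)) (Q : Set (Pt 3)) then (1:ℝ) else 0)) = (B.card : ℝ) := by
        rw [Finset.sum_comm]
        exact step2
      calc _ ≤ _ := step1
        _ = 2 * (B.card : ℝ) := by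
          simp only [Finset.sum_add_distrib]
          rw [step2, step3]; ring
    linarith
  -- indices of the cubes
  have hexists : ∀ Q : ↥(QcolOf 3 (1+m) (Fset 3)), ∃ l : Fin 3 → ℕ,
      (∀ i, 1 ≤ l i ∧ l i ≤ 5^(1+m)) ∧ (Q : Set (Pt 3)) = cube 3 (1+m) l :=
    fun Q => Q.2.1
  choose idx hbnd hcube using hexists
  -- facts about bad pairs
  have hBfacts : ∀ pp ∈ B,
      (∀ j, 2*5^m+1 ≤ idx pp.1 j ∧ idx pp.1 j ≤ 3*5^m) ∧
      (∀ j, idx pp.1 j ≤ idx pp.2 j + 1 ∧ idx pp.2 j ≤ idx pp.1 j + 1) ∧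
      (∀ i j : Fin 3, ¬ isExt m (idx pp.2 i) → ¬ isExt m (idx pp.2 j) → i = j) := by
    intro pp hpp
    rw [hB, Finset.mem_filter] at hpp
    obtain ⟨-, hadj, hin, hout⟩ := hpp
    have hQc := hcube pp.1
    have hQ'c := hcube pp.2
    have hinb : ∀ j, 2*5^m+1 ≤ idx pp.1 j ∧ idx pp.1 j ≤ 3*5^m :=
      (cube_subset_qtwo m _).mp (hQc ▸ hin)
    have hadjb : ∀ j, idx pp.1 j ≤ idx pp.2 j + 1 ∧ idx pp.2 j ≤ idx pp.1 j + 1 := by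
      intro j
      refine adjacent_idx (1+m) _ _ ?_ j
      rw [← hQc, ← hQ'c]
      exact hadj
    have hbounds : ∀ j, 2*5^m ≤ idx pp.2 j ∧ idx pp.2 j ≤ 3*5^m+1 := by
      intro j
      have h1 := hinb j; have h2 := hadjb j
      omega
    have hnotin : ¬ ∀ j, 2*5^m+1 ≤ idx pp.2 j ∧ idx pp.2 j ≤ 3*5^m :=
      fun hh => hout (hQ'c ▸ (cube_subset_qtwo m _).mpr hh)
    refine ⟨hinb, hadjb, ?_⟩
    intro i j hi hj
    by_contra hij
    obtain ⟨k, hki, hkj, hall⟩ := third i j hij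
    obtain ⟨x, hxi, hxF⟩ := pp.2.2.2
    rw [hQ'c] at hxi
    by_cases hk : isExt m (idx pp.2 k)
    · refine not_single_extreme m (idx pp.2) x hxi (fset_subset_F1 hxF) k hk ?_
      intro j' hj'k
      rcases hall j' with h|h|h
      · subst h
        have hb := hbounds j'
        simp only [isExt] at hi; push_neg at hi
        omega
      · subst h
        have hb := hbounds j'
        simp only [isExt] at hj; push_neg at hj
        omega
      · exact absurd h hj'k
    · apply hnotin
      intro j'
      have hb := hbounds j'
      rcases hall j' with h|h|h <;> subst h
      · simp only [isExt] at hi; push_neg at hi; omega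
      · simp only [isExt] at hj; push_neg at hj; omega
      · simp only [isExt] at hk; push_neg at hk; omega
  -- splitting B
  have hsplit : (B.filter (fun pp => ∀ j, isExt m (idx pp.2 j))).card
      + (B.filter (fun pp => ¬ ∀ j, isExt m (idx pp.2 j))).card = B.card :=
    Finset.card_filter_add_card_filter_not _
  -- the all-extreme part has at most 8 elements
  have hBb : (B.filter (fun pp => ∀ j, isExt m (idx pp.2 j))).card ≤ 8 := by
    refine le_trans (Finset.card_le_card_of_injOn
      (t := (Finset.univ : Finset (Fin 3 → Bool)))
      (fun pp => (fun j => decide (idx pp.2 j = 3*5^m+1) : Fin 3 → Bool))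
      (fun a _ => Finset.mem_univ _) ?_)
      (by rw [Finset.card_univ, Fintype.card_fun]; norm_num)
    · intro pp hpp qq hqq heq
      rw [Finset.mem_coe, Finset.mem_filter] at hpp hqq
      obtain ⟨hpB, hpall⟩ := hpp
      obtain ⟨hqB, hqall⟩ := hqq
      obtain ⟨hin1, hadj1, -⟩ := hBfacts _ hpB
      obtain ⟨hin2, hadj2, -⟩ := hBfacts _ hqB
      have hl' : idx pp.2 = idx qq.2 := by
        funext j
        have h1 := hpall j; have h2 := hqall j
        simp only [isExt] at h1 h2
        have hd := congrFun heq j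
        rw [decide_eq_decide] at hd
        have d1 := Decidable.not_or_of_imp hd.mp
        have d2 := Decidable.not_or_of_imp hd.mpr
        omega
      have hQ'eq : pp.2 = qq.2 := Subtype.ext (by rw [hcube pp.2, hcube qq.2, hl'])
      have hleq : idx pp.1 = idx qq.1 := by
        funext j
        have h1 := hpall j; have h2 := hqall j
        simp only [isExt] at h1 h2
        have e1 := hin1 j; have e2 := hin2 j
        have a1 := hadj1 j; have a2 := hadj2 j
        have hll : idx pp.2 j = idx qq.2 j := by rw [hl']
        omega
      have hQeq : pp.1 = qq.1 := Subtype.ext (by rw [hcube pp.1, hcube qq.1, hleq])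
      exact Prod.ext_iff.mpr ⟨hQeq, hQ'eq⟩
  -- the not-all-extreme part has at most 36 * 5^m elements
  have hBa : (B.filter (fun pp => ¬ ∀ j, isExt m (idx pp.2 j))).card ≤ 36 * 5^m := by
    have hTcard : (Finset.univ ×ˢ Finset.univ ×ˢ Finset.range 3 ×ˢ
        Finset.Icc (2*5^m+1) (3*5^m) :
        Finset (Fin 3 × (Fin 2 → Bool) × ℕ × ℕ)).card = 36 * 5^m := by
      rw [Finset.card_product, Finset.card_product, Finset.card_product,
        Finset.card_univ, Finset.card_univ, Finset.card_range, Nat.card_Icc,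
        Fintype.card_fun]
      norm_num
      set K := 5^m with hK
      omega
    rw [← hTcard]
    refine Finset.card_le_card_of_injOn
      (fun pp => ((pick m (idx pp.2),
        fun t : Fin 2 => decide (idx pp.2 ((pick m (idx pp.2)).succAbove t) = 3*5^m+1),
        idx pp.1 (pick m (idx pp.2)) + 1 - idx pp.2 (pick m (idx pp.2)),
        idx pp.2 (pick m (idx pp.2))) : Fin 3 × (Fin 2 → Bool) × ℕ × ℕ)) ?_ ?_
    · intro pp hpp
      rw [Finset.mem_coe, Finset.mem_filter] at hpp
      obtain ⟨hpB, hpnall⟩ := hpp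
      obtain ⟨hin1, hadj1, huniq1⟩ := hBfacts _ hpB
      push_neg at hpnall
      obtain ⟨hpick1, -⟩ := pick_spec m (idx pp.2) hpnall huniq1
      simp only [Finset.mem_coe, Finset.mem_product, Finset.mem_univ, Finset.mem_range, Finset.mem_Icc,
        true_and]
      simp only [isExt] at hpick1; push_neg at hpick1
      have e1 := hin1 (pick m (idx pp.2))
      have a1 := hadj1 (pick m (idx pp.2))
      omega
    · intro pp hpp qq hqq heq
      rw [Finset.mem_coe, Finset.mem_filter] at hpp hqq
      obtain ⟨hpB, hpnall⟩ := hpp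
      obtain ⟨hqB, hqnall⟩ := hqq
      obtain ⟨hin1, hadj1, huniq1⟩ := hBfacts _ hpB
      obtain ⟨hin2, hadj2, huniq2⟩ := hBfacts _ hqB
      push_neg at hpnall hqnall
      obtain ⟨hp1, hp2⟩ := pick_spec m (idx pp.2) hpnall huniq1
      obtain ⟨hq1, hq2⟩ := pick_spec m (idx qq.2) hqnall huniq2
      simp only [Prod.mk.injEq] at heq
      obtain ⟨hJ, hbits, ho, hv⟩ := heq
      have hl' : idx pp.2 = idx qq.2 := by
        funext j
        by_cases hjJ : j = pick m (idx pp.2)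
        · rw [hjJ, hv, hJ]
        · obtain ⟨t, ht⟩ := Fin.exists_succAbove_eq hjJ
          have hb := congrFun hbits t
          rw [ht] at hb
          rw [← hJ] at hb
          rw [ht] at hb
          rw [decide_eq_decide] at hb
          have e1 := hp2 j hjJ
          have e2 := hq2 j (by rw [← hJ]; exact hjJ)
          simp only [isExt] at e1 e2
          have d1 := Decidable.not_or_of_imp hb.mp
          have d2 := Decidable.not_or_of_imp hb.mpr
          omega
      have hQ'eq : pp.2 = qq.2 := Subtype.ext (by rw [hcube pp.2, hcube qq.2, hl'])
      have hJeq : pick m (idx pp.2) = pick m (idx qq.2) := by rw [hl']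
      have hleq : idx pp.1 = idx qq.1 := by
        funext j
        by_cases hjJ : j = pick m (idx pp.2)
        · subst hjJ
          have a1 := hadj1 (pick m (idx pp.2))
          have a2 := hadj2 (pick m (idx qq.2))
          rw [← hJeq] at a2
          rw [← hJ] at ho
          have hll : idx pp.2 (pick m (idx pp.2)) = idx qq.2 (pick m (idx pp.2)) := by
            rw [hl']
          omega
        · have e1 := hp2 j hjJ
          have e2 := hq2 j (by rw [← hJeq]; exact hjJ)
          simp only [isExt] at e1 e2
          have i1 := hin1 j; have i2 := hin2 j
          have a1 := hadj1 j; have a2 := hadj2 j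
          have hll : idx pp.2 j = idx qq.2 j := by rw [hl']
          omega
      have hQeq : pp.1 = qq.1 := Subtype.ext (by rw [hcube pp.1, hcube qq.1, hleq])
      exact Prod.ext_iff.mpr ⟨hQeq, hQ'eq⟩
  -- final numeric bound
  have hcard : B.card ≤ 36 * 5^m + 8 := by omega
  have h5 : (5:ℕ) ≤ 5^m := by
    calc (5:ℕ) = 5^1 := by norm_num
    _ ≤ 5^m := Nat.pow_le_pow_right (by norm_num) hm
  have h5r : (5:ℝ) ≤ (5:ℝ)^m := by exact_mod_cast h5
  have hcr : (B.card : ℝ) ≤ 36 * (5:ℝ)^m + 8 := by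
    have := (Nat.cast_le (α := ℝ)).mpr hcard
    push_cast at this
    linarith
  have hfin : (B.card : ℝ) ≤ 7 * (12 * 5 ^ m - 16 : ℝ) := by
    have : 36 * (5:ℝ)^m + 8 ≤ 7 * (12 * (5:ℝ)^m - 16) := by linarith
    linarith
  exact le_trans hA (le_trans hB2 hfin)
end

section
/- Let d = 2, Q_1 = [0,1/5]^2 and Q_2 = [2/5,3/5]^2, both elements of Q_1^(2)(F^(2)). For every real p with 1 < p < log 10 / log 5, the ratio E_{p,m}(Q_1, Γ(Q_1)^c) / E_{p,m}(Q_2, Γ(Q_2)^c) tends to +∞ as m → ∞. -/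
open Set MeasureTheory Filter
open scoped Classical

noncomputable section
namespace S6
open Set

/-! ## Cube geometry -/

lemma fpow_pos (n : ℕ) : (0:ℝ) < 5 ^ n := by positivity

lemma mem_cube {d n : ℕ} {l : Fin d → ℕ} {x : Pt d} :
    x ∈ cube d n l ↔ ∀ i, ((l i : ℝ) - 1) / 5 ^ n ≤ x i ∧ x i ≤ (l i : ℝ) / 5 ^ n := Iff.rfl

lemma cube_nonempty (d n : ℕ) (l : Fin d → ℕ) : (cube d n l).Nonempty := by
  refine ⟨WithLp.toLp 2 (fun i => (l i : ℝ) / 5 ^ n : Fin d → ℝ), fun i => ⟨?_, le_refl _⟩⟩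
  have := fpow_pos n
  simp only [WithLp.ofLp_toLp]
  rw [div_le_div_iff₀ (by positivity) (by positivity)]
  nlinarith

/-- the open box -/
def obox (d n : ℕ) (l : Fin d → ℕ) : Set (Pt d) :=
  {x | ∀ i, ((l i : ℝ) - 1) / 5 ^ n < x i ∧ x i < (l i : ℝ) / 5 ^ n}

lemma obox_isOpen (d n : ℕ) (l : Fin d → ℕ) : IsOpen (obox d n l) := by
  have h : obox d n l =
      ⋂ i, (fun x : Pt d => x i) ⁻¹' (Ioo (((l i : ℝ) - 1) / 5 ^ n) ((l i : ℝ) / 5 ^ n)) := by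
    ext x; simp [obox, mem_Ioo]
  rw [h]
  exact isOpen_iInter_of_finite fun i => (isOpen_Ioo).preimage (by fun_prop)

lemma obox_subset_cube (d n : ℕ) (l : Fin d → ℕ) : obox d n l ⊆ cube d n l :=
  fun x hx i => ⟨(hx i).1.le, (hx i).2.le⟩

lemma obox_subset_interior (d n : ℕ) (l : Fin d → ℕ) :
    obox d n l ⊆ interior (cube d n l) :=
  interior_maximal (obox_subset_cube d n l) (obox_isOpen d n l)

lemma interior_subset_obox (d n : ℕ) (l : Fin d → ℕ) :
    interior (cube d n l) ⊆ obox d n l := by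
  intro x hx
  rw [mem_interior_iff_mem_nhds, Metric.mem_nhds_iff] at hx
  obtain ⟨ε, hε, hball⟩ := hx
  intro i
  have key : ∀ t : ℝ, |t| < ε →
      ((l i : ℝ) - 1) / 5 ^ n ≤ x i + t ∧ x i + t ≤ (l i : ℝ) / 5 ^ n := by
    intro t ht
    have hy : (x + t • EuclideanSpace.single i (1:ℝ)) ∈ cube d n l := by
      apply hball
      rw [Metric.mem_ball, dist_eq_norm]
      have : x + t • EuclideanSpace.single i (1:ℝ) - x = t • EuclideanSpace.single i (1:ℝ) := by
        abel
      rw [this, norm_smul, EuclideanSpace.norm_single]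
      simpa using ht
    have := hy i
    simpa [EuclideanSpace.single_apply] using this
  constructor
  · have := (key (-(ε/2)) (by rw [abs_neg, abs_of_pos (by linarith)]; linarith)).1
    linarith
  · have := (key (ε/2) (by rw [abs_of_pos (by linarith)]; linarith)).2
    linarith

/-- adjacency from index closeness -/
lemma cube_inter_of_close {d n : ℕ} {a b : Fin d → ℕ}
    (h : ∀ i, (a i : ℝ) ≤ b i + 1 ∧ (b i : ℝ) ≤ a i + 1) :
    (cube d n a ∩ cube d n b).Nonempty := by
  refine ⟨WithLp.toLp 2 (fun i => (max (a i : ℝ) (b i) - 1) / 5 ^ n : Fin d → ℝ), fun i => ⟨?_, ?_⟩,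
    fun i => ⟨?_, ?_⟩⟩ <;>
  · have h1 := le_max_left (a i : ℝ) (b i)
    have h2 := le_max_right (a i : ℝ) (b i)
    have h3 : max (a i : ℝ) (b i) ≤ (b i : ℝ) + 1 := max_le (h i).1 (by linarith)
    have h4 : max (a i : ℝ) (b i) ≤ (a i : ℝ) + 1 := max_le (by linarith) (h i).2
    exact div_le_div_of_nonneg_right (by linarith) (fpow_pos n).le

/-- index closeness from adjacency -/
lemma close_of_cube_inter {d n : ℕ} {a b : Fin d → ℕ}
    (h : (cube d n a ∩ cube d n b).Nonempty) (i : Fin d) :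
    (a i : ℝ) ≤ b i + 1 ∧ (b i : ℝ) ≤ a i + 1 := by
  obtain ⟨x, hxa, hxb⟩ := h
  have ha := hxa i; have hb := hxb i
  have h5 := fpow_pos n
  constructor
  · have : ((a i : ℝ) - 1) / 5 ^ n ≤ (b i : ℝ) / 5 ^ n := le_trans ha.1 hb.2
    rw [div_le_div_iff₀ h5 h5] at this
    nlinarith
  · have : ((b i : ℝ) - 1) / 5 ^ n ≤ (a i : ℝ) / 5 ^ n := le_trans hb.1 ha.2
    rw [div_le_div_iff₀ h5 h5] at this
    nlinarith

lemma cube_inj {d n : ℕ} {a b : Fin d → ℕ} (h : cube d n a = cube d n b) : a = b := by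
  funext i
  have hmax : ∀ c c' : Fin d → ℕ, cube d n c ⊆ cube d n c' → (c i : ℝ) ≤ c' i := by
    intro c c' hsub
    have hx : WithLp.toLp 2 (fun j => (c j : ℝ) / 5 ^ n : Fin d → ℝ) ∈ cube d n c := by
      intro j
      refine ⟨?_, le_refl _⟩
      exact div_le_div_of_nonneg_right (by linarith) (fpow_pos n).le
    have h2 := (hsub hx i).2
    simp only [WithLp.ofLp_toLp] at h2
    have h5 := fpow_pos n
    rw [div_le_div_iff₀ h5 h5] at h2
    nlinarith
  have h1 := hmax a b h.le
  have h2 := hmax b a h.ge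
  exact_mod_cast le_antisymm h1 h2

lemma cube_subset_cube {d m : ℕ} {l a : Fin d → ℕ}
    (h : ∀ i, 5 ^ m * ((a i : ℝ) - 1) + 1 ≤ l i ∧ (l i : ℝ) ≤ 5 ^ m * a i) :
    cube d (m + 1) l ⊆ cube d 1 a := by
  intro x hx i
  have hx1 := (hx i).1; have hx2 := (hx i).2
  have hpow : (5:ℝ) ^ (m + 1) = 5 * 5 ^ m := by ring
  have h5 := fpow_pos m
  constructor
  · refine le_trans ?_ hx1
    rw [div_le_div_iff₀ (by norm_num) (by positivity), hpow]
    nlinarith [(h i).1]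
  · refine le_trans hx2 ?_
    rw [div_le_div_iff₀ (by positivity) (by norm_num), hpow]
    nlinarith [(h i).2]

lemma index_of_subset {d m : ℕ} {l a : Fin d → ℕ}
    (h : cube d (m + 1) l ⊆ cube d 1 a) (i : Fin d) :
    5 ^ m * ((a i : ℝ) - 1) + 1 ≤ l i ∧ (l i : ℝ) ≤ 5 ^ m * a i := by
  have h5 := fpow_pos m
  have hpow : (5:ℝ) ^ (m + 1) = 5 * 5 ^ m := by ring
  -- max corner
  have hx : WithLp.toLp 2 (fun j => (l j : ℝ) / 5 ^ (m+1) : Fin d → ℝ) ∈ cube d (m+1) l := by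
    intro j; refine ⟨?_, le_refl _⟩
    exact div_le_div_of_nonneg_right (by linarith) (fpow_pos (m+1)).le
  -- min corner
  have hy : WithLp.toLp 2 (fun j => ((l j : ℝ) - 1) / 5 ^ (m+1) : Fin d → ℝ) ∈ cube d (m+1) l := by
    intro j; refine ⟨le_refl _, ?_⟩
    exact div_le_div_of_nonneg_right (by linarith) (fpow_pos (m+1)).le
  have h1 := (h hy i).1
  have h2 := (h hx i).2
  simp only [WithLp.ofLp_toLp] at h1 h2
  constructor
  · rw [div_le_div_iff₀ (by norm_num) (by positivity), hpow] at h1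
    nlinarith
  · rw [div_le_div_iff₀ (by positivity) (by norm_num), hpow] at h2
    nlinarith


/-! ## Fractal membership -/

lemma Fn_zero (d : ℕ) : Fn d 0 = F0 d := rfl
lemma Fn_one (d : ℕ) : Fn d 1 = F1 d := rfl
lemma Fn_ss (d n : ℕ) : Fn d (n + 2) =
    ⋃ l ∈ {l : Fin d → ℕ | cube d 1 l ∈ QcolOf d 1 (F1 d)}, psi d 1 l '' Fn d (n + 1) := rfl

lemma Fset_subset_Fn (d n : ℕ) : Fset d ⊆ Fn d n := iInter_subset _ n

/-- the removed-pattern characterization of F1 in dimension 2 -/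
lemma mem_F1_iff {x : Pt 2} : x ∈ F1 2 ↔ x ∈ F0 2 ∧
    ¬((x 0 ∈ Ioo (1/5 : ℝ) (2/5) ∨ x 0 ∈ Ioo (3/5 : ℝ) (4/5)) ∧ x 1 ∈ Ioo (2/5 : ℝ) (3/5)) ∧
    ¬(x 0 ∈ Ioo (2/5 : ℝ) (3/5) ∧ (x 1 ∈ Ioo (1/5 : ℝ) (2/5) ∨ x 1 ∈ Ioo (3/5 : ℝ) (4/5))) := by
  have h0 : ∀ j : Fin 2, ¬(j < 0) := by decide
  have h1 : ∀ j : Fin 2, ¬((1 : Fin 2) < j) := by decide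
  have h01 : ∀ j : Fin 2, (0 : Fin 2) < j ↔ j = 1 := by decide
  have h10 : ∀ j : Fin 2, j < (1 : Fin 2) ↔ j = 0 := by decide
  constructor
  · rintro ⟨hx0, hx⟩
    rw [mem_iUnion] at hx
    push_neg at hx
    refine ⟨hx0, ?_, ?_⟩
    · intro ⟨hA, hB⟩
      exact hx 0 ⟨fun j hj => absurd hj (h0 j), by simpa [mem_Ioo] using hA,
        fun j hj => by rw [h01 j] at hj; subst hj; exact hB⟩
    · intro ⟨hA, hB⟩
      exact hx 1 ⟨fun j hj => by rw [h10 j] at hj; subst hj; exact hA,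
        by simpa [mem_Ioo] using hB, fun j hj => absurd hj (h1 j)⟩
  · rintro ⟨hx0, hA, hB⟩
    refine ⟨hx0, ?_⟩
    rw [mem_iUnion]
    rintro ⟨i, hi⟩
    fin_cases i
    · exact hA ⟨by simpa [mem_Ioo] using hi.2.1, hi.2.2 1 (by decide)⟩
    · exact hB ⟨hi.1 0 (by decide), by simpa [mem_Ioo] using hi.2.1⟩

/-- digit forcing: if `y` lies in the band `[(a-1)/5, a/5]` and strictly inside
`(k/5, (k+1)/5)` then `a = k+1`. -/
lemma digit_force {a k : ℕ} {y : ℝ} (h1 : ((a:ℝ) - 1) / 5 ≤ y) (h2 : y ≤ (a:ℝ) / 5)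
    (h3 : (k:ℝ) / 5 < y) (h4 : y < ((k:ℝ) + 1) / 5) : a = k + 1 := by
  have hlt : (k : ℝ) < a := by nlinarith
  have hle : (a : ℝ) < (k : ℝ) + 2 := by nlinarith
  have h5 : k < a := by exact_mod_cast hlt
  have h6 : a < k + 2 := by exact_mod_cast hle
  omega

def keptPair (a : Fin 2 → ℕ) : Prop :=
  (∀ i, 1 ≤ a i ∧ a i ≤ 5) ∧ ¬(a 0 = 2 ∧ a 1 = 3) ∧ ¬(a 0 = 4 ∧ a 1 = 3) ∧
    ¬(a 0 = 3 ∧ a 1 = 2) ∧ ¬(a 0 = 3 ∧ a 1 = 4)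

/-- any point of the closed cell of a kept pair is in `F1` (provided it is in `F0`). -/
lemma kept_cell_subset_F1 {a : Fin 2 → ℕ} (ha : keptPair a) {x : Pt 2}
    (hx : ∀ i, ((a i : ℝ) - 1) / 5 ≤ x i ∧ x i ≤ (a i : ℝ) / 5) : x ∈ F1 2 := by
  have hx0 : x ∈ F0 2 := by
    intro i
    have h1 := (hx i).1; have h2 := (hx i).2
    have hb := (ha.1 i).1; have hb2 := (ha.1 i).2
    have hb' : (1:ℝ) ≤ a i := by exact_mod_cast hb
    have hb2' : (a i : ℝ) ≤ 5 := by exact_mod_cast hb2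
    constructor <;> [linarith; linarith]
  rw [mem_F1_iff]
  have F : ∀ (i : Fin 2) (k : ℕ), x i ∈ Ioo ((k:ℝ)/5) (((k:ℝ)+1)/5) → a i = k + 1 := by
    intro i k hk
    exact digit_force (hx i).1 (hx i).2 hk.1 hk.2
  refine ⟨hx0, ?_, ?_⟩
  · rintro ⟨hA, hB⟩
    have ha1 : a 1 = 3 := by
      have := F 1 2 (by push_cast; norm_num; exact hB)
      omega
    rcases hA with h | h
    · have ha0 : a 0 = 2 := by have := F 0 1 (by push_cast; norm_num; exact h); omega
      exact ha.2.1 ⟨ha0, ha1⟩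
    · have ha0 : a 0 = 4 := by have := F 0 3 (by push_cast; norm_num; exact h); omega
      exact ha.2.2.1 ⟨ha0, ha1⟩
  · rintro ⟨hA, hB⟩
    have ha0 : a 0 = 3 := by have := F 0 2 (by push_cast; norm_num; exact hA); omega
    rcases hB with h | h
    · have ha1 : a 1 = 2 := by have := F 1 1 (by push_cast; norm_num; exact h); omega
      exact ha.2.2.2.1 ⟨ha0, ha1⟩
    · have ha1 : a 1 = 4 := by have := F 1 3 (by push_cast; norm_num; exact h); omega
      exact ha.2.2.2.2 ⟨ha0, ha1⟩

lemma psi_cell {a : Fin 2 → ℕ} (ha : keptPair a) {x : Pt 2} (hx : x ∈ F0 2) (i : Fin 2) :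
    ((a i : ℝ) - 1) / 5 ≤ psi 2 1 a x i ∧ psi 2 1 a x i ≤ (a i : ℝ) / 5 := by
  have h1 := (hx i).1; have h2 := (hx i).2
  unfold psi
  constructor
  · simp only [pow_one, WithLp.ofLp_toLp]
    nlinarith
  · simp only [pow_one, WithLp.ofLp_toLp]
    rw [← add_div, div_le_div_iff₀ (by norm_num) (by norm_num)]
    nlinarith

/-- kept cells are level-1 cubes intersecting F1 -/
lemma kept_mem_S {a : Fin 2 → ℕ} (ha : keptPair a) : cube 2 1 a ∈ QcolOf 2 1 (F1 2) := by
  refine ⟨⟨a, fun i => by simpa using ha.1 i, rfl⟩, ?_⟩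
  refine ⟨psi 2 1 a (WithLp.toLp 2 (fun _ => (1:ℝ)/2)), obox_subset_interior _ _ _ (fun i => ?_), ?_⟩
  · unfold psi
    simp only [pow_one, WithLp.ofLp_toLp]
    constructor <;> nlinarith
  · exact kept_cell_subset_F1 ha (psi_cell ha (fun i => by norm_num))

/-- the center of the unit square belongs to the fractal -/
lemma center_mem_Fn : ∀ n, (WithLp.toLp 2 (fun _ => (1:ℝ)/2) : Pt 2) ∈ Fn 2 n := by
  have hkept : keptPair (fun _ => 3) := by
    refine ⟨fun i => by norm_num, ?_, ?_, ?_, ?_⟩ <;> simp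
  have hfix : psi 2 1 (fun _ => 3) (WithLp.toLp 2 (fun _ => (1:ℝ)/2) : Pt 2) = (WithLp.toLp 2 (fun _ => (1:ℝ)/2) : Pt 2) := by
    ext i
    simp only [psi]
    norm_num
  have h0 : (WithLp.toLp 2 (fun _ => (1:ℝ)/2) : Pt 2) ∈ Fn 2 0 := fun i => by norm_num
  have h1 : (WithLp.toLp 2 (fun _ => (1:ℝ)/2) : Pt 2) ∈ Fn 2 1 := by
    rw [Fn_one, mem_F1_iff]
    refine ⟨fun i => by norm_num, ?_, ?_⟩ <;> simp [mem_Ioo] <;> norm_num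
  have key : ∀ n, (WithLp.toLp 2 (fun _ => (1:ℝ)/2) : Pt 2) ∈ Fn 2 (n+1) := by
    intro n
    induction n with
    | zero => exact h1
    | succ k ih =>
      rw [Fn_ss, mem_iUnion₂]
      exact ⟨fun _ => 3, kept_mem_S hkept, _, ih, hfix⟩
  intro n
  cases n with
  | zero => exact h0
  | succ k => exact key k

lemma center_mem_Fset : (WithLp.toLp 2 (fun _ => (1:ℝ)/2) : Pt 2) ∈ Fset 2 :=
  mem_iInter.2 center_mem_Fn

/-- applying a kept similarity preserves the fractal -/
lemma psi_mem_Fset {a : Fin 2 → ℕ} (ha : keptPair a) {x : Pt 2} (hx : x ∈ Fset 2) :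
    psi 2 1 a x ∈ Fset 2 := by
  rw [Fset, mem_iInter] at hx ⊢
  have hx0 : x ∈ F0 2 := hx 0
  intro n
  cases n with
  | zero =>
    intro i
    have := psi_cell ha hx0 i
    have hb : (1:ℝ) ≤ a i := by exact_mod_cast (ha.1 i).1
    have hb2 : (a i : ℝ) ≤ 5 := by exact_mod_cast (ha.1 i).2
    constructor <;> [linarith [this.1]; linarith [this.2]]
  | succ k =>
    cases k with
    | zero => exact kept_cell_subset_F1 ha (psi_cell ha hx0)
    | succ j =>
      rw [Fn_ss, mem_iUnion₂]
      exact ⟨a, kept_mem_S ha, x, hx (j+1), rfl⟩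

/-! ## Good indices -/

inductive Good : ℕ → (Fin 2 → ℕ) → Prop
  | zero : Good 0 (fun _ => 1)
  | succ {k : ℕ} {a l : Fin 2 → ℕ} (ha : keptPair a) (hl : Good k l) :
      Good (k + 1) (fun i => 5 ^ k * (a i - 1) + l i)

lemma good_bounds {k : ℕ} {l : Fin 2 → ℕ} (h : Good k l) : ∀ i, 1 ≤ l i ∧ l i ≤ 5 ^ k := by
  induction h with
  | zero => intro i; simp
  | @succ k a l ha hl ih =>
    intro i
    have h1 := (ih i).1; have h2 := (ih i).2
    have hb := (ha.1 i).1; have hb2 := (ha.1 i).2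
    constructor
    · exact Nat.le_trans h1 (Nat.le_add_left _ _)
    · have h4 : a i - 1 ≤ 4 := by omega
      calc 5 ^ k * (a i - 1) + l i ≤ 5 ^ k * 4 + 5 ^ k :=
            Nat.add_le_add (Nat.mul_le_mul_left _ h4) h2
        _ = 5 ^ (k + 1) := by ring

lemma good_point {k : ℕ} {l : Fin 2 → ℕ} (h : Good k l) :
    ∃ x ∈ Fset 2, ∀ i, ((l i : ℝ) - 1) / 5 ^ k < x i ∧ x i < (l i : ℝ) / 5 ^ k := by
  induction h with
  | zero =>
    exact ⟨_, center_mem_Fset, fun i => by norm_num⟩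
  | @succ k a l ha hl ih =>
    obtain ⟨x, hxF, hx⟩ := ih
    refine ⟨psi 2 1 a x, psi_mem_Fset ha hxF, fun i => ?_⟩
    have h1 := (hx i).1; have h2 := (hx i).2
    have hb : 1 ≤ a i := (ha.1 i).1
    have hlb : 1 ≤ l i := (good_bounds hl i).1
    have hcast : ((5 ^ k * (a i - 1) + l i : ℕ) : ℝ) = 5 ^ k * ((a i : ℝ) - 1) + l i := by
      push_cast [Nat.cast_sub hb]
      ring
    have h5k := fpow_pos k
    have hpow : (5:ℝ) ^ (k + 1) = 5 ^ k * 5 := by ring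
    unfold psi
    simp only [pow_one, hcast, hpow, WithLp.ofLp_toLp]
    constructor
    · rw [div_lt_iff₀ (by positivity)]
      rw [div_lt_iff₀ h5k] at h1
      nlinarith
    · rw [lt_div_iff₀ (by positivity)]
      rw [lt_div_iff₀ h5k] at h2
      nlinarith

lemma good_mem {k : ℕ} {l : Fin 2 → ℕ} (h : Good k l) :
    cube 2 k l ∈ QcolOf 2 k (Fset 2) := by
  obtain ⟨x, hxF, hx⟩ := good_point h
  exact ⟨⟨l, good_bounds h, rfl⟩, x, obox_subset_interior _ _ _ hx, hxF⟩

/-! ## Rows with digits in {1,5} -/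

def Rows : ℕ → Finset ℕ
  | 0 => {1}
  | k + 1 => Rows k ∪ (Rows k).image (· + 4 * 5 ^ k)

lemma Rows_bounds : ∀ k r, r ∈ Rows k → 1 ≤ r ∧ r ≤ 5 ^ k := by
  intro k
  induction k with
  | zero => intro r hr; simp [Rows] at hr; omega
  | succ n ih =>
    intro r hr
    simp only [Rows, Finset.mem_union, Finset.mem_image] at hr
    rcases hr with h | ⟨r', hr', rfl⟩
    · have := ih r h
      have : 5 ^ n ≤ 5 ^ (n+1) := Nat.pow_le_pow_right (by norm_num) (by omega)
      omega
    · have := ih r' hr'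
      have h5 : 5 ^ (n+1) = 5 ^ n + 4 * 5 ^ n := by ring
      omega

lemma one_mem_Rows (k : ℕ) : 1 ∈ Rows k := by
  induction k with
  | zero => simp [Rows]
  | succ n ih => simp only [Rows, Finset.mem_union]; exact Or.inl ih

lemma Rows_card (k : ℕ) : (Rows k).card = 2 ^ k := by
  induction k with
  | zero => simp [Rows]
  | succ n ih =>
    have hinj : Function.Injective (· + 4 * 5 ^ n) := add_left_injective _
    have hdisj : Disjoint (Rows n) ((Rows n).image (· + 4 * 5 ^ n)) := by
      rw [Finset.disjoint_left]
      rintro a ha hb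
      simp only [Finset.mem_image] at hb
      obtain ⟨b, hb', rfl⟩ := hb
      have h1 := Rows_bounds n _ ha
      have h2 := Rows_bounds n b hb'
      have h0 : 0 < 5 ^ n := Nat.pow_pos (by norm_num)
      have : 1 ≤ 4 * 5 ^ n := by omega
      omega
    rw [Rows, Finset.card_union_of_disjoint hdisj, Finset.card_image_of_injective _ hinj, ih]
    ring

lemma Rows_subset_succ (k : ℕ) : Rows k ⊆ Rows (k + 1) := by
  intro r hr; simp only [Rows, Finset.mem_union]; exact Or.inl hr

/-- two-element index notation -/
def ix (c r : ℕ) : Fin 2 → ℕ := fun i => if i = 0 then c else r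

@[simp] lemma ix0 (c r : ℕ) : ix c r 0 = c := rfl
@[simp] lemma ix1 (c r : ℕ) : ix c r 1 = r := rfl

lemma ix_inj {c r c' r' : ℕ} (h : ix c r = ix c' r') : c = c' ∧ r = r' :=
  ⟨congrFun h 0, congrFun h 1⟩

lemma keptPair_of_row {a e : ℕ} (ha : 1 ≤ a) (ha5 : a ≤ 5) (he : e = 1 ∨ e = 5) :
    keptPair (ix a e) := by
  refine ⟨fun i => ?_, ?_, ?_, ?_, ?_⟩
  · fin_cases i <;> simp <;> omega
  all_goals simp only [ix0, ix1] <;> omega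

lemma good_succ' {k : ℕ} {a₀ a₁ c r : ℕ} (ha : keptPair (ix a₀ a₁)) (h : Good k (ix c r)) :
    Good (k + 1) (ix (5 ^ k * (a₀ - 1) + c) (5 ^ k * (a₁ - 1) + r)) := by
  have := Good.succ ha h
  have he : (fun i => 5 ^ k * (ix a₀ a₁ i - 1) + ix c r i) =
      ix (5 ^ k * (a₀ - 1) + c) (5 ^ k * (a₁ - 1) + r) := by
    funext i; fin_cases i <;> rfl
  rwa [he] at this

lemma good_zero' : Good 0 (ix 1 1) := by
  have he : (fun _ : Fin 2 => 1) = ix 1 1 := by funext i; fin_cases i <;> rfl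
  rw [← he]; exact Good.zero

/-- main construction lemma: cubes in a full row are good -/
lemma good_row : ∀ k c r, 1 ≤ c → c ≤ 5 ^ k → r ∈ Rows k → Good k (ix c r) := by
  intro k
  induction k with
  | zero =>
    intro c r hc1 hc2 hr
    simp [Rows] at hr
    have : c = 1 := by omega
    subst this; subst hr
    exact good_zero'
  | succ n ih =>
    intro c r hc1 hc2 hr
    have h5 : 0 < 5 ^ n := Nat.pow_pos (by norm_num)
    set q := (c - 1) / 5 ^ n with hq
    set r0 := (c - 1) % 5 ^ n with hr0def
    have hr0 : r0 < 5 ^ n := Nat.mod_lt _ h5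
    have key : 5 ^ n * q + r0 = c - 1 := Nat.div_add_mod _ _
    have hceq : c = 5 ^ n * q + r0 + 1 := by rw [key, Nat.sub_add_cancel hc1]
    have hq5 : q < 5 := by
      have hlt : 5 ^ n * q < c := by
        rw [hceq, Nat.add_assoc]
        exact Nat.lt_add_of_pos_right (by omega)
      have h2 : 5 ^ n * q < 5 ^ n * 5 := lt_of_lt_of_le hlt (hc2.trans_eq (by ring))
      exact Nat.lt_of_mul_lt_mul_left h2
    have hcol : 5 ^ n * (q + 1 - 1) + (r0 + 1) = c := by
      rw [Nat.add_sub_cancel, hceq]; ring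
    have ha1 : 1 ≤ q + 1 := Nat.le_add_left 1 q
    have ha5 : q + 1 ≤ 5 := Nat.succ_le_of_lt hq5
    have hc'1 : 1 ≤ r0 + 1 := Nat.le_add_left 1 r0
    have hc'5 : r0 + 1 ≤ 5 ^ n := Nat.succ_le_of_lt hr0
    simp only [Rows, Finset.mem_union, Finset.mem_image] at hr
    rcases hr with h | ⟨r', hr', rfl⟩
    · have hg := good_succ' (keptPair_of_row (a := q + 1) (e := 1) ha1 ha5 (Or.inl rfl))
        (ih (r0 + 1) r hc'1 hc'5 h)
      have hrow : 5 ^ n * (1 - 1) + r = r := by simp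
      rw [hrow, hcol] at hg
      exact hg
    · have hg := good_succ' (keptPair_of_row (a := q + 1) (e := 5) ha1 ha5 (Or.inr rfl))
        (ih (r0 + 1) r' hc'1 hc'5 hr')
      have hrow : 5 ^ n * (5 - 1) + r' = r' + 4 * 5 ^ n := by ring
      rw [hrow, hcol] at hg
      exact hg

lemma good_all5 : ∀ k, Good k (ix (5 ^ k) (5 ^ k)) := by
  intro k
  induction k with
  | zero => simpa using good_zero'
  | succ n ih =>
    have hg := good_succ' (keptPair_of_row (a := 5) (e := 5) (by norm_num) (by norm_num) (Or.inr rfl)) ih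
    have : 5 ^ n * (5 - 1) + 5 ^ n = 5 ^ (n + 1) := by ring
    rwa [this] at hg

lemma good_corner (m : ℕ) : Good (m + 1) (ix (3 * 5 ^ m) (3 * 5 ^ m)) := by
  have hkept : keptPair (ix 3 3) := by
    refine ⟨fun i => ?_, ?_, ?_, ?_, ?_⟩
    · fin_cases i <;> simp
    all_goals simp
  have hg := good_succ' hkept (good_all5 m)
  have : 5 ^ m * (3 - 1) + 5 ^ m = 3 * 5 ^ m := by ring
  rwa [this] at hg

lemma good_dpath (m j : ℕ) (hj1 : 1 ≤ j) (hj2 : j ≤ 5 ^ m) :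
    Good (m + 1) (ix (3 * 5 ^ m + j) (3 * 5 ^ m + 1)) := by
  have hkept : keptPair (ix 4 4) := by
    refine ⟨fun i => ?_, ?_, ?_, ?_, ?_⟩
    · fin_cases i <;> simp
    all_goals simp
  have hg := good_succ' hkept (good_row m j 1 hj1 hj2 (one_mem_Rows m))
  have h1 : 5 ^ m * (4 - 1) + j = 3 * 5 ^ m + j := by ring
  have h2 : 5 ^ m * (4 - 1) + 1 = 3 * 5 ^ m + 1 := by ring
  rwa [h1, h2] at hg

lemma good_dend (m : ℕ) : Good (m + 1) (ix (4 * 5 ^ m + 1) (3 * 5 ^ m + 1)) := by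
  have hkept : keptPair (ix 5 4) := by
    refine ⟨fun i => ?_, ?_, ?_, ?_, ?_⟩
    · fin_cases i <;> simp
    all_goals simp
  have hg := good_succ' hkept (good_row m 1 1 le_rfl (Nat.one_le_pow m 5 (by norm_num)) (one_mem_Rows m))
  have h1 : 5 ^ m * (5 - 1) + 1 = 4 * 5 ^ m + 1 := by ring
  have h2 : 5 ^ m * (4 - 1) + 1 = 3 * 5 ^ m + 1 := by ring
  rwa [h1, h2] at hg

lemma good_lvl1 {a b : ℕ} (h : keptPair (ix a b)) : Good 1 (ix a b) := by
  have hg := good_succ' h good_zero'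
  have ha := (h.1 0); have hb := (h.1 1)
  simp only [ix0, ix1] at ha hb
  have h1 : 5 ^ 0 * (a - 1) + 1 = a := by simp; omega
  have h2 : 5 ^ 0 * (b - 1) + 1 = b := by simp; omega
  rwa [h1, h2] at hg

/-! ## Finiteness and energy as a finite sum -/

lemma Qcol_finite (d n : ℕ) : (Qcol d n).Finite := by
  have h1 : {l : Fin d → ℕ | ∀ i, l i ≤ 5 ^ n}.Finite := by
    have : {l : Fin d → ℕ | ∀ i, l i ≤ 5 ^ n} = Set.pi univ (fun _ => Iic (5 ^ n)) := by
      ext l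
      exact Iff.intro (fun h i _ => h i) (fun h i => h i (mem_univ i))
    rw [this]
    exact Set.Finite.pi (fun i => finite_Iic _)
  apply (h1.image (fun l => cube d n l)).subset
  rintro Q ⟨l, hl, rfl⟩
  exact ⟨l, fun i => (hl i).2, rfl⟩

lemma QcolOf_finite (d n : ℕ) (A : Set (Pt d)) : (QcolOf d n A).Finite :=
  (Qcol_finite d n).subset fun _ hQ => hQ.1

instance QT_fintype (n : ℕ) : Fintype ↥(QcolOf 2 n (Fset 2)) :=
  (QcolOf_finite 2 n (Fset 2)).fintype

lemma energy_eq (n : ℕ) (p : ℝ) (f : Set (Pt 2) → ℝ) :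
    energy 2 n p f = (1/2) * ∑ q : (↥(QcolOf 2 n (Fset 2)) × ↥(QcolOf 2 n (Fset 2))),
      (if ((q.1 : Set (Pt 2)) ∩ (q.2 : Set (Pt 2))).Nonempty then |f q.1 - f q.2| ^ p else 0) := by
  rw [energy]
  congr 1
  rw [← Finset.univ_product_univ, Finset.sum_product, tsum_fintype]
  exact Finset.sum_congr rfl fun Q _ => tsum_fintype _

lemma energy_nonneg (n : ℕ) (p : ℝ) (f : Set (Pt 2) → ℝ) : 0 ≤ energy 2 n p f := by
  rw [energy_eq]
  apply mul_nonneg (by norm_num)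
  apply Finset.sum_nonneg
  intro q _
  split
  · exact Real.rpow_nonneg (abs_nonneg _) p
  · exact le_refl 0

lemma energy_ge (n : ℕ) (p : ℝ) (f : Set (Pt 2) → ℝ)
    (s : Finset ((Fin 2 → ℕ) × (Fin 2 → ℕ)))
    (hmem : ∀ e ∈ s, cube 2 n e.1 ∈ QcolOf 2 n (Fset 2) ∧ cube 2 n e.2 ∈ QcolOf 2 n (Fset 2) ∧
      (cube 2 n e.1 ∩ cube 2 n e.2).Nonempty)
    (hswap : ∀ e ∈ s, (e.2, e.1) ∉ s) :
    ∑ e ∈ s, |f (cube 2 n e.1) - f (cube 2 n e.2)| ^ p ≤ energy 2 n p f := by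
  classical
  set T := ↥(QcolOf 2 n (Fset 2))
  set s2 := s ∪ s.image Prod.swap with hs2
  have hmem2 : ∀ e ∈ s2, cube 2 n e.1 ∈ QcolOf 2 n (Fset 2) ∧
      cube 2 n e.2 ∈ QcolOf 2 n (Fset 2) ∧ (cube 2 n e.1 ∩ cube 2 n e.2).Nonempty := by
    intro e he
    rcases Finset.mem_union.1 he with h | h
    · exact hmem e h
    · obtain ⟨e', he', rfl⟩ := Finset.mem_image.1 h
      obtain ⟨h1, h2, h3⟩ := hmem e' he'
      exact ⟨h2, h1, by rwa [Set.inter_comm]⟩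
  let φ : {x // x ∈ s2} → T × T := fun e =>
    (⟨cube 2 n e.1.1, (hmem2 e.1 e.2).1⟩, ⟨cube 2 n e.1.2, (hmem2 e.1 e.2).2.1⟩)
  have hφinj : Function.Injective φ := by
    intro a b hab
    apply Subtype.ext
    have h1 : cube 2 n a.1.1 = cube 2 n b.1.1 := congrArg (fun z => (z.1 : Set (Pt 2))) hab
    have h2 : cube 2 n a.1.2 = cube 2 n b.1.2 := congrArg (fun z => (z.2 : Set (Pt 2))) hab
    exact Prod.ext (cube_inj h1) (cube_inj h2)
  set F : T × T → ℝ := fun q =>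
    if ((q.1 : Set (Pt 2)) ∩ (q.2 : Set (Pt 2))).Nonempty then |f q.1 - f q.2| ^ p else 0
  have hF0 : ∀ q : T × T, 0 ≤ F q := by
    intro q
    simp only [F]
    split
    · exact Real.rpow_nonneg (abs_nonneg _) p
    · exact le_refl 0
  have key : ∑ e ∈ s2, |f (cube 2 n e.1) - f (cube 2 n e.2)| ^ p ≤ ∑ q : T × T, F q := by
    have h1 : ∑ e ∈ s2, |f (cube 2 n e.1) - f (cube 2 n e.2)| ^ p
        = ∑ q ∈ Finset.image φ Finset.univ, F q := by
      rw [Finset.sum_image (fun a _ b _ h => hφinj h)]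
      rw [← Finset.sum_attach s2 (fun e => |f (cube 2 n e.1) - f (cube 2 n e.2)| ^ p)]
      apply Finset.sum_congr rfl
      intro e _
      simp only [F, φ]
      rw [if_pos (hmem2 e.1 e.2).2.2]
    rw [h1]
    exact Finset.sum_le_sum_of_subset_of_nonneg (Finset.subset_univ _) (fun q _ _ => hF0 q)
  have hE : energy 2 n p f = (1/2) * ∑ q : T × T, F q := energy_eq n p f
  -- split s2
  have hdisj : Disjoint s (s.image Prod.swap) := by
    rw [Finset.disjoint_left]
    intro e he hecontra
    obtain ⟨e', he', heq⟩ := Finset.mem_image.1 hecontra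
    apply hswap e he
    have h' : e' = (e.2, e.1) := by
      rw [← Prod.swap_swap e', heq]
      rfl
    rwa [h'] at he'
  have hsum2 : ∑ e ∈ s2, |f (cube 2 n e.1) - f (cube 2 n e.2)| ^ p
      = 2 * ∑ e ∈ s, |f (cube 2 n e.1) - f (cube 2 n e.2)| ^ p := by
    rw [hs2, Finset.sum_union hdisj]
    have : ∑ e ∈ s.image Prod.swap, |f (cube 2 n e.1) - f (cube 2 n e.2)| ^ p
        = ∑ e ∈ s, |f (cube 2 n e.1) - f (cube 2 n e.2)| ^ p := by
      rw [Finset.sum_image (fun a _ b _ h => Prod.swap_injective h)]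
      apply Finset.sum_congr rfl
      intro e _
      simp only [Prod.fst_swap, Prod.snd_swap, abs_sub_comm]
    rw [this]
    ring
  linarith [key, hsum2]

lemma energy_upper (n : ℕ) (p : ℝ) (hp : 0 < p) (f : Set (Pt 2) → ℝ)
    (B : Finset ((Fin 2 → ℕ) × (Fin 2 → ℕ)))
    (hbnd : ∀ Q Q' : Set (Pt 2), |f Q - f Q'| ≤ 1)
    (hf : ∀ Q Q' : Set (Pt 2), Q ∈ QcolOf 2 n (Fset 2) → Q' ∈ QcolOf 2 n (Fset 2) →
      (Q ∩ Q').Nonempty → f Q ≠ f Q' → ∃ e ∈ B, Q = cube 2 n e.1 ∧ Q' = cube 2 n e.2) :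
    energy 2 n p f ≤ (1/2) * B.card := by
  classical
  rw [energy_eq]
  set T := ↥(QcolOf 2 n (Fset 2))
  set F : T × T → ℝ := fun q =>
    if ((q.1 : Set (Pt 2)) ∩ (q.2 : Set (Pt 2))).Nonempty then |f q.1 - f q.2| ^ p else 0
  set P : T × T → Prop := fun q => ∃ e ∈ B, (q.1 : Set (Pt 2)) = cube 2 n e.1 ∧
    (q.2 : Set (Pt 2)) = cube 2 n e.2
  have hFP : ∀ q : T × T, F q ≤ if P q then 1 else 0 := by
    intro q
    simp only [F]
    split
    · rename_i hadj
      by_cases hfe : f q.1 = f q.2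
      · rw [hfe]
        simp only [sub_self, abs_zero, Real.zero_rpow (ne_of_gt hp)]
        split <;> norm_num
      · have hP : P q := hf q.1 q.2 q.1.2 q.2.2 hadj hfe
        rw [if_pos hP]
        exact Real.rpow_le_one (abs_nonneg _) (hbnd _ _) hp.le
    · split
      · norm_num
      · exact le_refl 0
  have h1 : ∑ q : T × T, F q ≤ ∑ q : T × T, (if P q then (1:ℝ) else 0) :=
    Finset.sum_le_sum fun q _ => hFP q
  have h2 : ∑ q : T × T, (if P q then (1:ℝ) else 0)
      = ((Finset.univ.filter P).card : ℝ) := by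
    rw [Finset.sum_boole]
  have h3 : (Finset.univ.filter P).card ≤ B.card := by
    have himg : (Finset.univ.filter P).image
        (fun q : T × T => ((q.1 : Set (Pt 2)), (q.2 : Set (Pt 2))))
        ⊆ B.image (fun e => (cube 2 n e.1, cube 2 n e.2)) := by
      intro x hx
      rw [Finset.mem_image] at hx
      obtain ⟨q, hq, rfl⟩ := hx
      obtain ⟨e, he, h1', h2'⟩ := (Finset.mem_filter.1 hq).2
      exact Finset.mem_image.2 ⟨e, he, by rw [h1', h2']⟩
    have hinj : ((Finset.univ.filter P) : Finset (T × T)).card =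
        ((Finset.univ.filter P).image
          (fun q : T × T => ((q.1 : Set (Pt 2)), (q.2 : Set (Pt 2))))).card := by
      rw [Finset.card_image_of_injective]
      intro a b hab
      have := Prod.ext_iff.1 hab
      exact Prod.ext (Subtype.ext this.1) (Subtype.ext this.2)
    calc (Finset.univ.filter P).card
        = _ := hinj
      _ ≤ (B.image (fun e => (cube 2 n e.1, cube 2 n e.2))).card := Finset.card_le_card himg
      _ ≤ B.card := Finset.card_image_le
  have : ∑ q : T × T, F q ≤ (B.card : ℝ) := by
    refine le_trans h1 ?_
    rw [h2]
    exact_mod_cast h3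
  nlinarith [this]

/-! ## chain (Hölder) inequality -/

lemma chain_bound {p : ℝ} (hp : 1 < p) {K : ℕ} (hK : 1 ≤ K) (g : ℕ → ℝ)
    (h0 : g 0 = 1) (hK0 : g K = 0) :
    (K : ℝ) ^ ((1:ℝ) - p) ≤ ∑ j ∈ Finset.range K, |g j - g (j + 1)| ^ p := by
  have hKpos : (0:ℝ) < K := by exact_mod_cast hK
  set z : ℕ → ℝ := fun j => |g j - g (j+1)| with hz
  have hznn : ∀ j ∈ Finset.range K, 0 ≤ z j := fun j _ => abs_nonneg _
  have hS : (1:ℝ) ≤ ∑ j ∈ Finset.range K, z j := by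
    have htel : ∑ j ∈ Finset.range K, (g j - g (j+1)) = g 0 - g K :=
      Finset.sum_range_sub' g K
    calc (1:ℝ) = |∑ j ∈ Finset.range K, (g j - g (j+1))| := by
          rw [htel, h0, hK0]; norm_num
      _ ≤ ∑ j ∈ Finset.range K, |g j - g (j+1)| := Finset.abs_sum_le_sum_abs _ _
  have hw : ∑ _j ∈ Finset.range K, (1/(K:ℝ)) = 1 := by
    rw [Finset.sum_const, Finset.card_range, nsmul_eq_mul]
    field_simp
  have hj := Real.rpow_arith_mean_le_arith_mean_rpow (Finset.range K) (fun _ => 1/(K:ℝ)) z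
    (fun i _ => by positivity) hw hznn hp.le
  have hmean : (1/(K:ℝ)) ≤ ∑ j ∈ Finset.range K, (1/(K:ℝ)) * z j := by
    rw [← Finset.mul_sum]
    calc (1/(K:ℝ)) = (1/(K:ℝ)) * 1 := by ring
      _ ≤ _ := by
          apply mul_le_mul_of_nonneg_left hS (by positivity)
  have hstep : (1/(K:ℝ)) ^ p ≤ ∑ j ∈ Finset.range K, (1/(K:ℝ)) * z j ^ p := by
    refine le_trans ?_ hj
    exact Real.rpow_le_rpow (by positivity) hmean (by linarith)
  rw [← Finset.mul_sum] at hstep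
  have hKp : (0:ℝ) < (K:ℝ) ^ p := Real.rpow_pos_of_pos hKpos p
  have hfin : (K:ℝ) ^ ((1:ℝ) - p) = (K:ℝ) * (1/(K:ℝ)) ^ p := by
    rw [Real.rpow_sub hKpos, Real.rpow_one,
      Real.div_rpow (by norm_num) (le_of_lt hKpos), Real.one_rpow]
    field_simp
  rw [hfin]
  calc (K:ℝ) * (1/(K:ℝ)) ^ p ≤ (K:ℝ) * ((1/(K:ℝ)) * ∑ j ∈ Finset.range K, z j ^ p) := by
        apply mul_le_mul_of_nonneg_left hstep (by positivity)
    _ = ∑ j ∈ Finset.range K, z j ^ p := by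
        field_simp

/-! ## identification of the two special cubes -/

lemma ix_diag (c : ℕ) (i : Fin 2) : ix c c i = c := by unfold ix; split <;> rfl

lemma Qone_eq : Qone 2 = cube 2 1 (ix 1 1) := by
  ext x
  have h : ∀ i : Fin 2, ((ix 1 1 i : ℕ) : ℝ) = 1 := fun i => by rw [ix_diag]; norm_num
  constructor
  · intro hx i
    have h1 := (hx i).1; have h2 := (hx i).2
    rw [h i]
    constructor <;> (norm_num; try linarith)
  · intro hx i
    have h' := hx i
    rw [h i] at h'
    have h1 := h'.1; have h2 := h'.2
    norm_num at h1 h2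
    rw [mem_Icc]
    constructor <;> linarith

lemma Qtwo_eq : Qtwo 2 = cube 2 1 (ix 3 3) := by
  ext x
  have h : ∀ i : Fin 2, ((ix 3 3 i : ℕ) : ℝ) = 3 := fun i => by rw [ix_diag]; norm_num
  constructor
  · intro hx i
    have h1 := (hx i).1; have h2 := (hx i).2
    rw [h i]
    constructor <;> (norm_num; try linarith)
  · intro hx i
    have h' := hx i
    rw [h i] at h'
    have h1 := h'.1; have h2 := h'.2
    norm_num at h1 h2
    rw [mem_Icc]
    constructor <;> linarith

/-! ## the band lemma -/

lemma Fset_subset_F1 : Fset 2 ⊆ F1 2 := fun x hx => Fset_subset_Fn 2 1 hx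

lemma band (m : ℕ) {B : Fin 2 → ℕ} (hBQ : cube 2 (m+1) B ∈ QcolOf 2 (m+1) (Fset 2))
    {i j : Fin 2} (hij : (i = 0 ∧ j = 1) ∨ (i = 1 ∧ j = 0))
    (h0 : B i = 2 * 5 ^ m ∨ B i = 3 * 5 ^ m + 1)
    (hj1 : 2 * 5 ^ m ≤ B j) (hj2 : B j ≤ 3 * 5 ^ m + 1) :
    B j = 2 * 5 ^ m ∨ B j = 3 * 5 ^ m + 1 := by
  by_contra hcon
  push_neg at hcon
  have hj1' : 2 * 5 ^ m + 1 ≤ B j := by omega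
  have hj2' : B j ≤ 3 * 5 ^ m := by omega
  obtain ⟨x, hxi, hxF⟩ := hBQ.2
  have hx := interior_subset_obox _ _ _ hxi
  have hxF1 : x ∈ F1 2 := Fset_subset_F1 hxF
  have h5m : (1:ℝ) ≤ 5 ^ m := by exact_mod_cast Nat.one_le_pow m 5 (by norm_num)
  have h5p : (0:ℝ) < 5 ^ (m+1) := fpow_pos (m+1)
  have hpow : (5:ℝ) ^ (m + 1) = 5 * 5 ^ m := by ring
  -- x i lies in one of the two bad open bands
  have hxi_band : x i ∈ Ioo (1/5 : ℝ) (2/5) ∨ x i ∈ Ioo (3/5 : ℝ) (4/5) := by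
    have h1 := (hx i).1; have h2 := (hx i).2
    rcases h0 with h | h
    · left
      rw [h] at h1 h2
      constructor
      · refine lt_of_le_of_lt ?_ h1
        rw [div_le_div_iff₀ (by norm_num) h5p, hpow]
        push_cast
        nlinarith
      · refine lt_of_lt_of_le h2 ?_
        rw [div_le_div_iff₀ h5p (by norm_num), hpow]
        push_cast
        nlinarith
    · right
      rw [h] at h1 h2
      constructor
      · refine lt_of_le_of_lt ?_ h1
        rw [div_le_div_iff₀ (by norm_num) h5p, hpow]
        push_cast
        nlinarith
      · refine lt_of_lt_of_le h2 ?_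
        rw [div_le_div_iff₀ h5p (by norm_num), hpow]
        push_cast
        nlinarith
  -- x j lies in the middle band
  have hxj_band : x j ∈ Ioo (2/5 : ℝ) (3/5) := by
    have h1 := (hx j).1; have h2 := (hx j).2
    constructor
    · refine lt_of_le_of_lt ?_ h1
      rw [div_le_div_iff₀ (by norm_num) h5p, hpow]
      have : (2 * 5 ^ m + 1 : ℝ) ≤ (B j : ℝ) := by exact_mod_cast hj1'
      nlinarith
    · refine lt_of_lt_of_le h2 ?_
      rw [div_le_div_iff₀ h5p (by norm_num), hpow]
      have : (B j : ℝ) ≤ (3 * 5 ^ m : ℝ) := by exact_mod_cast hj2'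
      nlinarith
  rw [mem_F1_iff] at hxF1
  rcases hij with ⟨hi, hj⟩ | ⟨hi, hj⟩
  · subst hi; subst hj
    exact hxF1.2.1 ⟨hxi_band, hxj_band⟩
  · subst hi; subst hj
    exact hxF1.2.2 ⟨hxj_band, hxi_band⟩

/-- classification of differing adjacent pairs for the central cube -/
lemma den_pairs (m : ℕ) {A B : Fin 2 → ℕ}
    (hAsub : cube 2 (m+1) A ⊆ Qtwo 2)
    (hBQ : cube 2 (m+1) B ∈ QcolOf 2 (m+1) (Fset 2))
    (hBnsub : ¬ cube 2 (m+1) B ⊆ Qtwo 2)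
    (hadj : (cube 2 (m+1) A ∩ cube 2 (m+1) B).Nonempty) :
    (A = ix (2*5^m+1) (2*5^m+1) ∧ B = ix (2*5^m) (2*5^m)) ∨
    (A = ix (2*5^m+1) (3*5^m) ∧ B = ix (2*5^m) (3*5^m+1)) ∨
    (A = ix (3*5^m) (2*5^m+1) ∧ B = ix (3*5^m+1) (2*5^m)) ∨
    (A = ix (3*5^m) (3*5^m) ∧ B = ix (3*5^m+1) (3*5^m+1)) := by
  have h5m : (1:ℕ) ≤ 5 ^ m := Nat.one_le_pow m 5 (by norm_num)
  -- bounds for A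
  have hA : ∀ i, 2 * 5 ^ m + 1 ≤ A i ∧ A i ≤ 3 * 5 ^ m := by
    intro i
    have hsub' : cube 2 (m+1) A ⊆ cube 2 1 (ix 3 3) := by rwa [Qtwo_eq] at hAsub
    have := index_of_subset hsub' i
    have h1 := this.1; have h2 := this.2
    have hcast : ((5:ℝ) ^ m * ((ix 3 3 i : ℝ) - 1) + 1) = 2 * 5 ^ m + 1 := by
      have : ((ix 3 3 i : ℕ) : ℝ) = 3 := by rw [ix_diag]; norm_num
      rw [this]; ring
    have hcast2 : ((5:ℝ) ^ m * (ix 3 3 i : ℝ)) = 3 * 5 ^ m := by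
      have : ((ix 3 3 i : ℕ) : ℝ) = 3 := by rw [ix_diag]; norm_num
      rw [this]; ring
    rw [hcast] at h1; rw [hcast2] at h2
    constructor
    · exact_mod_cast (by push_cast; linarith : ((2 * 5 ^ m + 1 : ℕ) : ℝ) ≤ A i)
    · exact_mod_cast (by push_cast; linarith : ((A i : ℕ) : ℝ) ≤ ((3 * 5 ^ m : ℕ) : ℝ))
  -- closeness
  have hclose : ∀ i, A i ≤ B i + 1 ∧ B i ≤ A i + 1 := by
    intro i
    have := close_of_cube_inter hadj i
    constructor
    · exact_mod_cast (by push_cast; linarith [this.1] : ((A i : ℕ) : ℝ) ≤ ((B i + 1 : ℕ) : ℝ))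
    · exact_mod_cast (by push_cast; linarith [this.2] : ((B i : ℕ) : ℝ) ≤ ((A i + 1 : ℕ) : ℝ))
  have hBrange : ∀ i, 2 * 5 ^ m ≤ B i ∧ B i ≤ 3 * 5 ^ m + 1 := by
    intro i
    have h1 := (hA i).1; have h2 := (hA i).2
    have h3 := (hclose i).1; have h4 := (hclose i).2
    omega
  -- some coordinate of B is out of the middle range
  have hBout : ∃ i, B i = 2 * 5 ^ m ∨ B i = 3 * 5 ^ m + 1 := by
    by_contra hcon
    push_neg at hcon
    apply hBnsub
    rw [Qtwo_eq]
    apply cube_subset_cube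
    intro i
    have h1 := (hBrange i).1; have h2 := (hBrange i).2
    have h3 := (hcon i).1; have h4 := (hcon i).2
    have hb1 : 2 * 5 ^ m + 1 ≤ B i := by omega
    have hb2 : B i ≤ 3 * 5 ^ m := by omega
    have hc : ((ix 3 3 i : ℕ) : ℝ) = 3 := by rw [ix_diag]; norm_num
    rw [hc]
    constructor
    · have : ((2 * 5 ^ m + 1 : ℕ) : ℝ) ≤ (B i : ℝ) := by exact_mod_cast hb1
      push_cast at this
      linarith
    · have : ((B i : ℕ) : ℝ) ≤ ((3 * 5 ^ m : ℕ) : ℝ) := by exact_mod_cast hb2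
      push_cast at this
      linarith
  -- both coordinates extreme
  have hBext : ∀ i, B i = 2 * 5 ^ m ∨ B i = 3 * 5 ^ m + 1 := by
    obtain ⟨i0, hi0⟩ := hBout
    intro i
    by_cases hii : i = i0
    · rwa [hii]
    · have hio : (i0 = 0 ∧ i = 1) ∨ (i0 = 1 ∧ i = 0) := by
        fin_cases i <;> fin_cases i0 <;> simp_all <;> omega
      exact band m hBQ hio hi0 (hBrange i).1 (hBrange i).2
  -- pin down A
  have hApin : ∀ i, (B i = 2 * 5 ^ m → A i = 2 * 5 ^ m + 1) ∧
      (B i = 3 * 5 ^ m + 1 → A i = 3 * 5 ^ m) := by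
    intro i
    have h1 := (hA i).1; have h2 := (hA i).2
    have h3 := (hclose i).1; have h4 := (hclose i).2
    constructor <;> intro h <;> omega
  have hfun : ∀ (l : Fin 2 → ℕ) (c r : ℕ), l 0 = c → l 1 = r → l = ix c r := by
    intro l c r h1 h2
    funext i; fin_cases i <;> simp [ix, h1, h2]
  rcases hBext 0 with hb0 | hb0 <;> rcases hBext 1 with hb1 | hb1
  · exact Or.inl ⟨hfun _ _ _ ((hApin 0).1 hb0) ((hApin 1).1 hb1), hfun _ _ _ hb0 hb1⟩
  · exact Or.inr (Or.inl ⟨hfun _ _ _ ((hApin 0).1 hb0) ((hApin 1).2 hb1), hfun _ _ _ hb0 hb1⟩)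
  · exact Or.inr (Or.inr (Or.inl ⟨hfun _ _ _ ((hApin 0).2 hb0) ((hApin 1).1 hb1), hfun _ _ _ hb0 hb1⟩))
  · exact Or.inr (Or.inr (Or.inr ⟨hfun _ _ _ ((hApin 0).2 hb0) ((hApin 1).2 hb1), hfun _ _ _ hb0 hb1⟩))

/-! ## conductance helpers -/

lemma mem_Sm_iff {m : ℕ} {A : Set (Set (Pt 2))} {Q : Set (Pt 2)} :
    Q ∈ Sm 2 1 m A ↔ Q ∈ QcolOf 2 (m+1) (Fset 2) ∧ ∃ Q' ∈ A, Q ⊆ Q' := by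
  unfold Sm
  rw [Nat.add_comm 1 m]
  exact Iff.rfl

lemma conduct_eq (m : ℕ) (p : ℝ) (A₁ A₂ : Set (Set (Pt 2))) :
    conduct 2 1 m p A₁ A₂ = sInf {e : ℝ | ∃ f : Set (Pt 2) → ℝ,
      (∀ Q ∈ Sm 2 1 m A₁, f Q = 1) ∧ (∀ Q ∈ Sm 2 1 m A₂, f Q = 0) ∧
      e = energy 2 (m+1) p f} := by
  unfold conduct
  rw [Nat.add_comm 1 m]

lemma cube_subset_cube_ix {m c r a b : ℕ}
    (h0 : 5 ^ m * ((a:ℝ) - 1) + 1 ≤ c ∧ (c:ℝ) ≤ 5 ^ m * a)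
    (h1 : 5 ^ m * ((b:ℝ) - 1) + 1 ≤ r ∧ (r:ℝ) ≤ 5 ^ m * b) :
    cube 2 (m+1) (ix c r) ⊆ cube 2 1 (ix a b) := by
  apply cube_subset_cube
  intro i
  unfold ix
  by_cases h : i = 0
  · rw [if_pos h, if_pos h]; exact h0
  · rw [if_neg h, if_neg h]; exact h1

lemma kept_ix {a b : ℕ} (ha : 1 ≤ a ∧ a ≤ 5) (hb : 1 ≤ b ∧ b ≤ 5)
    (h1 : ¬(a = 2 ∧ b = 3)) (h2 : ¬(a = 4 ∧ b = 3)) (h3 : ¬(a = 3 ∧ b = 2))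
    (h4 : ¬(a = 3 ∧ b = 4)) : keptPair (ix a b) := by
  refine ⟨fun i => ?_, ?_, ?_, ?_, ?_⟩
  · unfold ix
    by_cases h : i = 0
    · rw [if_pos h]; exact ha
    · rw [if_neg h]; exact hb
  all_goals simp only [ix0, ix1]
  exacts [h1, h2, h3, h4]

lemma c31_mem_GamC1 : cube 2 1 (ix 3 1) ∈ GamC 2 1 (Qone 2) := by
  constructor
  · exact good_mem (good_lvl1 (kept_ix (by omega) (by omega) (by omega) (by omega) (by omega) (by omega)))
  · rintro ⟨-, x, hx1, hx2⟩
    have h1 := (hx1 0).1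
    have h2 := (hx2 0).2
    simp only [ix0] at h1
    norm_num at h1 h2
    linarith

lemma c54_mem_GamC2 : cube 2 1 (ix 5 4) ∈ GamC 2 1 (Qtwo 2) := by
  constructor
  · exact good_mem (good_lvl1 (kept_ix (by omega) (by omega) (by omega) (by omega) (by omega) (by omega)))
  · rintro ⟨-, x, hx1, hx2⟩
    have h1 := (hx1 0).1
    have h2 := (hx2 0).2
    simp only [ix0] at h1
    norm_num at h1 h2
    linarith

lemma Sm_nonmem {m : ℕ} {B : Set (Pt 2)} {Q : Set (Pt 2)}
    (hQ : Q ∈ Sm 2 1 m (GamC 2 1 B)) : Q ∉ Sm 2 1 m {B} := by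
  rw [mem_Sm_iff] at hQ
  obtain ⟨hQcol, G, hG, hsubG⟩ := hQ
  rintro hmem
  rw [mem_Sm_iff] at hmem
  obtain ⟨-, B', hB', hsubB⟩ := hmem
  rw [mem_singleton_iff] at hB'
  subst hB'
  obtain ⟨l, -, rfl⟩ := hQcol.1
  obtain ⟨x, hx⟩ := cube_nonempty 2 (m+1) l
  exact hG.2 ⟨hG.1, x, hsubG hx, hsubB hx⟩

/-- the indicator test function -/
def indC (m : ℕ) (B : Set (Pt 2)) : Set (Pt 2) → ℝ :=
  fun Q => if Q ∈ Sm 2 1 m {B} then 1 else 0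

lemma indC_admissible (m : ℕ) (B : Set (Pt 2)) :
    (∀ Q ∈ Sm 2 1 m {B}, indC m B Q = 1) ∧
    (∀ Q ∈ Sm 2 1 m (GamC 2 1 B), indC m B Q = 0) :=
  ⟨fun Q hQ => if_pos hQ, fun Q hQ => if_neg (Sm_nonmem hQ)⟩

lemma conduct_set_nonempty (m : ℕ) (p : ℝ) (B : Set (Pt 2)) :
    {e : ℝ | ∃ f : Set (Pt 2) → ℝ,
      (∀ Q ∈ Sm 2 1 m {B}, f Q = 1) ∧ (∀ Q ∈ Sm 2 1 m (GamC 2 1 B), f Q = 0) ∧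
      e = energy 2 (m+1) p f}.Nonempty :=
  ⟨energy 2 (m+1) p (indC m B), indC m B, (indC_admissible m B).1,
    (indC_admissible m B).2, rfl⟩

lemma conduct_set_bddBelow (m : ℕ) (p : ℝ) (B : Set (Pt 2)) :
    BddBelow {e : ℝ | ∃ f : Set (Pt 2) → ℝ,
      (∀ Q ∈ Sm 2 1 m {B}, f Q = 1) ∧ (∀ Q ∈ Sm 2 1 m (GamC 2 1 B), f Q = 0) ∧
      e = energy 2 (m+1) p f} := by
  refine ⟨0, ?_⟩
  rintro e ⟨f, -, -, rfl⟩
  exact energy_nonneg _ _ _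

/-! ## denominator upper bound -/

lemma den_upper (m : ℕ) (p : ℝ) (hp : 0 < p) :
    conduct 2 1 m p {Qtwo 2} (GamC 2 1 (Qtwo 2)) ≤ 4 := by
  rw [conduct_eq]
  have hmem : energy 2 (m+1) p (indC m (Qtwo 2)) ∈ {e : ℝ | ∃ f : Set (Pt 2) → ℝ,
      (∀ Q ∈ Sm 2 1 m {Qtwo 2}, f Q = 1) ∧
      (∀ Q ∈ Sm 2 1 m (GamC 2 1 (Qtwo 2)), f Q = 0) ∧
      e = energy 2 (m+1) p f} :=
    ⟨indC m (Qtwo 2), (indC_admissible m (Qtwo 2)).1, (indC_admissible m (Qtwo 2)).2, rfl⟩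
  refine le_trans (csInf_le (conduct_set_bddBelow m p _) hmem) ?_
  set L : List ((Fin 2 → ℕ) × (Fin 2 → ℕ)) :=
    [(ix (2*5^m+1) (2*5^m+1), ix (2*5^m) (2*5^m)),
     (ix (2*5^m) (2*5^m), ix (2*5^m+1) (2*5^m+1)),
     (ix (2*5^m+1) (3*5^m), ix (2*5^m) (3*5^m+1)),
     (ix (2*5^m) (3*5^m+1), ix (2*5^m+1) (3*5^m)),
     (ix (3*5^m) (2*5^m+1), ix (3*5^m+1) (2*5^m)),
     (ix (3*5^m+1) (2*5^m), ix (3*5^m) (2*5^m+1)),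
     (ix (3*5^m) (3*5^m), ix (3*5^m+1) (3*5^m+1)),
     (ix (3*5^m+1) (3*5^m+1), ix (3*5^m) (3*5^m))] with hL
  have hbnd : ∀ Q Q' : Set (Pt 2), |indC m (Qtwo 2) Q - indC m (Qtwo 2) Q'| ≤ 1 := by
    intro Q Q'
    unfold indC
    split_ifs <;> norm_num
  have hf : ∀ Q Q' : Set (Pt 2), Q ∈ QcolOf 2 (m+1) (Fset 2) → Q' ∈ QcolOf 2 (m+1) (Fset 2) →
      (Q ∩ Q').Nonempty → indC m (Qtwo 2) Q ≠ indC m (Qtwo 2) Q' →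
      ∃ e ∈ L.toFinset, Q = cube 2 (m+1) e.1 ∧ Q' = cube 2 (m+1) e.2 := by
    intro Q Q' hQ hQ' hadj hne
    obtain ⟨A, hAb, rfl⟩ := hQ.1
    obtain ⟨B, hBb, rfl⟩ := hQ'.1
    by_cases hQin : cube 2 (m+1) A ∈ Sm 2 1 m {Qtwo 2}
    · have hQ'nin : cube 2 (m+1) B ∉ Sm 2 1 m {Qtwo 2} := by
        intro hcon
        apply hne
        unfold indC
        rw [if_pos hQin, if_pos hcon]
      have hAsub : cube 2 (m+1) A ⊆ Qtwo 2 := by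
        obtain ⟨-, Q'', hQ'', hsub⟩ := mem_Sm_iff.1 hQin
        rwa [mem_singleton_iff.1 hQ''] at hsub
      have hBnsub : ¬ cube 2 (m+1) B ⊆ Qtwo 2 := by
        intro hcon
        exact hQ'nin (mem_Sm_iff.2 ⟨hQ', Qtwo 2, mem_singleton _, hcon⟩)
      rcases den_pairs m hAsub hQ' hBnsub hadj with ⟨h1, h2⟩ | ⟨h1, h2⟩ | ⟨h1, h2⟩ | ⟨h1, h2⟩
      · refine ⟨(ix (2*5^m+1) (2*5^m+1), ix (2*5^m) (2*5^m)), by rw [hL]; simp, by rw [h1], by rw [h2]⟩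
      · refine ⟨(ix (2*5^m+1) (3*5^m), ix (2*5^m) (3*5^m+1)), by rw [hL]; simp, by rw [h1], by rw [h2]⟩
      · refine ⟨(ix (3*5^m) (2*5^m+1), ix (3*5^m+1) (2*5^m)), by rw [hL]; simp, by rw [h1], by rw [h2]⟩
      · refine ⟨(ix (3*5^m) (3*5^m), ix (3*5^m+1) (3*5^m+1)), by rw [hL]; simp, by rw [h1], by rw [h2]⟩
    · have hQ'in : cube 2 (m+1) B ∈ Sm 2 1 m {Qtwo 2} := by
        by_contra hcon
        apply hne
        unfold indC
        rw [if_neg hQin, if_neg hcon]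
      have hBsub : cube 2 (m+1) B ⊆ Qtwo 2 := by
        obtain ⟨-, Q'', hQ'', hsub⟩ := mem_Sm_iff.1 hQ'in
        rwa [mem_singleton_iff.1 hQ''] at hsub
      have hAnsub : ¬ cube 2 (m+1) A ⊆ Qtwo 2 := by
        intro hcon
        exact hQin (mem_Sm_iff.2 ⟨hQ, Qtwo 2, mem_singleton _, hcon⟩)
      have hadj' : (cube 2 (m+1) B ∩ cube 2 (m+1) A).Nonempty := by rwa [inter_comm]
      rcases den_pairs m hBsub hQ hAnsub hadj' with ⟨h1, h2⟩ | ⟨h1, h2⟩ | ⟨h1, h2⟩ | ⟨h1, h2⟩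
      · refine ⟨(ix (2*5^m) (2*5^m), ix (2*5^m+1) (2*5^m+1)), by rw [hL]; simp, by rw [h2], by rw [h1]⟩
      · refine ⟨(ix (2*5^m) (3*5^m+1), ix (2*5^m+1) (3*5^m)), by rw [hL]; simp, by rw [h2], by rw [h1]⟩
      · refine ⟨(ix (3*5^m+1) (2*5^m), ix (3*5^m) (2*5^m+1)), by rw [hL]; simp, by rw [h2], by rw [h1]⟩
      · refine ⟨(ix (3*5^m+1) (3*5^m+1), ix (3*5^m) (3*5^m)), by rw [hL]; simp, by rw [h2], by rw [h1]⟩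
  refine le_trans (energy_upper (m+1) p hp (indC m (Qtwo 2)) L.toFinset hbnd hf) ?_
  have hcard : (L.toFinset.card : ℝ) ≤ 8 := by
    have h1 : L.toFinset.card ≤ L.length := List.toFinset_card_le L
    have h2 : L.length = 8 := by rw [hL]; rfl
    exact_mod_cast h1.trans_eq h2
  linarith

/-! ## path lower bounds -/

lemma fin2_cases (i : Fin 2) : i = 0 ∨ i = 1 := by omega

lemma den_energy_lower (m : ℕ) (p : ℝ) (hp1 : 1 < p) (f : Set (Pt 2) → ℝ)
    (hf1 : ∀ Q ∈ Sm 2 1 m {Qtwo 2}, f Q = 1)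
    (hf2 : ∀ Q ∈ Sm 2 1 m (GamC 2 1 (Qtwo 2)), f Q = 0) :
    ((5 ^ m + 1 : ℕ) : ℝ) ^ ((1:ℝ) - p) ≤ energy 2 (m+1) p f := by
  classical
  set K := 5 ^ m + 1 with hK
  have h5m : 1 ≤ 5 ^ m := Nat.one_le_pow m 5 (by norm_num)
  have h5mR : (1:ℝ) ≤ 5 ^ m := by exact_mod_cast h5m
  set didx : ℕ → (Fin 2 → ℕ) :=
    fun j => ix (3 * 5 ^ m + j) (if j = 0 then 3 * 5 ^ m else 3 * 5 ^ m + 1) with hdidx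
  have hd0 : didx 0 = ix (3 * 5 ^ m) (3 * 5 ^ m) := by
    simp only [hdidx]
    norm_num
  have hdK : didx K = ix (4 * 5 ^ m + 1) (3 * 5 ^ m + 1) := by
    have h1 : 3 * 5 ^ m + K = 4 * 5 ^ m + 1 := by omega
    simp only [hdidx, if_neg (by omega : ¬ K = 0), h1]
  have hdpos : ∀ j, 1 ≤ j → j ≤ 5 ^ m → didx j = ix (3 * 5 ^ m + j) (3 * 5 ^ m + 1) := by
    intro j h1 h2
    simp only [hdidx, if_neg (by omega : ¬ j = 0)]
  have hgood : ∀ j, j ≤ K → Good (m+1) (didx j) := by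
    intro j hj
    rcases Nat.eq_zero_or_pos j with rfl | hj0
    · rw [hd0]; exact good_corner m
    · by_cases hjK : j = K
      · subst hjK; rw [hdK]; exact good_dend m
      · rw [hdpos j hj0 (by omega)]
        exact good_dpath m j hj0 (by omega)
  set s : Finset ((Fin 2 → ℕ) × (Fin 2 → ℕ)) :=
    (Finset.range K).image (fun j => (didx j, didx (j+1))) with hs
  -- the image map is injective on range K
  have hcol : ∀ j, didx j 0 = 3 * 5 ^ m + j := fun j => rfl
  have hinj : ∀ a ∈ Finset.range K, ∀ b ∈ Finset.range K,
      (fun j => (didx j, didx (j+1))) a = (fun j => (didx j, didx (j+1))) b → a = b := by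
    intro a _ b _ h
    have := congrFun (congrArg Prod.fst h) 0
    simp only [hcol] at this
    omega
  have hmem : ∀ e ∈ s, cube 2 (m+1) e.1 ∈ QcolOf 2 (m+1) (Fset 2) ∧
      cube 2 (m+1) e.2 ∈ QcolOf 2 (m+1) (Fset 2) ∧
      (cube 2 (m+1) e.1 ∩ cube 2 (m+1) e.2).Nonempty := by
    rintro e he
    obtain ⟨j, hj, rfl⟩ := Finset.mem_image.1 he
    rw [Finset.mem_range] at hj
    refine ⟨good_mem (hgood j (by omega)), good_mem (hgood (j+1) (by omega)), ?_⟩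
    apply cube_inter_of_close
    intro i
    rcases fin2_cases i with rfl | rfl
    · simp only [hcol]
      push_cast
      constructor <;> linarith
    · have e1 : ∀ j', didx j' 1 = (if j' = 0 then 3 * 5 ^ m else 3 * 5 ^ m + 1) := fun _ => rfl
      simp only [e1]
      split_ifs <;> push_cast <;> constructor <;> linarith
  have hswap : ∀ e ∈ s, (e.2, e.1) ∉ s := by
    rintro e he hcon
    obtain ⟨j, hj, rfl⟩ := Finset.mem_image.1 he
    obtain ⟨j', hj', heq⟩ := Finset.mem_image.1 hcon
    have h1 := congrFun (congrArg Prod.fst heq) 0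
    have h2 := congrFun (congrArg Prod.snd heq) 0
    simp only [hcol] at h1 h2
    omega
  have hsum : ∑ e ∈ s, |f (cube 2 (m+1) e.1) - f (cube 2 (m+1) e.2)| ^ p
      = ∑ j ∈ Finset.range K, |f (cube 2 (m+1) (didx j)) - f (cube 2 (m+1) (didx (j+1)))| ^ p := by
    rw [hs, Finset.sum_image hinj]
  have hchain : ((K:ℕ):ℝ) ^ ((1:ℝ) - p) ≤
      ∑ j ∈ Finset.range K, |f (cube 2 (m+1) (didx j)) - f (cube 2 (m+1) (didx (j+1)))| ^ p := by
    apply chain_bound hp1 (by omega) (fun j => f (cube 2 (m+1) (didx j)))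
    · -- start
      apply hf1
      rw [mem_Sm_iff, hd0]
      refine ⟨good_mem (by rw [← hd0]; exact hgood 0 (by omega)), Qtwo 2, mem_singleton _, ?_⟩
      rw [Qtwo_eq]
      apply cube_subset_cube_ix <;> constructor <;> push_cast <;> nlinarith [h5mR]
    · -- end
      apply hf2
      rw [mem_Sm_iff, hdK]
      refine ⟨good_mem (by rw [← hdK]; exact hgood K le_rfl), cube 2 1 (ix 5 4), c54_mem_GamC2, ?_⟩
      apply cube_subset_cube_ix <;> constructor <;> push_cast <;> nlinarith [h5mR]
  calc ((5 ^ m + 1 : ℕ) : ℝ) ^ ((1:ℝ) - p)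
      = ((K:ℕ):ℝ) ^ ((1:ℝ) - p) := by rw [hK]
    _ ≤ ∑ j ∈ Finset.range K, |f (cube 2 (m+1) (didx j)) - f (cube 2 (m+1) (didx (j+1)))| ^ p :=
        hchain
    _ = ∑ e ∈ s, |f (cube 2 (m+1) e.1) - f (cube 2 (m+1) e.2)| ^ p := hsum.symm
    _ ≤ energy 2 (m+1) p f := energy_ge (m+1) p f s hmem hswap

lemma num_energy_lower (m : ℕ) (p : ℝ) (hp1 : 1 < p) (f : Set (Pt 2) → ℝ)
    (hf1 : ∀ Q ∈ Sm 2 1 m {Qone 2}, f Q = 1)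
    (hf2 : ∀ Q ∈ Sm 2 1 m (GamC 2 1 (Qone 2)), f Q = 0) :
    (2:ℝ) ^ m * ((5 ^ m + 1 : ℕ) : ℝ) ^ ((1:ℝ) - p) ≤ energy 2 (m+1) p f := by
  classical
  set K := 5 ^ m + 1 with hK
  have h5m : 1 ≤ 5 ^ m := Nat.one_le_pow m 5 (by norm_num)
  have h5mR : (1:ℝ) ≤ 5 ^ m := by exact_mod_cast h5m
  set nidx : ℕ → ℕ → (Fin 2 → ℕ) := fun r j => ix (5 ^ m + j) r with hnidx
  have hgood : ∀ r ∈ Rows m, ∀ j, j ≤ K → Good (m+1) (nidx r j) := by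
    intro r hr j hj
    apply good_row (m+1) _ _ (by omega) (by
      have : 5 ^ (m+1) = 5 * 5 ^ m := by ring
      omega) (Rows_subset_succ m hr)
  set s : Finset ((Fin 2 → ℕ) × (Fin 2 → ℕ)) :=
    ((Rows m) ×ˢ (Finset.range K)).image (fun q => (nidx q.1 q.2, nidx q.1 (q.2+1))) with hs
  have hcol : ∀ r j, nidx r j 0 = 5 ^ m + j := fun r j => rfl
  have hrow : ∀ r j, nidx r j 1 = r := fun r j => rfl
  have hinj : ∀ a ∈ (Rows m) ×ˢ (Finset.range K), ∀ b ∈ (Rows m) ×ˢ (Finset.range K),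
      (fun q : ℕ × ℕ => (nidx q.1 q.2, nidx q.1 (q.2+1))) a
        = (fun q : ℕ × ℕ => (nidx q.1 q.2, nidx q.1 (q.2+1))) b → a = b := by
    intro a _ b _ h
    have h1 := congrFun (congrArg Prod.fst h) 0
    have h2 := congrFun (congrArg Prod.fst h) 1
    simp only [hcol, hrow] at h1 h2
    exact Prod.ext (by omega) (by omega)
  have hmem : ∀ e ∈ s, cube 2 (m+1) e.1 ∈ QcolOf 2 (m+1) (Fset 2) ∧
      cube 2 (m+1) e.2 ∈ QcolOf 2 (m+1) (Fset 2) ∧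
      (cube 2 (m+1) e.1 ∩ cube 2 (m+1) e.2).Nonempty := by
    rintro e he
    obtain ⟨q, hq, rfl⟩ := Finset.mem_image.1 he
    rw [Finset.mem_product, Finset.mem_range] at hq
    refine ⟨good_mem (hgood q.1 hq.1 q.2 (by omega)),
      good_mem (hgood q.1 hq.1 (q.2+1) (by omega)), ?_⟩
    apply cube_inter_of_close
    intro i
    rcases fin2_cases i with rfl | rfl
    · simp only [hcol]
      push_cast
      constructor <;> linarith
    · simp only [hrow]
      constructor <;> linarith
  have hswap : ∀ e ∈ s, (e.2, e.1) ∉ s := by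
    rintro e he hcon
    obtain ⟨q, hq, rfl⟩ := Finset.mem_image.1 he
    obtain ⟨q', hq', heq⟩ := Finset.mem_image.1 hcon
    have h1 := congrFun (congrArg Prod.fst heq) 0
    have h2 := congrFun (congrArg Prod.snd heq) 0
    simp only [hcol] at h1 h2
    omega
  have hsum : ∑ e ∈ s, |f (cube 2 (m+1) e.1) - f (cube 2 (m+1) e.2)| ^ p
      = ∑ q ∈ (Rows m) ×ˢ (Finset.range K),
          |f (cube 2 (m+1) (nidx q.1 q.2)) - f (cube 2 (m+1) (nidx q.1 (q.2+1)))| ^ p := by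
    rw [hs, Finset.sum_image hinj]
  have hchain : ∀ r ∈ Rows m, ((K:ℕ):ℝ) ^ ((1:ℝ) - p) ≤
      ∑ j ∈ Finset.range K,
        |f (cube 2 (m+1) (nidx r j)) - f (cube 2 (m+1) (nidx r (j+1)))| ^ p := by
    intro r hr
    have hrb := Rows_bounds m r hr
    have hr1 : (1:ℝ) ≤ (r:ℝ) := by exact_mod_cast hrb.1
    have hr2 : (r:ℝ) ≤ 5 ^ m := by exact_mod_cast hrb.2
    apply chain_bound hp1 (by omega) (fun j => f (cube 2 (m+1) (nidx r j)))
    · apply hf1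
      rw [mem_Sm_iff]
      refine ⟨good_mem (hgood r hr 0 (by omega)), Qone 2, mem_singleton _, ?_⟩
      rw [Qone_eq]
      have : nidx r 0 = ix (5 ^ m) r := by simp only [hnidx, Nat.add_zero]
      rw [this]
      apply cube_subset_cube_ix <;> constructor <;> push_cast <;> nlinarith [hr1, hr2, h5mR]
    · apply hf2
      rw [mem_Sm_iff]
      refine ⟨good_mem (hgood r hr K le_rfl), cube 2 1 (ix 3 1), c31_mem_GamC1, ?_⟩
      have : nidx r K = ix (2 * 5 ^ m + 1) r := by
        have h1 : 5 ^ m + K = 2 * 5 ^ m + 1 := by omega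
        simp only [hnidx, h1]
      rw [this]
      apply cube_subset_cube_ix <;> constructor <;> push_cast <;> nlinarith [hr1, hr2, h5mR]
  have htotal : (2:ℝ) ^ m * ((K:ℕ):ℝ) ^ ((1:ℝ) - p) ≤
      ∑ q ∈ (Rows m) ×ˢ (Finset.range K),
        |f (cube 2 (m+1) (nidx q.1 q.2)) - f (cube 2 (m+1) (nidx q.1 (q.2+1)))| ^ p := by
    rw [Finset.sum_product]
    calc (2:ℝ) ^ m * ((K:ℕ):ℝ) ^ ((1:ℝ) - p)
        = ∑ _r ∈ Rows m, ((K:ℕ):ℝ) ^ ((1:ℝ) - p) := by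
          rw [Finset.sum_const, Rows_card, nsmul_eq_mul]
          push_cast
          ring
      _ ≤ _ := Finset.sum_le_sum hchain
  calc (2:ℝ) ^ m * ((5 ^ m + 1 : ℕ) : ℝ) ^ ((1:ℝ) - p)
      = (2:ℝ) ^ m * ((K:ℕ):ℝ) ^ ((1:ℝ) - p) := by rw [hK]
    _ ≤ _ := htotal
    _ = ∑ e ∈ s, |f (cube 2 (m+1) e.1) - f (cube 2 (m+1) e.2)| ^ p := hsum.symm
    _ ≤ energy 2 (m+1) p f := energy_ge (m+1) p f s hmem hswap

/-! ## conductance-level bounds -/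

lemma den_lower (m : ℕ) (p : ℝ) (hp1 : 1 < p) :
    ((5 ^ m + 1 : ℕ) : ℝ) ^ ((1:ℝ) - p) ≤
      conduct 2 1 m p {Qtwo 2} (GamC 2 1 (Qtwo 2)) := by
  rw [conduct_eq]
  apply le_csInf (conduct_set_nonempty m p (Qtwo 2))
  rintro e ⟨f, hf1, hf2, rfl⟩
  exact den_energy_lower m p hp1 f hf1 hf2

lemma den_pos (m : ℕ) (p : ℝ) (hp1 : 1 < p) :
    0 < conduct 2 1 m p {Qtwo 2} (GamC 2 1 (Qtwo 2)) := by
  refine lt_of_lt_of_le ?_ (den_lower m p hp1)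
  apply Real.rpow_pos_of_pos
  positivity

lemma num_lower (m : ℕ) (p : ℝ) (hp1 : 1 < p) :
    (2:ℝ) ^ m * ((5 ^ m + 1 : ℕ) : ℝ) ^ ((1:ℝ) - p) ≤
      conduct 2 1 m p {Qone 2} (GamC 2 1 (Qone 2)) := by
  rw [conduct_eq]
  apply le_csInf (conduct_set_nonempty m p (Qone 2))
  rintro e ⟨f, hf1, hf2, rfl⟩
  exact num_energy_lower m p hp1 f hf1 hf2

end S6
end

open Filter in
/-- For `1 < p < log 10 / log 5`, the ratio of the conductances of the corner cube and the
center cube of `F⁽²⁾` tends to infinity. -/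
theorem statement6 (p : ℝ) (hp1 : 1 < p) (hp2 : p < Real.log 10 / Real.log 5) :
    Tendsto (fun m : ℕ =>
      conduct 2 1 m p {Qone 2} (GamC 2 1 (Qone 2)) /
        conduct 2 1 m p {Qtwo 2} (GamC 2 1 (Qtwo 2))) atTop atTop := by
  have hp0 : (0:ℝ) < p := lt_trans one_pos hp1
  set A : ℝ := (5:ℝ) ^ ((1:ℝ) - p) with hA
  have hApos : 0 < A := Real.rpow_pos_of_pos (by norm_num) _
  set q : ℝ := 2 * A with hq
  have hlog5 : (0:ℝ) < Real.log 5 := Real.log_pos (by norm_num)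
  have hq1 : 1 < q := by
    have hplog : p * Real.log 5 < Real.log 10 := (lt_div_iff₀ hlog5).1 hp2
    have h10 : Real.log 10 = Real.log 2 + Real.log 5 := by
      rw [← Real.log_mul (by norm_num) (by norm_num)]
      norm_num
    have hA' : A = Real.exp (Real.log 5 * ((1:ℝ) - p)) :=
      Real.rpow_def_of_pos (by norm_num) _
    have hhalf : Real.exp (Real.log (1/2)) < Real.exp (Real.log 5 * ((1:ℝ) - p)) := by
      apply Real.exp_lt_exp.2
      have hl2 : Real.log (1/2) = - Real.log 2 := by
        rw [one_div, Real.log_inv]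
      rw [hl2]
      nlinarith
    rw [Real.exp_log (by norm_num : (0:ℝ) < 1/2)] at hhalf
    rw [hq, hA']
    linarith
  have hlow : ∀ m : ℕ, A / 4 * q ^ m ≤
      conduct 2 1 m p {Qone 2} (GamC 2 1 (Qone 2)) /
        conduct 2 1 m p {Qtwo 2} (GamC 2 1 (Qtwo 2)) := by
    intro m
    have hD0 := S6.den_pos m p hp1
    have hD4 := S6.den_upper m p hp0
    have hN := S6.num_lower m p hp1
    -- A / 4 * q ^ m ≤ N / 4 ≤ N / D
    have hc : A * q ^ m ≤ (2:ℝ) ^ m * ((5 ^ m + 1 : ℕ) : ℝ) ^ ((1:ℝ) - p) := by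
      have hqm : q ^ m = 2 ^ m * A ^ m := by
        rw [hq, mul_pow]
      have hstep : A * A ^ m = ((5 ^ (m+1) : ℕ) : ℝ) ^ ((1:ℝ) - p) := by
        rw [hA, ← Real.rpow_natCast ((5:ℝ) ^ ((1:ℝ) - p)) m,
          ← Real.rpow_mul (by norm_num : (0:ℝ) ≤ 5), ← Real.rpow_add (by norm_num : (0:ℝ) < 5)]
        push_cast
        rw [← Real.rpow_natCast (5:ℝ) (m+1), ← Real.rpow_mul (by norm_num : (0:ℝ) ≤ 5)]
        push_cast
        ring_nf
      have hanti : ((5 ^ (m+1) : ℕ) : ℝ) ^ ((1:ℝ) - p) ≤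
          ((5 ^ m + 1 : ℕ) : ℝ) ^ ((1:ℝ) - p) := by
        apply Real.rpow_le_rpow_of_nonpos
        · positivity
        · have h5m : 1 ≤ 5 ^ m := Nat.one_le_pow m 5 (by norm_num)
          have : (5:ℕ) ^ m + 1 ≤ 5 ^ (m+1) := by
            have : 5 ^ (m+1) = 5 * 5 ^ m := by ring
            omega
          exact_mod_cast this
        · linarith
      calc A * q ^ m = 2 ^ m * (A * A ^ m) := by rw [hqm]; ring
        _ = 2 ^ m * ((5 ^ (m+1) : ℕ) : ℝ) ^ ((1:ℝ) - p) := by rw [hstep]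
        _ ≤ 2 ^ m * ((5 ^ m + 1 : ℕ) : ℝ) ^ ((1:ℝ) - p) := by
            apply mul_le_mul_of_nonneg_left hanti (by positivity)
    have hN0 : 0 ≤ conduct 2 1 m p {Qone 2} (GamC 2 1 (Qone 2)) := by
      refine le_trans ?_ hN
      positivity
    have hstep2 : conduct 2 1 m p {Qone 2} (GamC 2 1 (Qone 2)) / 4 ≤
        conduct 2 1 m p {Qone 2} (GamC 2 1 (Qone 2)) /
          conduct 2 1 m p {Qtwo 2} (GamC 2 1 (Qtwo 2)) :=
      div_le_div_of_nonneg_left hN0 hD0 hD4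
    calc A / 4 * q ^ m = (A * q ^ m) / 4 := by ring
      _ ≤ conduct 2 1 m p {Qone 2} (GamC 2 1 (Qone 2)) / 4 := by
          apply div_le_div_of_nonneg_right ?_ (by norm_num)
          exact le_trans hc hN
      _ ≤ _ := hstep2
  apply tendsto_atTop_mono hlow
  apply Tendsto.const_mul_atTop (by positivity : (0:ℝ) < A / 4)
  exact tendsto_pow_atTop_atTop_of_one_lt hq1
end

section
/- Let d = 3, Q_1 = [0,1/5]^3 and Q_2 = [2/5,3/5]^3, both elements of Q_1^(3)(F^(3)). For every real p with 1 < p < log 16 / log 5, the ratio E_{p,m}(Q_1, Γ(Q_1)^c) / E_{p,m}(Q_2, Γ(Q_2)^c) tends to +∞ as m → ∞. -/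
open Set MeasureTheory Filter
open scoped Classical

namespace S7
open Finset

noncomputable section

lemma pw_pos (N : ℕ) : (0:ℝ) < 5 ^ N := by positivity

/-- the canonical interior point of a cube -/
def pt (N : ℕ) (l : Fin 3 → ℕ) : Pt 3 := WithLp.toLp 2 (fun i => ((l i : ℝ) - 3/4) / 5 ^ N)

lemma pt_apply (N : ℕ) (l : Fin 3 → ℕ) (i : Fin 3) :
    pt N l i = ((l i : ℝ) - 3/4) / 5 ^ N := rfl

lemma mem_cube {N : ℕ} {l : Fin 3 → ℕ} {x : Pt 3} :
    x ∈ cube 3 N l ↔ ∀ i, ((l i : ℝ) - 1) / 5 ^ N ≤ x i ∧ x i ≤ (l i : ℝ) / 5 ^ N := Iff.rfl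

def openBox (N : ℕ) (l : Fin 3 → ℕ) : Set (Pt 3) :=
  {x | ∀ i, ((l i : ℝ) - 1) / 5 ^ N < x i ∧ x i < (l i : ℝ) / 5 ^ N}

lemma proj_continuous (i : Fin 3) : Continuous fun x : Pt 3 => x i :=
  (continuous_apply i).comp (PiLp.continuousLinearEquiv 2 ℝ (fun _ : Fin 3 => ℝ)).continuous

lemma isOpen_openBox (N : ℕ) (l : Fin 3 → ℕ) : IsOpen (openBox N l) := by
  have : openBox N l =
      ⋂ i, (fun x : Pt 3 => x i) ⁻¹' (Ioo (((l i : ℝ) - 1) / 5 ^ N) ((l i : ℝ) / 5 ^ N)) := by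
    ext x; simp [openBox, Set.mem_Ioo]
  rw [this]
  exact isOpen_iInter_of_finite fun i => isOpen_Ioo.preimage (proj_continuous i)

lemma openBox_subset_cube (N : ℕ) (l : Fin 3 → ℕ) : openBox N l ⊆ cube 3 N l :=
  fun x hx => fun i => ⟨(hx i).1.le, (hx i).2.le⟩

lemma openBox_subset_interior (N : ℕ) (l : Fin 3 → ℕ) :
    openBox N l ⊆ interior (cube 3 N l) :=
  interior_maximal (openBox_subset_cube N l) (isOpen_openBox N l)

lemma pt_mem_openBox (N : ℕ) (l : Fin 3 → ℕ) : pt N l ∈ openBox N l := by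
  intro i
  have h5 := pw_pos N
  constructor
  · rw [pt_apply]; apply div_lt_div_of_pos_right (by linarith) h5
  · rw [pt_apply]; apply div_lt_div_of_pos_right (by linarith) h5

lemma pt_mem_cube (N : ℕ) (l : Fin 3 → ℕ) : pt N l ∈ cube 3 N l :=
  openBox_subset_cube N l (pt_mem_openBox N l)

lemma interior_subset_openBox (N : ℕ) (l : Fin 3 → ℕ) :
    interior (cube 3 N l) ⊆ openBox N l := by
  intro x hx
  obtain ⟨ε, hε, hball⟩ := Metric.isOpen_iff.1 isOpen_interior x hx
  have hsub : Metric.ball x ε ⊆ cube 3 N l := hball.trans interior_subset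
  intro i
  have key : ∀ c : ℝ, |c| < ε → ((l i : ℝ) - 1) / 5 ^ N ≤ x i + c ∧ x i + c ≤ (l i : ℝ) / 5 ^ N := by
    intro c hc
    have hmem : x + c • EuclideanSpace.single i (1:ℝ) ∈ Metric.ball x ε := by
      rw [Metric.mem_ball, dist_eq_norm]
      simpa [norm_smul] using hc
    have := (hsub hmem) i
    simpa using this
  have h1 := key (-(ε/2)) (by rw [abs_neg, abs_of_pos (by linarith)]; linarith)
  have h2 := key (ε/2) (by rw [abs_of_pos (by linarith)]; linarith)
  constructor
  · have := h1.1; linarith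
  · have := h2.2; linarith

lemma cube_injective {N : ℕ} {l l' : Fin 3 → ℕ} (h : cube 3 N l = cube 3 N l') : l = l' := by
  funext i
  have h1 := (mem_cube.1 (h ▸ pt_mem_cube N l)) i
  rw [pt_apply] at h1
  have h5 := pw_pos N
  have hle1 : ((l' i : ℝ) - 1) ≤ (l i : ℝ) - 3/4 := by
    have := h1.1
    rwa [div_le_div_iff_of_pos_right h5] at this
  have hle2 : ((l i : ℝ) - 3/4) ≤ (l' i : ℝ) := by
    have := h1.2
    rwa [div_le_div_iff_of_pos_right h5] at this
  have : (l i : ℝ) = (l' i : ℝ) := by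
    have a1 : ((l' i : ℝ)) ≤ (l i : ℝ) := by
      by_contra hcon
      push_neg at hcon
      have : (l i : ℝ) + 1 ≤ l' i := by exact_mod_cast Nat.succ_le_of_lt (by exact_mod_cast hcon)
      linarith
    have a2 : ((l i : ℝ)) ≤ (l' i : ℝ) := by
      by_contra hcon
      push_neg at hcon
      have : (l' i : ℝ) + 1 ≤ l i := by exact_mod_cast Nat.succ_le_of_lt (by exact_mod_cast hcon)
      linarith
    linarith
  exact_mod_cast this

end
end S7
namespace S7
open Finset
noncomputable section

/-- removed digit patterns -/
def Bad (t : Fin 3 → ℕ) : Prop := ∃ i, (t i = 1 ∨ t i = 3) ∧ ∀ j, j ≠ i → t j = 2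

def topd (N : ℕ) (l : Fin 3 → ℕ) : Fin 3 → ℕ := fun i => (l i - 1) / 5 ^ N
def restd (N : ℕ) (l : Fin 3 → ℕ) : Fin 3 → ℕ := fun i => (l i - 1) % 5 ^ N + 1

def Good : ℕ → (Fin 3 → ℕ) → Prop
  | 0, _ => True
  | (N+1), l => ¬ Bad (topd N l) ∧ Good N (restd N l)

lemma pt_mem_F0 {N : ℕ} {l : Fin 3 → ℕ} (hb : ∀ i, 1 ≤ l i ∧ l i ≤ 5 ^ N) :
    pt N l ∈ F0 3 := by
  intro i
  have h5 := pw_pos N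
  have h1 : (1:ℝ) ≤ l i := by exact_mod_cast (hb i).1
  have h2 : (l i : ℝ) ≤ 5 ^ N := by exact_mod_cast (hb i).2
  rw [pt_apply]
  constructor
  · apply div_nonneg (by linarith) h5.le
  · rw [div_le_one h5]; linarith

/-- the canonical point lies strictly inside the level-1 subinterval given by the top digit -/
lemma pt_digit_bounds {N : ℕ} {l : Fin 3 → ℕ} (hb : ∀ i, 1 ≤ l i ∧ l i ≤ 5 ^ (N+1)) (i : Fin 3) :
    ((topd N l i : ℝ)) / 5 < pt (N+1) l i ∧ pt (N+1) l i < ((topd N l i : ℝ) + 1) / 5 := by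
  have h5 : (0:ℝ) < 5 ^ N := pw_pos N
  have h5' : (0:ℝ) < 5 ^ (N+1) := pw_pos (N+1)
  set e : ℕ := (l i - 1) / 5 ^ N with he
  set r : ℕ := (l i - 1) % 5 ^ N with hr
  have hdm : e * 5 ^ N + r = l i - 1 := by
    rw [he, hr]; rw [Nat.div_add_mod']
  have hrlt : r < 5 ^ N := Nat.mod_lt _ (by positivity)
  have hcast : (l i : ℝ) = e * 5 ^ N + r + 1 := by
    have h1 : 1 ≤ l i := (hb i).1
    have : (l i - 1 : ℕ) = e * 5 ^ N + r := hdm.symm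
    have := congrArg (fun t : ℕ => (t : ℝ)) this
    push_cast at this
    have hc : ((l i : ℝ) - 1) = e * 5 ^ N + r := by
      rw [← this]
      have : (1:ℝ) ≤ l i := by exact_mod_cast h1
      push_cast [Nat.cast_sub h1]
      ring
    linarith
  have hrR : (r : ℝ) ≤ 5 ^ N - 1 := by
    have : (r : ℝ) < 5 ^ N := by exact_mod_cast hrlt
    have : (r:ℝ) + 1 ≤ 5 ^ N := by
      have := Nat.succ_le_of_lt hrlt
      exact_mod_cast this
    linarith
  have hpow : (5:ℝ) ^ (N+1) = 5 ^ N * 5 := by ring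
  rw [pt_apply, hcast]
  have hte : topd N l i = e := rfl
  rw [hte]
  constructor
  · rw [div_lt_div_iff₀ (by norm_num) h5', hpow]
    have : (0:ℝ) ≤ r := by positivity
    nlinarith
  · rw [div_lt_div_iff₀ h5' (by norm_num), hpow]
    nlinarith

lemma pt_mem_F1 : ∀ {N : ℕ} {l : Fin 3 → ℕ}, (∀ i, 1 ≤ l i ∧ l i ≤ 5 ^ N) → Good N l →
    pt N l ∈ F1 3 := by
  intro N l hb hg
  constructor
  · exact pt_mem_F0 hb
  · intro hmem
    simp only [Set.mem_iUnion, Set.mem_setOf_eq] at hmem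
    obtain ⟨i, hlt, hmid, hgt⟩ := hmem
    -- there are two other indices; get j ≠ i with pt j ∈ Ioo 2/5 3/5
    have hothers : ∀ j, j ≠ i → pt N l j ∈ Set.Ioo (2/5 : ℝ) (3/5) := by
      intro j hj
      rcases lt_or_gt_of_ne (by exact fun h => hj h : j ≠ i) with h | h
      · exact hlt j h
      · exact hgt j h
    obtain ⟨j, hj⟩ : ∃ j : Fin 3, j ≠ i := by
      by_contra hcon
      push_neg at hcon
      have h01 : (0 : Fin 3) = i := hcon 0
      have h11 : (1 : Fin 3) = i := hcon 1
      rw [← h01] at h11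
      exact absurd h11 (by decide)
    match N, hg with
    | 0, _ =>
      -- all l k = 1, pt = 1/4 everywhere
      have hl : l j = 1 := le_antisymm (by simpa using (hb j).2) (hb j).1
      have := (hothers j hj).1
      rw [pt_apply, hl] at this
      norm_num at this
    | (M+1), hg =>
      -- digit analysis
      have hdig : ∀ k : Fin 3, ∀ c : ℕ, pt (M+1) l k ∈ Set.Ioo ((c:ℝ)/5) ((c+1)/5) →
          topd M l k = c := by
        intro k c hk
        have hbd := pt_digit_bounds hb k
        have h1 : ((topd M l k : ℝ)) / 5 < ((c:ℝ)+1)/5 := lt_trans hbd.1 hk.2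
        have h2 : ((c:ℝ))/5 < ((topd M l k : ℝ) + 1)/5 := lt_trans hk.1 hbd.2
        have e1 : (topd M l k : ℝ) < c + 1 := by
          have := (div_lt_div_iff_of_pos_right (by norm_num : (0:ℝ) < 5)).1 h1
          linarith
        have e2 : (c : ℝ) < topd M l k + 1 := by
          have := (div_lt_div_iff_of_pos_right (by norm_num : (0:ℝ) < 5)).1 h2
          linarith
        have : topd M l k < c + 1 := by exact_mod_cast e1
        have : topd M l k ≤ c := Nat.lt_succ_iff.1 this
        have h2' : c < topd M l k + 1 := by exact_mod_cast e2
        omega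
      apply hg.1
      refine ⟨i, ?_, ?_⟩
      · rcases hmid with h | h
        · left
          exact hdig i 1 (by norm_num at h ⊢; exact h)
        · right
          exact hdig i 3 (by norm_num at h ⊢; exact h)
      · intro k hk
        have := hothers k hk
        exact hdig k 2 (by norm_num at this ⊢; exact this)

end
end S7
namespace S7
open Finset
noncomputable section

lemma l_cast (M a : ℕ) (h1 : 1 ≤ a) :
    (a : ℝ) = (((a-1)/5^M : ℕ) : ℝ) * 5^M + (((a-1)%5^M : ℕ) : ℝ) + 1 := by
  have hdm : ((a-1)/5^M) * 5^M + (a-1)%5^M = a - 1 := Nat.div_add_mod' _ _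
  have := congrArg (fun t : ℕ => (t : ℝ)) hdm
  push_cast [Nat.cast_sub h1] at this
  linarith

lemma good_decomp {M : ℕ} {l : Fin 3 → ℕ} (hg : Good (M+1) l) :
    ¬ Bad (topd M l) ∧ Good M (restd M l) := hg

lemma cube_mem_QcolOf_F1 {l₀ : Fin 3 → ℕ} (hb : ∀ i, 1 ≤ l₀ i ∧ l₀ i ≤ 5)
    (hg : Good 1 l₀) : cube 3 1 l₀ ∈ QcolOf 3 1 (F1 3) := by
  have hb' : ∀ i, 1 ≤ l₀ i ∧ l₀ i ≤ 5 ^ 1 := by simpa using hb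
  exact ⟨⟨l₀, hb', rfl⟩,
    ⟨pt 1 l₀, openBox_subset_interior 1 l₀ (pt_mem_openBox 1 l₀), pt_mem_F1 hb' hg⟩⟩

lemma not_bad_one : ¬ Bad (fun _ : Fin 3 => 1) := by
  rintro ⟨i, -, hj⟩
  obtain ⟨j, hj'⟩ : ∃ j : Fin 3, j ≠ i := by
    by_contra hcon
    push_neg at hcon
    have h01 : (0 : Fin 3) = i := hcon 0
    have h11 : (1 : Fin 3) = i := hcon 1
    rw [← h01] at h11
    exact absurd h11 (by decide)
  exact absurd (hj j hj') (by norm_num)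

lemma pt_mem_Fn : ∀ (n N : ℕ) (l : Fin 3 → ℕ), (∀ i, 1 ≤ l i ∧ l i ≤ 5 ^ N) → Good N l →
    pt N l ∈ Fn 3 n := by
  intro n
  induction n using Nat.strong_induction_on with
  | _ n ih =>
    match n with
    | 0 => exact fun N l hb _ => pt_mem_F0 hb
    | 1 => exact fun N l hb hg => pt_mem_F1 hb hg
    | (n+2) =>
      intro N l hb hg
      show pt N l ∈ Fn 3 (n+2)
      have hFn : Fn 3 (n+2) =
          ⋃ l₀ ∈ {l₀ : Fin 3 → ℕ | cube 3 1 l₀ ∈ QcolOf 3 1 (F1 3)},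
            psi 3 1 l₀ '' Fn 3 (n+1) := rfl
      rw [hFn]
      match N with
      | 0 =>
        have hl : ∀ i, l i = 1 := fun i => le_antisymm (by simpa using (hb i).2) (hb i).1
        have hQ : cube 3 1 (fun _ : Fin 3 => 2) ∈ QcolOf 3 1 (F1 3) := by
          apply cube_mem_QcolOf_F1 (fun i => by norm_num)
          constructor
          · have ht : topd 0 (fun _ : Fin 3 => 2) = fun _ => 1 := by
              funext i; simp [topd]
            rw [ht]; exact not_bad_one
          · trivial
        have him : pt 0 l ∈ psi 3 1 (fun _ : Fin 3 => 2) '' Fn 3 (n+1) := by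
          refine ⟨pt 0 l, ih (n+1) (by omega) 0 l hb trivial, ?_⟩
          ext i
          simp only [psi, pt_apply, hl i, PiLp.toLp_apply]
          norm_num
        exact Set.mem_biUnion (show (fun _ : Fin 3 => 2) ∈ {l₀ : Fin 3 → ℕ | cube 3 1 l₀ ∈ QcolOf 3 1 (F1 3)} from hQ) him
      | (M+1) =>
        have hg' := good_decomp hg
        set e : Fin 3 → ℕ := topd M l with he
        set l' : Fin 3 → ℕ := restd M l with hl'
        have hbe : ∀ i, e i + 1 ≤ 5 := by
          intro i
          have : (l i - 1) / 5 ^ M < 5 := by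
            rw [Nat.div_lt_iff_lt_mul (by positivity)]
            have := (hb i).2
            have h1 := (hb i).1
            have : l i - 1 < 5 ^ (M+1) := by omega
            calc l i - 1 < 5 ^ (M+1) := this
            _ = 5 * 5 ^ M := by ring
          have hei : e i = (l i - 1) / 5 ^ M := rfl
          omega
        have hbl' : ∀ i, 1 ≤ l' i ∧ l' i ≤ 5 ^ M := by
          intro i
          have : (l i - 1) % 5 ^ M < 5 ^ M := Nat.mod_lt _ (by positivity)
          constructor
          · simp [hl', restd]
          · simp only [hl', restd]; omega
        have hQ : cube 3 1 (fun i => e i + 1) ∈ QcolOf 3 1 (F1 3) := by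
          apply cube_mem_QcolOf_F1 (fun i => ⟨by omega, hbe i⟩)
          constructor
          · have ht : topd 0 (fun i => e i + 1) = e := by
              funext i; simp [topd]
            rw [ht]; exact hg'.1
          · trivial
        apply Set.mem_biUnion (show (fun i => e i + 1) ∈ {l₀ : Fin 3 → ℕ | cube 3 1 l₀ ∈ QcolOf 3 1 (F1 3)} from hQ)
        refine ⟨pt M l', ih (n+1) (by omega) M l' hbl' hg'.2, ?_⟩
        ext i
        simp only [psi, pt_apply, PiLp.toLp_apply]
        have hc := l_cast M (l i) (hb i).1
        have hre : (l' i : ℝ) = (((l i - 1) % 5 ^ M : ℕ) : ℝ) + 1 := by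
          simp [hl', restd]
        push_cast at hc hre ⊢
        rw [hre]
        have h5 : (0:ℝ) < 5 ^ M := pw_pos M
        have hE : (5:ℝ) ^ (M+1) = 5 ^ M * 5 := by ring
        rw [hc, hE]
        have het : ((e i : ℕ) : ℝ) = (((l i - 1) / 5 ^ M : ℕ) : ℝ) := by rw [he]; rfl
        push_cast at het
        rw [het]
        field_simp
        ring

lemma pt_mem_Fset {N : ℕ} {l : Fin 3 → ℕ} (hb : ∀ i, 1 ≤ l i ∧ l i ≤ 5 ^ N)
    (hg : Good N l) : pt N l ∈ Fset 3 :=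
  Set.mem_iInter.2 fun n => pt_mem_Fn n N l hb hg

lemma cube_mem_QcolOf {N : ℕ} {l : Fin 3 → ℕ} (hb : ∀ i, 1 ≤ l i ∧ l i ≤ 5 ^ N)
    (hg : Good N l) : cube 3 N l ∈ QcolOf 3 N (Fset 3) :=
  ⟨⟨l, hb, rfl⟩,
    ⟨pt N l, openBox_subset_interior N l (pt_mem_openBox N l), pt_mem_Fset hb hg⟩⟩

end
end S7
namespace S7
open Finset
noncomputable section

def NoTwo (u : ℕ) : Prop := ∀ j, u / 5^j % 5 ≠ 2
def NoOdd (w : ℕ) : Prop := ∀ j, w / 5^j % 5 ≠ 1 ∧ w / 5^j % 5 ≠ 3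

lemma dig_mod {M j : ℕ} (u : ℕ) (hj : j < M) : (u % 5^M) / 5^j % 5 = u / 5^j % 5 := by
  have h1 : (5:ℕ)^M = 5^j * 5^(M-j) := by rw [← pow_add]; congr 1; omega
  rw [h1, Nat.mod_mul_right_div_self]
  have h2 : (5:ℕ) ∣ 5^(M-j) := dvd_pow_self 5 (by omega)
  rw [Nat.mod_mod_of_dvd _ h2]

lemma NoTwo_mod {u : ℕ} (h : NoTwo u) (M : ℕ) : NoTwo (u % 5^M) := by
  intro j
  rcases lt_or_ge j M with hj | hj
  · rw [dig_mod u hj]; exact h j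
  · have : u % 5^M < 5^j := lt_of_lt_of_le (Nat.mod_lt _ (by positivity)) (Nat.pow_le_pow_right (by norm_num) hj)
    rw [Nat.div_eq_of_lt this]
    norm_num

lemma NoOdd_mod {u : ℕ} (h : NoOdd u) (M : ℕ) : NoOdd (u % 5^M) := by
  intro j
  rcases lt_or_ge j M with hj | hj
  · rw [dig_mod u hj]; exact h j
  · have : u % 5^M < 5^j := lt_of_lt_of_le (Nat.mod_lt _ (by positivity)) (Nat.pow_le_pow_right (by norm_num) hj)
    rw [Nat.div_eq_of_lt this]
    norm_num

lemma col_good (N : ℕ) : ∀ (u v t : ℕ), NoTwo u → NoTwo v → Good N ![u+1, v+1, t] := by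
  induction N with
  | zero => intro u v t _ _; trivial
  | succ N ih =>
    intro u v t hu hv
    constructor
    · rintro ⟨i, hi, ho⟩
      fin_cases i
      · have h2 : topd N ![u+1, v+1, t] 1 = 2 := ho 1 (by decide)
        have : v / 5^N = 2 := by simpa [topd] using h2
        exact hv N (by rw [this])
      · have h2 : topd N ![u+1, v+1, t] 0 = 2 := ho 0 (by decide)
        have : u / 5^N = 2 := by simpa [topd] using h2
        exact hu N (by rw [this])
      · have h2 : topd N ![u+1, v+1, t] 0 = 2 := ho 0 (by decide)
        have : u / 5^N = 2 := by simpa [topd] using h2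
        exact hu N (by rw [this])
    · have hre : restd N ![u+1, v+1, t] = ![u % 5^N + 1, v % 5^N + 1, (t-1) % 5^N + 1] := by
        funext i
        fin_cases i <;> simp [restd]
      rw [hre]
      exact ih (u % 5^N) (v % 5^N) ((t-1) % 5^N + 1) (NoTwo_mod hu N) (NoTwo_mod hv N)

lemma diag_good (N : ℕ) : ∀ (k c : ℕ), NoOdd (c - 1) → Good N ![k, k, c] := by
  induction N with
  | zero => intro k c _; trivial
  | succ N ih =>
    intro k c hc
    constructor
    · rintro ⟨i, hi, ho⟩
      fin_cases i
      · have h2 : topd N ![k, k, c] 1 = 2 := ho 1 (by decide)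
        simp [topd] at h2 hi
        omega
      · have h2 : topd N ![k, k, c] 0 = 2 := ho 0 (by decide)
        simp [topd] at h2 hi
        omega
      · simp [topd] at hi
        rcases hi with h | h
        · exact (hc N).1 (by rw [h])
        · exact (hc N).2 (by rw [h])
    · have hre : restd N ![k, k, c] = ![(k-1) % 5^N + 1, (k-1) % 5^N + 1, (c-1) % 5^N + 1] := by
        funext i
        fin_cases i <;> simp [restd]
      rw [hre]
      have : ((c-1) % 5^N + 1) - 1 = (c - 1) % 5^N := by omega
      exact ih _ _ (by rw [this]; exact NoOdd_mod hc N)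

lemma NoOdd_c (m : ℕ) : NoOdd (2 * 5^m) := by
  intro j
  rcases le_or_gt j m with hj | hj
  · have h1 : (2:ℕ) * 5^m = 2 * 5^(m-j) * 5^j := by rw [mul_assoc, ← pow_add]; congr 2; omega
    rw [h1, Nat.mul_div_cancel _ (by positivity)]
    rcases Nat.eq_zero_or_pos (m - j) with h | h
    · rw [h]; norm_num
    · have hdvd : (5:ℕ) ∣ 2 * 5^(m-j) := Dvd.dvd.mul_left (dvd_pow_self 5 (by omega)) 2
      have : 2 * 5^(m-j) % 5 = 0 := Nat.eq_zero_of_dvd_of_lt hdvd |> fun _ => Nat.mod_eq_zero_of_dvd hdvd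
      omega
  · have : 2 * 5^m < 5^j := by
      have hp : 0 < (5:ℕ)^m := by positivity
      calc 2 * 5^m < 5 * 5^m := by omega
      _ = 5^(m+1) := by ring
      _ ≤ 5^j := Nat.pow_le_pow_right (by norm_num) (by omega)
    rw [Nat.div_eq_of_lt this]
    norm_num

end
end S7
namespace S7
open Finset
noncomputable section

def D : ℕ → Finset ℕ
  | 0 => {0}
  | (m+1) => (D m).biUnion fun u => {5*u, 5*u+1, 5*u+3, 5*u+4}

lemma D_lt : ∀ m, ∀ u ∈ D m, u < 5^m := by
  intro m
  induction m with
  | zero => intro u hu; simp [D] at hu; omega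
  | succ m ih =>
    intro u hu
    simp only [D, Finset.mem_biUnion] at hu
    obtain ⟨v, hv, huv⟩ := hu
    have := ih v hv
    have h5 : (5:ℕ)^(m+1) = 5 * 5^m := by ring
    simp only [Finset.mem_insert, Finset.mem_singleton] at huv
    rcases huv with h|h|h|h <;> omega

lemma D_noTwo : ∀ m, ∀ u ∈ D m, NoTwo u := by
  intro m
  induction m with
  | zero =>
    intro u hu j
    simp [D] at hu
    subst hu
    simp
  | succ m ih =>
    intro u hu j
    simp only [D, Finset.mem_biUnion, Finset.mem_insert, Finset.mem_singleton] at hu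
    obtain ⟨v, hv, huv⟩ := hu
    have hdig : u % 5 ≠ 2 ∧ u / 5 = v := by
      rcases huv with h|h|h|h <;> subst h <;> constructor <;> omega
    match j with
    | 0 => simpa using hdig.1
    | (j+1) =>
      have : u / 5^(j+1) = v / 5^j := by
        rw [pow_succ, mul_comm, ← Nat.div_div_eq_div_mul, hdig.2]
      rw [this]
      exact ih v hv j

lemma D_card : ∀ m, (D m).card = 4^m := by
  intro m
  induction m with
  | zero => simp [D]
  | succ m ih =>
    rw [D, Finset.card_biUnion, ]
    · have : ∀ u ∈ D m, ({5*u, 5*u+1, 5*u+3, 5*u+4} : Finset ℕ).card = 4 := by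
        intro u _
        rw [Finset.card_insert_of_notMem (by simp), Finset.card_insert_of_notMem (by simp),
            Finset.card_insert_of_notMem (by simp), Finset.card_singleton]
      rw [Finset.sum_congr rfl this, Finset.sum_const, ih]
      ring
    · intro a ha b hb hab
      simp only [Finset.disjoint_left, Finset.mem_insert, Finset.mem_singleton]
      rintro x (h|h|h|h) (g|g|g|g) <;> omega

end
end S7
namespace S7
open Finset
noncomputable section

lemma pow5_succ_R (m : ℕ) : (5:ℝ)^(1+m) = 5 * 5^m := by rw [pow_add]; ring

lemma cube_subset_Qone {m : ℕ} {l : Fin 3 → ℕ} (h : ∀ i, 1 ≤ l i ∧ l i ≤ 5^m) :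
    cube 3 (1+m) l ⊆ Qone 3 := by
  intro x hx i
  have hx' := mem_cube.1 hx i
  have h5 : (0:ℝ) < 5^(1+m) := pw_pos _
  have h1 : (1:ℝ) ≤ l i := by exact_mod_cast (h i).1
  have h2 : (l i : ℝ) ≤ 5^m := by exact_mod_cast (h i).2
  constructor
  · have : (0:ℝ) ≤ ((l i : ℝ) - 1) / 5^(1+m) := div_nonneg (by linarith) h5.le
    linarith [hx'.1]
  · have : (l i : ℝ) / 5^(1+m) ≤ 1/5 := by
      rw [div_le_div_iff₀ h5 (by norm_num), pow5_succ_R]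
      nlinarith [pw_pos m]
    linarith [hx'.2]

lemma cube_subset_Qtwo {m : ℕ} {l : Fin 3 → ℕ} (h : ∀ i, 2*5^m + 1 ≤ l i ∧ l i ≤ 3*5^m) :
    cube 3 (1+m) l ⊆ Qtwo 3 := by
  intro x hx i
  have hx' := mem_cube.1 hx i
  have h5 : (0:ℝ) < 5^(1+m) := pw_pos _
  have h1 : (2*5^m + 1:ℝ) ≤ l i := by exact_mod_cast (h i).1
  have h2 : (l i : ℝ) ≤ 3*5^m := by exact_mod_cast (h i).2
  constructor
  · have : (2/5 : ℝ) ≤ ((l i : ℝ) - 1) / 5^(1+m) := by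
      rw [div_le_div_iff₀ (by norm_num) h5, pow5_succ_R]
      nlinarith [pw_pos m]
    linarith [hx'.1]
  · have : (l i : ℝ) / 5^(1+m) ≤ 3/5 := by
      rw [div_le_div_iff₀ h5 (by norm_num), pow5_succ_R]
      nlinarith [pw_pos m]
    linarith [hx'.2]

lemma cube_subset_Qtwo_conv {m : ℕ} {l : Fin 3 → ℕ} (hb : ∀ i, 1 ≤ l i)
    (h : cube 3 (1+m) l ⊆ Qtwo 3) : ∀ i, 2*5^m + 1 ≤ l i ∧ l i ≤ 3*5^m := by
  intro i
  have hpt := h (pt_mem_cube (1+m) l) i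
  rw [pt_apply] at hpt
  have h5 : (0:ℝ) < 5^(1+m) := pw_pos _
  have hlow : (2*5^m : ℝ) < l i := by
    have := hpt.1
    rw [div_le_div_iff₀ (by norm_num) h5, pow5_succ_R] at this
    nlinarith [pw_pos m]
  have hhigh : (l i : ℝ) < 3*5^m + 1 := by
    have := hpt.2
    rw [div_le_div_iff₀ h5 (by norm_num), pow5_succ_R] at this
    nlinarith [pw_pos m]
  constructor
  · have : (2*5^m : ℕ) < l i := by exact_mod_cast hlow
    omega
  · have : l i < 3*5^m + 1 := by exact_mod_cast hhigh
    omega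

lemma cube_subset_113 {m : ℕ} {l : Fin 3 → ℕ} (h0 : ∀ i, 1 ≤ l i)
    (h1 : l 0 ≤ 5^m) (h2 : l 1 ≤ 5^m) (h3 : 2*5^m + 1 ≤ l 2 ∧ l 2 ≤ 3*5^m) :
    cube 3 (1+m) l ⊆ cube 3 1 ![1,1,3] := by
  intro x hx
  have h5 : (0:ℝ) < 5^(1+m) := pw_pos _
  intro i
  fin_cases i
  · have hx' := mem_cube.1 hx 0
    have ha : (1:ℝ) ≤ l 0 := by exact_mod_cast h0 0
    have hbb : (l 0 : ℝ) ≤ 5^m := by exact_mod_cast h1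
    have e1 : (0:ℝ) ≤ ((l 0 : ℝ) - 1)/5^(1+m) := div_nonneg (by linarith) h5.le
    have e2 : (l 0 : ℝ)/5^(1+m) ≤ 1/5 := by
      rw [div_le_div_iff₀ h5 (by norm_num), pow5_succ_R]
      nlinarith [pw_pos m]
    refine ⟨?_, ?_⟩
    · show (((1:ℕ):ℝ) - 1) / 5^1 ≤ x 0
      push_cast
      norm_num
      calc (0:ℝ) ≤ (↑(l 0) - 1) / 5 ^ (1+m) := e1
      _ ≤ x 0 := hx'.1
    · show x 0 ≤ ((1:ℕ):ℝ) / 5^1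
      push_cast
      norm_num
      linarith [hx'.2]
  · have hx' := mem_cube.1 hx 1
    have ha : (1:ℝ) ≤ l 1 := by exact_mod_cast h0 1
    have hbb : (l 1 : ℝ) ≤ 5^m := by exact_mod_cast h2
    have e1 : (0:ℝ) ≤ ((l 1 : ℝ) - 1)/5^(1+m) := div_nonneg (by linarith) h5.le
    have e2 : (l 1 : ℝ)/5^(1+m) ≤ 1/5 := by
      rw [div_le_div_iff₀ h5 (by norm_num), pow5_succ_R]
      nlinarith [pw_pos m]
    refine ⟨?_, ?_⟩
    · show (((1:ℕ):ℝ) - 1) / 5^1 ≤ x 1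
      push_cast
      norm_num
      calc (0:ℝ) ≤ (↑(l 1) - 1) / 5 ^ (1+m) := e1
      _ ≤ x 1 := hx'.1
    · show x 1 ≤ ((1:ℕ):ℝ) / 5^1
      push_cast
      norm_num
      linarith [hx'.2]
  · have hx' := mem_cube.1 hx 2
    have ha : (2*5^m + 1:ℝ) ≤ l 2 := by exact_mod_cast h3.1
    have hbb : (l 2 : ℝ) ≤ 3*5^m := by exact_mod_cast h3.2
    have e1 : (2/5:ℝ) ≤ ((l 2 : ℝ) - 1)/5^(1+m) := by
      rw [div_le_div_iff₀ (by norm_num) h5, pow5_succ_R]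
      nlinarith [pw_pos m]
    have e2 : (l 2 : ℝ)/5^(1+m) ≤ 3/5 := by
      rw [div_le_div_iff₀ h5 (by norm_num), pow5_succ_R]
      nlinarith [pw_pos m]
    refine ⟨?_, ?_⟩
    · show (((3:ℕ):ℝ) - 1) / 5^1 ≤ x 2
      push_cast
      norm_num
      linarith [hx'.1]
    · show x 2 ≤ ((3:ℕ):ℝ) / 5^1
      push_cast
      norm_num
      linarith [hx'.2]

lemma cubes_touch {N : ℕ} {l l' : Fin 3 → ℕ} (h : ∀ i, l' i ≤ l i + 1 ∧ l i ≤ l' i + 1) :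
    (cube 3 N l ∩ cube 3 N l').Nonempty := by
  have h5 : (0:ℝ) < 5^N := pw_pos N
  refine ⟨(WithLp.toLp 2 (fun i => ((max ((l i : ℝ)) ((l' i : ℝ))) - 1) / 5^N) : Pt 3), ?_, ?_⟩
  · intro i
    simp only [PiLp.toLp_apply]
    have c1 : ((l' i : ℝ)) ≤ (l i : ℝ) + 1 := by exact_mod_cast (h i).1
    have e1 : ((l i : ℝ)) ≤ max ((l i : ℝ)) ((l' i : ℝ)) := le_max_left _ _
    have e2 : max ((l i : ℝ)) ((l' i : ℝ)) ≤ (l i : ℝ) + 1 := max_le (by linarith) c1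
    constructor
    · rw [div_le_div_iff_of_pos_right h5]; linarith
    · rw [div_le_div_iff_of_pos_right h5]; linarith
  · intro i
    simp only [PiLp.toLp_apply]
    have c1 : ((l i : ℝ)) ≤ (l' i : ℝ) + 1 := by exact_mod_cast (h i).2
    have e1 : ((l' i : ℝ)) ≤ max ((l i : ℝ)) ((l' i : ℝ)) := le_max_right _ _
    have e2 : max ((l i : ℝ)) ((l' i : ℝ)) ≤ (l' i : ℝ) + 1 := max_le c1 (by linarith)
    constructor
    · rw [div_le_div_iff_of_pos_right h5]; linarith
    · rw [div_le_div_iff_of_pos_right h5]; linarith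

lemma touch_close {N : ℕ} {l l' : Fin 3 → ℕ}
    (h : (cube 3 N l ∩ cube 3 N l').Nonempty) : ∀ i, l' i ≤ l i + 1 ∧ l i ≤ l' i + 1 := by
  obtain ⟨x, hx, hx'⟩ := h
  intro i
  have h5 : (0:ℝ) < 5^N := pw_pos N
  have a1 := (mem_cube.1 hx i).2
  have a2 := (mem_cube.1 hx' i).1
  have b1 := (mem_cube.1 hx i).1
  have b2 := (mem_cube.1 hx' i).2
  have c1 : ((l' i : ℝ) - 1) ≤ l i := by
    have : ((l' i : ℝ) - 1)/5^N ≤ (l i : ℝ)/5^N := le_trans a2 a1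
    rwa [div_le_div_iff_of_pos_right h5] at this
  have c2 : ((l i : ℝ) - 1) ≤ l' i := by
    have : ((l i : ℝ) - 1)/5^N ≤ (l' i : ℝ)/5^N := le_trans b1 b2
    rwa [div_le_div_iff_of_pos_right h5] at this
  constructor
  · have : (l' i : ℝ) ≤ (l i : ℝ) + 1 := by linarith
    exact_mod_cast this
  · have : (l i : ℝ) ≤ (l' i : ℝ) + 1 := by linarith
    exact_mod_cast this

lemma disj_113_Qone : cube 3 1 ![1,1,3] ∩ Qone 3 = ∅ := by
  ext x
  simp only [Set.mem_inter_iff, Set.mem_empty_iff_false, iff_false]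
  rintro ⟨h1, h2⟩
  have a1 := (mem_cube.1 h1 2).1
  have a2 := (h2 2).2
  have h3 : (![1,1,3] : Fin 3 → ℕ) 2 = 3 := rfl
  rw [h3] at a1
  norm_num at a1
  linarith

lemma disj_113_Qtwo : cube 3 1 ![1,1,3] ∩ Qtwo 3 = ∅ := by
  ext x
  simp only [Set.mem_inter_iff, Set.mem_empty_iff_false, iff_false]
  rintro ⟨h1, h2⟩
  have a1 := (mem_cube.1 h1 0).2
  have a2 := (h2 0).1
  norm_num at a1
  linarith

end
end S7
namespace S7
open Finset
noncomputable section

lemma Fset_sub_F1 : Fset 3 ⊆ F1 3 := fun x hx => Set.mem_iInter.1 hx 1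

lemma not_in_QcolOf_layer {m : ℕ} {l : Fin 3 → ℕ} (i : Fin 3)
    (hi : l i = 2*5^m ∨ l i = 3*5^m + 1)
    (hoth : ∀ j, j ≠ i → 2*5^m + 1 ≤ l j ∧ l j ≤ 3*5^m) :
    cube 3 (1+m) l ∉ QcolOf 3 (1+m) (Fset 3) := by
  rintro ⟨-, x, hxint, hxF⟩
  have hxob := interior_subset_openBox (1+m) l hxint
  have hxF1 := Fset_sub_F1 hxF
  apply hxF1.2
  have h5 : (0:ℝ) < 5^(1+m) := pw_pos _
  have h5m : (0:ℝ) < 5^m := pw_pos m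
  have h1m : (1:ℝ) ≤ 5^m := one_le_pow₀ (by norm_num : (1:ℝ) ≤ 5)
  have hmid : x i ∈ Set.Ioo (1/5 : ℝ) (2/5) ∪ Set.Ioo (3/5 : ℝ) (4/5) := by
    have hx1 := (hxob i).1
    have hx2 := (hxob i).2
    rcases hi with h | h
    · left
      have hc : (l i : ℝ) = 2*5^m := by exact_mod_cast congrArg (fun t : ℕ => (t:ℝ)) h
      constructor
      · have : (1/5 : ℝ) ≤ ((l i : ℝ) - 1)/5^(1+m) := by
          rw [div_le_div_iff₀ (by norm_num) h5, pow5_succ_R, hc]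
          nlinarith
        linarith
      · have : (l i : ℝ)/5^(1+m) ≤ 2/5 := by
          rw [div_le_div_iff₀ h5 (by norm_num), pow5_succ_R, hc]
          nlinarith
        linarith
    · right
      have hc : (l i : ℝ) = 3*5^m + 1 := by exact_mod_cast congrArg (fun t : ℕ => (t:ℝ)) h
      constructor
      · have : (3/5 : ℝ) ≤ ((l i : ℝ) - 1)/5^(1+m) := by
          rw [div_le_div_iff₀ (by norm_num) h5, pow5_succ_R, hc]
          nlinarith
        linarith
      · have : (l i : ℝ)/5^(1+m) ≤ 4/5 := by
          rw [div_le_div_iff₀ h5 (by norm_num), pow5_succ_R, hc]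
          nlinarith
        linarith
  have hothx : ∀ j, j ≠ i → x j ∈ Set.Ioo (2/5 : ℝ) (3/5) := by
    intro j hj
    have hx1 := (hxob j).1
    have hx2 := (hxob j).2
    have hb1 : (2*5^m + 1 : ℝ) ≤ (l j : ℝ) := by exact_mod_cast (hoth j hj).1
    have hb2 : (l j : ℝ) ≤ 3*5^m := by exact_mod_cast (hoth j hj).2
    constructor
    · have : (2/5 : ℝ) ≤ ((l j : ℝ) - 1)/5^(1+m) := by
        rw [div_le_div_iff₀ (by norm_num) h5, pow5_succ_R]
        nlinarith
      linarith
    · have : (l j : ℝ)/5^(1+m) ≤ 3/5 := by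
        rw [div_le_div_iff₀ h5 (by norm_num), pow5_succ_R]
        nlinarith
      linarith
  exact Set.mem_iUnion.2 ⟨i, ⟨fun j hj => hothx j (ne_of_lt hj), hmid,
    fun j hj => hothx j (ne_of_gt hj)⟩⟩

lemma QcolOf_finite (n : ℕ) : (QcolOf 3 n (Fset 3)).Finite := by
  have hsub : QcolOf 3 n (Fset 3) ⊆
      (cube 3 n) '' (Set.univ.pi (fun _ : Fin 3 => Set.Iic (5^n))) := by
    rintro Q ⟨⟨l, hb, rfl⟩, -⟩
    exact ⟨l, fun i _ => (hb i).2, rfl⟩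
  exact Set.Finite.subset (Set.Finite.image _ (Set.Finite.pi (fun i => Set.finite_Iic _))) hsub

lemma tsum_finset {T : Set (Set (Pt 3))} (hT : T.Finite) (g : Set (Pt 3) → ℝ) :
    ∑' Q : T, g Q = ∑ Q ∈ hT.toFinset, g Q := by
  rw [_root_.tsum_subtype]
  rw [tsum_eq_sum (s := hT.toFinset)
    (fun b hb => Set.indicator_of_notMem (by simpa using hb) g)]
  exact Finset.sum_congr rfl fun Q hQ => Set.indicator_of_mem (hT.mem_toFinset.1 hQ) g

lemma energy_eq (n : ℕ) (p : ℝ) (f : Set (Pt 3) → ℝ) :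
    energy 3 n p f = (1/2) * ∑ Q ∈ (QcolOf_finite n).toFinset,
      ∑ Q' ∈ (QcolOf_finite n).toFinset,
      (if (Q ∩ Q').Nonempty then |f Q - f Q'| ^ p else 0) := by
  rw [energy]
  congr 1
  rw [tsum_finset (QcolOf_finite n)
    (fun Q => ∑' Q' : QcolOf 3 n (Fset 3),
      if (Q ∩ (Q' : Set (Pt 3))).Nonempty then |f Q - f Q'| ^ p else 0)]
  refine Finset.sum_congr rfl fun Q hQ => ?_
  exact tsum_finset (QcolOf_finite n)
    (fun Q' => if (Q ∩ Q').Nonempty then |f Q - f Q'| ^ p else 0)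

lemma term_nonneg (p : ℝ) (f : Set (Pt 3) → ℝ) (Q Q' : Set (Pt 3)) :
    0 ≤ (if (Q ∩ Q').Nonempty then |f Q - f Q'| ^ p else 0) := by
  split
  · exact Real.rpow_nonneg (abs_nonneg _) _
  · exact le_refl 0

lemma sum_rpow_lower {p : ℝ} (hp : 1 < p) (K : ℕ) (hK : 1 ≤ K) (g : ℕ → ℝ)
    (h1 : 1 ≤ |∑ t ∈ Finset.range K, g t|) :
    ((K:ℝ))^(1-p) ≤ ∑ t ∈ Finset.range K, |g t| ^ p := by
  have hAbs : (1:ℝ) ≤ ∑ t ∈ Finset.range K, |g t| :=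
    le_trans h1 (Finset.abs_sum_le_sum_abs _ _)
  have hH := Real.rpow_sum_le_const_mul_sum_rpow (Finset.range K) g (le_of_lt hp)
  have h2 : (1:ℝ) ≤ (∑ t ∈ Finset.range K, |g t|)^p := by
    calc (1:ℝ) = 1 ^ p := (Real.one_rpow p).symm
    _ ≤ (∑ t ∈ Finset.range K, |g t|)^p :=
      Real.rpow_le_rpow (by norm_num) hAbs (by linarith)
  have hKpos : (0:ℝ) < (K:ℝ) := by exact_mod_cast hK
  have hKp : (0:ℝ) < (K:ℝ)^(p-1) := Real.rpow_pos_of_pos hKpos _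
  have hS : ((K:ℝ))^(1-p) = 1 / ((K:ℝ)^(p-1)) := by
    rw [one_div, ← Real.rpow_neg hKpos.le]
    congr 1
    ring
  rw [hS, div_le_iff₀ hKp]
  have hcard : ((Finset.range K).card : ℝ) = (K:ℝ) := by simp
  rw [hcard] at hH
  nlinarith [Finset.sum_nonneg (fun t (_ : t ∈ Finset.range K) => Real.rpow_nonneg (abs_nonneg (g t)) p)]

end
end S7
namespace S7
open Finset
noncomputable section

lemma pow5_le (m : ℕ) : 5^m ≤ 5^(1+m) := Nat.pow_le_pow_right (by norm_num) (by omega)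

lemma cube_in_QcolOf_col {m u v s : ℕ} (hu : u ∈ D m) (hv : v ∈ D m)
    (hs1 : 1 ≤ s) (hs2 : s ≤ 3*5^m) :
    cube 3 (1+m) ![u+1, v+1, s] ∈ QcolOf 3 (1+m) (Fset 3) := by
  apply cube_mem_QcolOf
  · intro i
    have hu' := D_lt m u hu
    have hv' := D_lt m v hv
    have h5 := pow5_le m
    have h55 : (5:ℕ)^(1+m) = 5*5^m := by rw [pow_add]; ring
    fin_cases i <;> simp <;> omega
  · exact col_good (1+m) u v s (D_noTwo m u hu) (D_noTwo m v hv)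

/-- the nonempty-witness: a cube in `QcolOf` is nonempty -/
lemma QcolOf_nonempty {n : ℕ} {Q : Set (Pt 3)} (h : Q ∈ QcolOf 3 n (Fset 3)) :
    Q.Nonempty := by
  obtain ⟨-, x, hx, -⟩ := h
  exact ⟨x, interior_subset hx⟩

/-- `f = indicator of (· ⊆ B)` is admissible for the pair `({B}, GamC B)` -/
lemma indicator_admissible (m : ℕ) (B : Set (Pt 3)) :
    (∀ Q ∈ Sm 3 1 m {B}, (fun S => if S ⊆ B then (1:ℝ) else 0) Q = 1) ∧
    (∀ Q ∈ Sm 3 1 m (GamC 3 1 B), (fun S => if S ⊆ B then (1:ℝ) else 0) Q = 0) := by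
  constructor
  · rintro Q ⟨hQ, Q', hQ', hsub⟩
    rw [Set.mem_singleton_iff] at hQ'
    subst hQ'
    exact if_pos hsub
  · rintro Q ⟨hQ, Q', hQ', hsub⟩
    have hne := QcolOf_nonempty hQ
    obtain ⟨hQ'col, hQ'gam⟩ := hQ'
    refine if_neg fun hcon => ?_
    apply hQ'gam
    obtain ⟨x, hx⟩ := hne
    exact ⟨hQ'col, ⟨x, hsub hx, hcon hx⟩⟩

lemma conduct_set_nonempty (m : ℕ) (p : ℝ) (B : Set (Pt 3)) :
    {e : ℝ | ∃ f : Set (Pt 3) → ℝ,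
      (∀ Q ∈ Sm 3 1 m {B}, f Q = 1) ∧ (∀ Q ∈ Sm 3 1 m (GamC 3 1 B), f Q = 0) ∧
      e = energy 3 (1 + m) p f}.Nonempty := by
  obtain ⟨h1, h0⟩ := indicator_admissible m B
  exact ⟨_, ⟨_, h1, h0, rfl⟩⟩

lemma energy_nonneg (n : ℕ) (p : ℝ) (f : Set (Pt 3) → ℝ) : 0 ≤ energy 3 n p f := by
  rw [energy_eq]
  apply mul_nonneg (by norm_num)
  exact Finset.sum_nonneg fun Q _ => Finset.sum_nonneg fun Q' _ => term_nonneg p f Q Q'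

lemma conduct_bddBelow (m : ℕ) (p : ℝ) (B : Set (Pt 3)) :
    BddBelow {e : ℝ | ∃ f : Set (Pt 3) → ℝ,
      (∀ Q ∈ Sm 3 1 m {B}, f Q = 1) ∧ (∀ Q ∈ Sm 3 1 m (GamC 3 1 B), f Q = 0) ∧
      e = energy 3 (1 + m) p f} := by
  refine ⟨0, fun e he => ?_⟩
  obtain ⟨f, -, -, rfl⟩ := he
  exact energy_nonneg _ p f

lemma numerator_lower {p : ℝ} (hp : 1 < p) (m : ℕ) :
    (16:ℝ)^m * ((1/2) * ((3:ℝ)*5^m)^(1-p)) ≤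
      conduct 3 1 m p {Qone 3} (GamC 3 1 (Qone 3)) := by
  set K : ℕ := 3*5^m with hKdef
  have h5m1 : 1 ≤ 5^m := Nat.one_le_pow _ _ (by norm_num)
  have hKpos : 1 ≤ K := by omega
  have hK2 : 2 ≤ K := by omega
  apply le_csInf (conduct_set_nonempty m p (Qone 3))
  rintro e ⟨f, hf1, hf0, rfl⟩
  rw [energy_eq]
  set Tf := (QcolOf_finite (1+m)).toFinset with hTf
  set E : Set (Pt 3) → Set (Pt 3) → ℝ :=
    fun Q Q' => if (Q ∩ Q').Nonempty then |f Q - f Q'| ^ p else 0 with hE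
  have hdouble : ∑ Q ∈ Tf, ∑ Q' ∈ Tf, E Q Q' = ∑ z ∈ Tf ×ˢ Tf, E z.1 z.2 :=
    (Finset.sum_product' Tf Tf E).symm
  rw [hdouble]
  -- the family of vertical pairs along the 16^m columns
  set ι : (ℕ×ℕ)×ℕ → Set (Pt 3) × Set (Pt 3) :=
    fun w => (cube 3 (1+m) ![w.1.1+1, w.1.2+1, w.2+1],
              cube 3 (1+m) ![w.1.1+1, w.1.2+1, w.2+2]) with hι
  set src : Finset ((ℕ×ℕ)×ℕ) := (D m ×ˢ D m) ×ˢ Finset.range (K-1) with hsrc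
  have hmemsrc : ∀ w ∈ src, w.1.1 ∈ D m ∧ w.1.2 ∈ D m ∧ w.2 < K - 1 := by
    intro w hw
    rw [hsrc, Finset.mem_product] at hw
    obtain ⟨hw1, hw2⟩ := hw
    rw [Finset.mem_product] at hw1
    exact ⟨hw1.1, hw1.2, Finset.mem_range.1 hw2⟩
  have hmap : ∀ w ∈ src, ι w ∈ Tf ×ˢ Tf := by
    intro w hw
    obtain ⟨hu, hv, ht⟩ := hmemsrc w hw
    rw [Finset.mem_product, hTf, Set.Finite.mem_toFinset, Set.Finite.mem_toFinset]
    constructor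
    · exact cube_in_QcolOf_col hu hv (by omega) (by omega)
    · exact cube_in_QcolOf_col hu hv (by omega) (by omega)
  have hinj : ∀ w ∈ src, ∀ w' ∈ src, ι w = ι w' → w = w' := by
    intro w hw w' hw' heq
    have h1 : cube 3 (1+m) ![w.1.1+1, w.1.2+1, w.2+1]
        = cube 3 (1+m) ![w'.1.1+1, w'.1.2+1, w'.2+1] := congrArg Prod.fst heq
    have h2 := cube_injective h1
    have e0 := congrFun h2 0
    have e1 := congrFun h2 1
    have e2 := congrFun h2 2
    simp at e0 e1 e2
    exact Prod.ext (Prod.ext e0 e1) e2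
  have hsubset : src.image ι ⊆ Tf ×ˢ Tf := by
    intro z hz
    obtain ⟨w, hw, rfl⟩ := Finset.mem_image.1 hz
    exact hmap w hw
  have hstep1 : ∑ z ∈ src.image ι, E z.1 z.2 ≤ ∑ z ∈ Tf ×ˢ Tf, E z.1 z.2 :=
    Finset.sum_le_sum_of_subset_of_nonneg hsubset (fun z _ _ => term_nonneg p f z.1 z.2)
  have hstep2 : ∑ z ∈ src.image ι, E z.1 z.2 = ∑ w ∈ src, E (ι w).1 (ι w).2 :=
    Finset.sum_image hinj
  -- evaluate sum over src
  have hsplit : ∑ w ∈ src, E (ι w).1 (ι w).2 =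
      ∑ uv ∈ D m ×ˢ D m, ∑ t ∈ Finset.range (K-1), E (ι (uv, t)).1 (ι (uv, t)).2 := by
    rw [hsrc, ← Finset.sum_product' (D m ×ˢ D m) (Finset.range (K-1))
      (fun uv t => E (ι (uv, t)).1 (ι (uv, t)).2)]
  have hcol : ∀ uv ∈ D m ×ˢ D m,
      ((K:ℝ) - 1)^(1-p) ≤ ∑ t ∈ Finset.range (K-1), E (ι (uv, t)).1 (ι (uv, t)).2 := by
    intro uv huv
    rw [Finset.mem_product] at huv
    obtain ⟨hu, hv⟩ := huv
    set h : ℕ → ℝ := fun t => f (cube 3 (1+m) ![uv.1+1, uv.2+1, t+1]) with hh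
    have hterm : ∀ t ∈ Finset.range (K-1),
        E (ι (uv, t)).1 (ι (uv, t)).2 = |h t - h (t+1)| ^ p := by
      intro t ht
      rw [hE]
      have htouch : ((cube 3 (1+m) ![uv.1+1, uv.2+1, t+1]) ∩
          (cube 3 (1+m) ![uv.1+1, uv.2+1, t+2])).Nonempty := by
        apply cubes_touch
        intro i
        fin_cases i <;> simp <;> omega
      simp only [hι]
      rw [if_pos htouch]
    rw [Finset.sum_congr rfl hterm]
    have hrange : ((K - 1 : ℕ) : ℝ) = (K:ℝ) - 1 := by
      have : 1 ≤ K := hKpos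
      push_cast [Nat.cast_sub this]
      ring
    rw [← hrange]
    apply sum_rpow_lower hp (K-1) (by omega) (fun t => h t - h (t+1))
    have htel : ∑ t ∈ Finset.range (K-1), (h t - h (t+1)) = -(h (K-1) - h 0) := by
      have := Finset.sum_range_sub h (K-1)
      have h2 : ∑ t ∈ Finset.range (K-1), (h t - h (t+1))
          = -∑ t ∈ Finset.range (K-1), (h (t+1) - h t) := by
        rw [← Finset.sum_neg_distrib]
        exact Finset.sum_congr rfl fun t _ => by ring
      rw [h2, this]
    rw [htel]
    have hend : h (K-1) = 0 := by
      rw [hh]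
      apply hf0
      refine ⟨cube_in_QcolOf_col hu hv (by omega) (by omega), cube 3 1 ![1,1,3], ?_, ?_⟩
      · constructor
        · apply cube_mem_QcolOf
          · intro i; fin_cases i <;> simp
          · constructor
            · rintro ⟨i, hi, ho⟩
              fin_cases i <;> simp [topd] at hi ho <;> omega
            · trivial
        · rw [Gam]
          intro hcon
          have := hcon.2
          rw [disj_113_Qone] at this
          exact Set.not_nonempty_empty this
      · apply cube_subset_113
        · intro i
          have := D_lt m uv.1 hu
          have := D_lt m uv.2 hv
          fin_cases i <;> simp <;> omega
        · simp; exact D_lt m uv.1 hu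
        · simp; exact D_lt m uv.2 hv
        · simp; omega
    have hstart : h 0 = 1 := by
      rw [hh]
      apply hf1
      refine ⟨cube_in_QcolOf_col hu hv (by omega) (by omega), Qone 3, rfl, ?_⟩
      apply cube_subset_Qone
      intro i
      have := D_lt m uv.1 hu
      have := D_lt m uv.2 hv
      fin_cases i <;> simp <;> omega
    rw [hend, hstart]
    norm_num
  have hcount : ∑ uv ∈ D m ×ˢ D m, ((K:ℝ) - 1)^(1-p) = (16:ℝ)^m * ((K:ℝ) - 1)^(1-p) := by
    rw [Finset.sum_const, Finset.card_product, D_card, nsmul_eq_mul]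
    have h44 : ((4^m * 4^m : ℕ) : ℝ) = 16^m := by
      push_cast
      rw [← mul_pow]
      norm_num
    rw [h44]
  have hKbase : ((3:ℝ)*5^m)^(1-p) ≤ ((K:ℝ) - 1)^(1-p) := by
    have hK3 : (3:ℝ) ≤ (K:ℝ) := by
      have : 3 ≤ K := by omega
      exact_mod_cast this
    have hKc : ((3:ℝ)*5^m) = (K:ℝ) := by rw [hKdef]; push_cast; ring
    rw [hKc]
    apply Real.rpow_le_rpow_of_nonpos (by linarith) (by linarith) (by linarith)
  calc (16:ℝ)^m * ((1/2) * ((3:ℝ)*5^m)^(1-p))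
      ≤ (16:ℝ)^m * ((1/2) * ((K:ℝ) - 1)^(1-p)) := by
        apply mul_le_mul_of_nonneg_left _ (by positivity)
        apply mul_le_mul_of_nonneg_left hKbase (by norm_num)
    _ = (1/2) * ((16:ℝ)^m * ((K:ℝ) - 1)^(1-p)) := by ring
    _ ≤ (1/2) * ∑ z ∈ Tf ×ˢ Tf, E z.1 z.2 := by
        apply mul_le_mul_of_nonneg_left _ (by norm_num)
        rw [← hcount] at *
        calc ∑ uv ∈ D m ×ˢ D m, ((K:ℝ) - 1)^(1-p)
            ≤ ∑ uv ∈ D m ×ˢ D m, ∑ t ∈ Finset.range (K-1), E (ι (uv, t)).1 (ι (uv, t)).2 :=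
              Finset.sum_le_sum hcol
          _ = ∑ w ∈ src, E (ι w).1 (ι w).2 := hsplit.symm
          _ = ∑ z ∈ src.image ι, E z.1 z.2 := hstep2.symm
          _ ≤ ∑ z ∈ Tf ×ˢ Tf, E z.1 z.2 := hstep1

end
end S7
namespace S7
open Finset
noncomputable section

lemma cube_in_QcolOf_diag {m k : ℕ} (h1 : 1 ≤ k) (h2 : k ≤ 2*5^m+1) :
    cube 3 (1+m) ![k, k, 2*5^m+1] ∈ QcolOf 3 (1+m) (Fset 3) := by
  have h5m1 : 1 ≤ 5^m := Nat.one_le_pow _ _ (by norm_num)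
  have h55 : (5:ℕ)^(1+m) = 5*5^m := by rw [pow_add]; ring
  apply cube_mem_QcolOf
  · intro i
    fin_cases i <;> simp <;> omega
  · have hc : (2*5^m+1) - 1 = 2*5^m := by omega
    exact diag_good (1+m) k _ (by rw [hc]; exact NoOdd_c m)

lemma cube113_in_QcolOf : cube 3 1 ![1,1,3] ∈ QcolOf 3 1 (Fset 3) := by
  apply cube_mem_QcolOf
  · intro i; fin_cases i <;> simp
  · constructor
    · rintro ⟨i, hi, ho⟩
      fin_cases i <;> simp [topd] at hi ho <;> omega
    · trivial

lemma cube113_in_GamC_Qtwo : cube 3 1 ![1,1,3] ∈ GamC 3 1 (Qtwo 3) := by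
  refine ⟨cube113_in_QcolOf, ?_⟩
  rw [Gam]
  intro hcon
  have := hcon.2
  rw [disj_113_Qtwo] at this
  exact Set.not_nonempty_empty this

lemma denominator_lower {p : ℝ} (hp : 1 < p) (m : ℕ) :
    (1/2) * (((5:ℝ)^m + 1))^(1-p) ≤ conduct 3 1 m p {Qtwo 3} (GamC 3 1 (Qtwo 3)) := by
  set L : ℕ := 5^m + 1 with hLdef
  have h5m1 : 1 ≤ 5^m := Nat.one_le_pow _ _ (by norm_num)
  apply le_csInf (conduct_set_nonempty m p (Qtwo 3))
  rintro e ⟨f, hf1, hf0, rfl⟩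
  rw [energy_eq]
  set Tf := (QcolOf_finite (1+m)).toFinset with hTf
  set E : Set (Pt 3) → Set (Pt 3) → ℝ :=
    fun Q Q' => if (Q ∩ Q').Nonempty then |f Q - f Q'| ^ p else 0 with hE
  have hdouble : ∑ Q ∈ Tf, ∑ Q' ∈ Tf, E Q Q' = ∑ z ∈ Tf ×ˢ Tf, E z.1 z.2 :=
    (Finset.sum_product' Tf Tf E).symm
  rw [hdouble]
  set P : ℕ → Set (Pt 3) := fun t => cube 3 (1+m) ![5^m + t, 5^m + t, 2*5^m+1] with hP
  set ι : ℕ → Set (Pt 3) × Set (Pt 3) := fun t => (P t, P (t+1)) with hι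
  have hPQ : ∀ t, t ≤ L → P t ∈ QcolOf 3 (1+m) (Fset 3) := by
    intro t ht
    exact cube_in_QcolOf_diag (by omega) (by omega)
  have hmap : ∀ t ∈ Finset.range L, ι t ∈ Tf ×ˢ Tf := by
    intro t ht
    rw [Finset.mem_range] at ht
    rw [Finset.mem_product, hTf, Set.Finite.mem_toFinset, Set.Finite.mem_toFinset]
    exact ⟨hPQ t (by omega), hPQ (t+1) (by omega)⟩
  have hinj : ∀ t ∈ Finset.range L, ∀ t' ∈ Finset.range L, ι t = ι t' → t = t' := by
    intro t _ t' _ heq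
    have h1 : P t = P t' := congrArg Prod.fst heq
    have h2 := cube_injective h1
    have := congrFun h2 0
    simp at this
    omega
  have hstep1 : ∑ z ∈ (Finset.range L).image ι, E z.1 z.2 ≤ ∑ z ∈ Tf ×ˢ Tf, E z.1 z.2 :=
    Finset.sum_le_sum_of_subset_of_nonneg
      (fun z hz => by
        obtain ⟨t, ht, rfl⟩ := Finset.mem_image.1 hz
        exact hmap t ht)
      (fun z _ _ => term_nonneg p f z.1 z.2)
  have hstep2 : ∑ z ∈ (Finset.range L).image ι, E z.1 z.2
      = ∑ t ∈ Finset.range L, E (ι t).1 (ι t).2 := Finset.sum_image hinj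
  set h : ℕ → ℝ := fun t => f (P t) with hh
  have hterm : ∀ t ∈ Finset.range L, E (ι t).1 (ι t).2 = |h t - h (t+1)| ^ p := by
    intro t ht
    rw [hE]
    have htouch : (P t ∩ P (t+1)).Nonempty := by
      apply cubes_touch
      intro i
      fin_cases i <;> simp <;> omega
    simp only [hι]
    rw [if_pos htouch]
  have hpath : ((L:ℝ))^(1-p) ≤ ∑ t ∈ Finset.range L, E (ι t).1 (ι t).2 := by
    rw [Finset.sum_congr rfl hterm]
    apply sum_rpow_lower hp L (by omega) (fun t => h t - h (t+1))
    have htel : ∑ t ∈ Finset.range L, (h t - h (t+1)) = -(h L - h 0) := by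
      have h1 := Finset.sum_range_sub h L
      have h2 : ∑ t ∈ Finset.range L, (h t - h (t+1))
          = -∑ t ∈ Finset.range L, (h (t+1) - h t) := by
        rw [← Finset.sum_neg_distrib]
        exact Finset.sum_congr rfl fun t _ => by ring
      rw [h2, h1]
    rw [htel]
    have hend : h L = 1 := by
      rw [hh]
      apply hf1
      refine ⟨hPQ L le_rfl, Qtwo 3, rfl, ?_⟩
      rw [hP]
      apply cube_subset_Qtwo
      intro i
      fin_cases i <;> simp <;> omega
    have hstart : h 0 = 0 := by
      rw [hh]
      apply hf0
      refine ⟨hPQ 0 (by omega), cube 3 1 ![1,1,3], cube113_in_GamC_Qtwo, ?_⟩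
      rw [hP]
      apply cube_subset_113
      · intro i; fin_cases i <;> simp <;> omega
      · simp
      · simp
      · simp
    rw [hend, hstart]
    norm_num
  have hLcast : ((L:ℕ):ℝ) = (5:ℝ)^m + 1 := by
    rw [hLdef]; push_cast; ring
  rw [← hLcast]
  apply mul_le_mul_of_nonneg_left _ (by norm_num : (0:ℝ) ≤ 1/2)
  calc ((L:ℕ):ℝ)^(1-p) ≤ ∑ t ∈ Finset.range L, E (ι t).1 (ι t).2 := hpath
    _ = ∑ z ∈ (Finset.range L).image ι, E z.1 z.2 := hstep2.symm
    _ ≤ ∑ z ∈ Tf ×ˢ Tf, E z.1 z.2 := hstep1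

end
end S7
namespace S7
open Finset
noncomputable section

def idxf (N : ℕ) (Q : Set (Pt 3)) : Fin 3 → ℕ :=
  if h : Q ∈ Qcol 3 N then h.choose else fun _ => 1

lemma idxf_spec {N : ℕ} {Q : Set (Pt 3)} (h : Q ∈ Qcol 3 N) :
    (∀ i, 1 ≤ idxf N Q i ∧ idxf N Q i ≤ 5 ^ N) ∧ Q = cube 3 N (idxf N Q) := by
  unfold idxf
  rw [dif_pos h]
  exact h.choose_spec

lemma layer_aux {m : ℕ} {Qi Qo : Set (Pt 3)}
    (hQi : Qi ∈ QcolOf 3 (1+m) (Fset 3)) (hQo : Qo ∈ QcolOf 3 (1+m) (Fset 3))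
    (htouch : (Qi ∩ Qo).Nonempty) (hin : Qi ⊆ Qtwo 3) (hout : ¬ Qo ⊆ Qtwo 3) :
    (∀ i, 2*5^m ≤ idxf (1+m) Qo i ∧ idxf (1+m) Qo i ≤ 3*5^m+1) ∧
    (∃ i j : Fin 3, i ≠ j ∧
      (idxf (1+m) Qo i = 2*5^m ∨ idxf (1+m) Qo i = 3*5^m+1) ∧
      (idxf (1+m) Qo j = 2*5^m ∨ idxf (1+m) Qo j = 3*5^m+1)) ∧
    (∀ i, idxf (1+m) Qi i + 1 - idxf (1+m) Qo i < 3) := by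
  obtain ⟨hsi, hsi2⟩ := idxf_spec hQi.1
  obtain ⟨hso, hso2⟩ := idxf_spec hQo.1
  set li := idxf (1+m) Qi with hli
  set lo := idxf (1+m) Qo with hlo
  have hinb : ∀ i, 2*5^m+1 ≤ li i ∧ li i ≤ 3*5^m := by
    apply cube_subset_Qtwo_conv (fun i => (hsi i).1)
    rw [← hsi2]
    exact hin
  have hclose : ∀ i, lo i ≤ li i + 1 ∧ li i ≤ lo i + 1 := by
    have ht : (cube 3 (1+m) li ∩ cube 3 (1+m) lo).Nonempty := by
      rw [← hsi2, ← hso2]; exact htouch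
    exact touch_close ht
  have hb : ∀ i, 2*5^m ≤ lo i ∧ lo i ≤ 3*5^m+1 := by
    intro i
    have h1 := hinb i
    have h2 := hclose i
    omega
  have hext : ∃ i : Fin 3, lo i = 2*5^m ∨ lo i = 3*5^m+1 := by
    by_contra hcon
    push_neg at hcon
    apply hout
    rw [hso2]
    apply cube_subset_Qtwo
    intro i
    have h1 := hb i
    have h2 := hcon i
    omega
  obtain ⟨i, hi⟩ := hext
  have hext2 : ∃ j : Fin 3, j ≠ i ∧ (lo j = 2*5^m ∨ lo j = 3*5^m+1) := by
    by_contra hcon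
    push_neg at hcon
    have hoth : ∀ j, j ≠ i → 2*5^m + 1 ≤ lo j ∧ lo j ≤ 3*5^m := by
      intro j hj
      have h1 := hb j
      have h2 := hcon j hj
      omega
    have := not_in_QcolOf_layer i hi hoth
    rw [← hso2] at this
    exact this hQo
  obtain ⟨j, hj, hj2⟩ := hext2
  exact ⟨hb, ⟨i, j, (Ne.symm hj), hi, hj2⟩, fun i => by have := hclose i; omega⟩


lemma fin3_third : ∀ i j : Fin 3, i ≠ j → ∃ k : Fin 3, k ≠ i ∧ k ≠ j := by decide
lemma fin3_other : ∀ t i j k : Fin 3, i ≠ j → k ≠ i → k ≠ j → t ≠ k → (t = i ∨ t = j) := by decide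

lemma layer_card_bound (m : ℕ) :
    ((Fintype.piFinset fun _ : Fin 3 => Finset.Icc (2*5^m) (3*5^m+1)).filter
      (fun ℓ => ∃ i j : Fin 3, i ≠ j ∧ (ℓ i = 2*5^m ∨ ℓ i = 3*5^m+1) ∧
        (ℓ j = 2*5^m ∨ ℓ j = 3*5^m+1))).card ≤ 36 * (5^m + 2) := by
  classical
  have h5m1 : 1 ≤ 5^m := Nat.one_le_pow _ _ (by norm_num)
  have hpair : ({2*5^m, 3*5^m+1} : Finset ℕ).card ≤ 2 :=
    (Finset.card_insert_le _ _).trans (by simp)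
  have hicc : (Finset.Icc (2*5^m) (3*5^m+1)).card = 5^m + 2 := by
    rw [Nat.card_Icc]; omega
  set cover : Finset (Fin 3 → ℕ) :=
    (Finset.univ : Finset (Fin 3)).biUnion (fun k =>
      Fintype.piFinset (fun t =>
        if t = k then Finset.Icc (2*5^m) (3*5^m+1) else ({2*5^m, 3*5^m+1} : Finset ℕ)))
    with hcover
  have hsubc : ((Fintype.piFinset fun _ : Fin 3 => Finset.Icc (2*5^m) (3*5^m+1)).filter
      (fun ℓ => ∃ i j : Fin 3, i ≠ j ∧ (ℓ i = 2*5^m ∨ ℓ i = 3*5^m+1) ∧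
        (ℓ j = 2*5^m ∨ ℓ j = 3*5^m+1))) ⊆ cover := by
    intro ℓ hℓ
    rw [Finset.mem_filter] at hℓ
    obtain ⟨hbase, i, j, hij, hi, hj⟩ := hℓ
    obtain ⟨k, hki, hkj⟩ := fin3_third i j hij
    rw [hcover, Finset.mem_biUnion]
    refine ⟨k, Finset.mem_univ _, ?_⟩
    rw [Fintype.mem_piFinset]
    intro t
    by_cases htk : t = k
    · rw [if_pos htk]
      exact Fintype.mem_piFinset.1 hbase t
    · rw [if_neg htk]
      rcases fin3_other t i j k hij hki hkj htk with rfl | rfl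
      · rcases hi with h | h <;> simp [h]
      · rcases hj with h | h <;> simp [h]
  have hcard_each : ∀ k : Fin 3,
      (Fintype.piFinset (fun t =>
        if t = k then Finset.Icc (2*5^m) (3*5^m+1)
        else ({2*5^m, 3*5^m+1} : Finset ℕ))).card ≤ 4 * (5^m + 2) := by
    intro k
    rw [Fintype.card_piFinset, Fin.prod_univ_three]
    have hb : ∀ t : Fin 3, (if t = k then Finset.Icc (2*5^m) (3*5^m+1)
        else ({2*5^m, 3*5^m+1} : Finset ℕ)).card
        ≤ (if t = k then 5^m + 2 else 2) := by
      intro t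
      by_cases htk : t = k
      · rw [if_pos htk, if_pos htk, hicc]
      · rw [if_neg htk, if_neg htk]
        exact hpair
    refine le_trans (Nat.mul_le_mul (Nat.mul_le_mul (hb 0) (hb 1)) (hb 2)) ?_
    fin_cases k <;> simp <;> omega
  calc ((Fintype.piFinset fun _ : Fin 3 => Finset.Icc (2*5^m) (3*5^m+1)).filter
      (fun ℓ => ∃ i j : Fin 3, i ≠ j ∧ (ℓ i = 2*5^m ∨ ℓ i = 3*5^m+1) ∧
        (ℓ j = 2*5^m ∨ ℓ j = 3*5^m+1))).card ≤ cover.card := Finset.card_le_card hsubc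
    _ ≤ ∑ k ∈ (Finset.univ : Finset (Fin 3)), (Fintype.piFinset (fun t =>
          if t = k then Finset.Icc (2*5^m) (3*5^m+1)
          else ({2*5^m, 3*5^m+1} : Finset ℕ))).card := Finset.card_biUnion_le
    _ ≤ ∑ _k ∈ (Finset.univ : Finset (Fin 3)), 4 * (5^m + 2) :=
        Finset.sum_le_sum (fun k _ => hcard_each k)
    _ ≤ 36 * (5^m + 2) := by
        rw [Finset.sum_const]
        simp
        omega

end
end S7
namespace S7
open Finset
noncomputable section

lemma denominator_upper {p : ℝ} (hp : 1 < p) (m : ℕ) :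
    conduct 3 1 m p {Qtwo 3} (GamC 3 1 (Qtwo 3)) ≤ 2916 * (5:ℝ)^m := by
  have h5m1 : 1 ≤ 5^m := Nat.one_le_pow _ _ (by norm_num)
  obtain ⟨h1, h0⟩ := indicator_admissible m (Qtwo 3)
  apply le_trans (csInf_le (conduct_bddBelow m p (Qtwo 3)) ⟨_, h1, h0, rfl⟩)
  set f : Set (Pt 3) → ℝ := fun S => if S ⊆ Qtwo 3 then (1:ℝ) else 0 with hf
  rw [energy_eq]
  set Tf := (QcolOf_finite (1+m)).toFinset with hTf
  set E : Set (Pt 3) → Set (Pt 3) → ℝ :=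
    fun Q Q' => if (Q ∩ Q').Nonempty then |f Q - f Q'| ^ p else 0 with hE
  have hdouble : ∑ Q ∈ Tf, ∑ Q' ∈ Tf, E Q Q' = ∑ z ∈ Tf ×ˢ Tf, E z.1 z.2 :=
    (Finset.sum_product' Tf Tf E).symm
  rw [hdouble]
  set X : Finset (Set (Pt 3) × Set (Pt 3)) :=
    (Tf ×ˢ Tf).filter (fun z => (z.1 ∩ z.2).Nonempty ∧ ¬((z.1 ⊆ Qtwo 3) ↔ (z.2 ⊆ Qtwo 3)))
    with hX
  have hppos : (0:ℝ) < p := by linarith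
  have hfilter : ∑ z ∈ Tf ×ˢ Tf, E z.1 z.2 = ∑ z ∈ X, E z.1 z.2 := by
    rw [hX]
    symm
    apply Finset.sum_filter_of_ne
    intro z hz hne
    constructor
    · by_contra hcon
      apply hne
      rw [hE]
      simp only
      rw [if_neg hcon]
    · intro hiff
      apply hne
      rw [hE]
      simp only
      have : f z.1 = f z.2 := by
        show (if z.1 ⊆ Qtwo 3 then (1:ℝ) else 0) = (if z.2 ⊆ Qtwo 3 then (1:ℝ) else 0)
        by_cases hsub : z.1 ⊆ Qtwo 3
        · rw [if_pos hsub, if_pos (hiff.1 hsub)]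
        · rw [if_neg hsub, if_neg (fun hc => hsub (hiff.2 hc))]
      split
      · rw [this, sub_self, abs_zero, Real.zero_rpow (ne_of_gt hppos)]
      · rfl
  rw [hfilter]
  have hterm_le : ∀ z ∈ X, E z.1 z.2 ≤ 1 := by
    intro z _
    rw [hE]
    simp only
    split
    · apply Real.rpow_le_one (abs_nonneg _) _ hppos.le
      have e1 : f z.1 = (if z.1 ⊆ Qtwo 3 then (1:ℝ) else 0) := rfl
      have e2 : f z.2 = (if z.2 ⊆ Qtwo 3 then (1:ℝ) else 0) := rfl
      rw [e1, e2]
      split_ifs <;> norm_num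
    · norm_num
  have hsum_le : ∑ z ∈ X, E z.1 z.2 ≤ (X.card : ℝ) := by
    calc ∑ z ∈ X, E z.1 z.2 ≤ X.card • (1:ℝ) := Finset.sum_le_card_nsmul X _ 1 hterm_le
    _ = (X.card : ℝ) := by rw [nsmul_eq_mul, mul_one]
  -- counting
  set LayerF : Finset (Fin 3 → ℕ) :=
    (Fintype.piFinset fun _ : Fin 3 => Finset.Icc (2*5^m) (3*5^m+1)).filter
      (fun ℓ => ∃ i j : Fin 3, i ≠ j ∧ (ℓ i = 2*5^m ∨ ℓ i = 3*5^m+1) ∧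
        (ℓ j = 2*5^m ∨ ℓ j = 3*5^m+1)) with hLayerF
  set W : Finset ((Fin 3 → ℕ) × ((Fin 3 → ℕ) × Bool)) :=
    LayerF ×ˢ ((Fintype.piFinset fun _ : Fin 3 => Finset.range 3) ×ˢ
      (Finset.univ : Finset Bool)) with hW
  set φ : Set (Pt 3) × Set (Pt 3) → (Fin 3 → ℕ) × ((Fin 3 → ℕ) × Bool) :=
    fun z => if z.1 ⊆ Qtwo 3
      then (idxf (1+m) z.2, (fun i => idxf (1+m) z.1 i + 1 - idxf (1+m) z.2 i, true))
      else (idxf (1+m) z.1, (fun i => idxf (1+m) z.2 i + 1 - idxf (1+m) z.1 i, false))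
    with hφ
  have hXmem : ∀ z ∈ X, z.1 ∈ QcolOf 3 (1+m) (Fset 3) ∧ z.2 ∈ QcolOf 3 (1+m) (Fset 3) ∧
      (z.1 ∩ z.2).Nonempty ∧ ¬((z.1 ⊆ Qtwo 3) ↔ (z.2 ⊆ Qtwo 3)) := by
    intro z hz
    rw [hX, Finset.mem_filter, Finset.mem_product, hTf,
      Set.Finite.mem_toFinset, Set.Finite.mem_toFinset] at hz
    exact ⟨hz.1.1, hz.1.2, hz.2.1, hz.2.2⟩
  have hmaps : ∀ z ∈ X, φ z ∈ W := by
    intro z hz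
    obtain ⟨hz1, hz2, htouch, hxor⟩ := hXmem z hz
    rw [hφ, hW]
    by_cases hsub : z.1 ⊆ Qtwo 3
    · have hsub2 : ¬ z.2 ⊆ Qtwo 3 := fun hc => hxor ⟨fun _ => hc, fun _ => hsub⟩
      obtain ⟨hb, hext, hδ⟩ := layer_aux hz1 hz2 htouch hsub hsub2
      simp only [if_pos hsub]
      rw [Finset.mem_product]
      constructor
      · rw [hLayerF, Finset.mem_filter]
        constructor
        · rw [Fintype.mem_piFinset]
          intro i
          rw [Finset.mem_Icc]
          exact hb i
        · exact hext
      · rw [Finset.mem_product]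
        constructor
        · rw [Fintype.mem_piFinset]
          intro i
          rw [Finset.mem_range]
          exact hδ i
        · exact Finset.mem_univ _
    · have hsub2 : z.2 ⊆ Qtwo 3 := by
        by_contra hc
        exact hxor ⟨fun h => absurd h hsub, fun h => absurd h hc⟩
      have htouch' : (z.2 ∩ z.1).Nonempty := by
        rw [Set.inter_comm]; exact htouch
      obtain ⟨hb, hext, hδ⟩ := layer_aux hz2 hz1 htouch' hsub2 hsub
      simp only [if_neg hsub]
      rw [Finset.mem_product]
      constructor
      · rw [hLayerF, Finset.mem_filter]
        constructor
        · rw [Fintype.mem_piFinset]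
          intro i
          rw [Finset.mem_Icc]
          exact hb i
        · exact hext
      · rw [Finset.mem_product]
        constructor
        · rw [Fintype.mem_piFinset]
          intro i
          rw [Finset.mem_range]
          exact hδ i
        · exact Finset.mem_univ _
  have hinj : Set.InjOn φ X := by
    intro z hz z' hz' heq
    obtain ⟨hz1, hz2, htouch, hxor⟩ := hXmem z (by simpa using hz)
    obtain ⟨hz1', hz2', htouch', hxor'⟩ := hXmem z' (by simpa using hz')
    obtain ⟨hsi, hsi2⟩ := idxf_spec hz1.1
    obtain ⟨hso, hso2⟩ := idxf_spec hz2.1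
    obtain ⟨hsi', hsi2'⟩ := idxf_spec hz1'.1
    obtain ⟨hso', hso2'⟩ := idxf_spec hz2'.1
    have hclose : ∀ i, idxf (1+m) z.2 i ≤ idxf (1+m) z.1 i + 1 ∧
        idxf (1+m) z.1 i ≤ idxf (1+m) z.2 i + 1 := by
      apply touch_close
      rw [← hsi2, ← hso2]
      exact htouch
    have hclose' : ∀ i, idxf (1+m) z'.2 i ≤ idxf (1+m) z'.1 i + 1 ∧
        idxf (1+m) z'.1 i ≤ idxf (1+m) z'.2 i + 1 := by
      apply touch_close
      rw [← hsi2', ← hso2']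
      exact htouch'
    rw [hφ] at heq
    by_cases hsub : z.1 ⊆ Qtwo 3 <;> by_cases hsub' : z'.1 ⊆ Qtwo 3
    · simp only [if_pos hsub, if_pos hsub', Prod.mk.injEq] at heq
      obtain ⟨e1, e2, -⟩ := heq
      have hz2eq : z.2 = z'.2 := by rw [hso2, hso2', e1]
      have hidx : idxf (1+m) z.1 = idxf (1+m) z'.1 := by
        funext i
        have d1 := congrFun e2 i
        have d2 := congrFun e1 i
        have c1 := hclose i
        have c2 := hclose' i
        omega
      have hz1eq : z.1 = z'.1 := by rw [hsi2, hsi2', hidx]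
      exact Prod.ext hz1eq hz2eq
    · simp only [if_pos hsub, if_neg hsub', Prod.mk.injEq] at heq
      exact absurd heq.2.2 (by norm_num)
    · simp only [if_neg hsub, if_pos hsub', Prod.mk.injEq] at heq
      exact absurd heq.2.2 (by norm_num)
    · simp only [if_neg hsub, if_neg hsub', Prod.mk.injEq] at heq
      obtain ⟨e1, e2, -⟩ := heq
      have hz1eq : z.1 = z'.1 := by rw [hsi2, hsi2', e1]
      have hidx : idxf (1+m) z.2 = idxf (1+m) z'.2 := by
        funext i
        have d1 := congrFun e2 i
        have d2 := congrFun e1 i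
        have c1 := hclose i
        have c2 := hclose' i
        omega
      have hz2eq : z.2 = z'.2 := by rw [hso2, hso2', hidx]
      exact Prod.ext hz1eq hz2eq
  have hcardX : X.card ≤ W.card := Finset.card_le_card_of_injOn φ hmaps hinj
  -- card of W
  have hLayer_card : LayerF.card ≤ 36 * (5^m + 2) := by
    rw [hLayerF]
    exact layer_card_bound m
  have hWcard : W.card ≤ 5832 * 5^m := by
    rw [hW, Finset.card_product, Finset.card_product, Fintype.card_piFinset]
    have h27 : (∏ i : Fin 3, (Finset.range 3).card) = 27 := by
      rw [Fin.prod_univ_three]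
      simp
    rw [h27]
    have hbool : (Finset.univ : Finset Bool).card = 2 := by simp
    rw [hbool]
    have : LayerF.card ≤ 108 * 5^m := by
      have h2 : 5^m + 2 ≤ 3 * 5^m := by omega
      calc LayerF.card ≤ 36 * (5^m + 2) := hLayer_card
        _ ≤ 36 * (3 * 5^m) := by omega
        _ = 108 * 5^m := by ring
    calc LayerF.card * (27 * 2) ≤ 108 * 5^m * (27 * 2) := by omega
      _ = 5832 * 5^m := by ring
  calc (1:ℝ)/2 * ∑ z ∈ X, E z.1 z.2 ≤ 1/2 * (X.card : ℝ) := by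
        apply mul_le_mul_of_nonneg_left hsum_le (by norm_num)
    _ ≤ 1/2 * ((5832 * 5^m : ℕ) : ℝ) := by
        apply mul_le_mul_of_nonneg_left _ (by norm_num)
        exact_mod_cast le_trans hcardX hWcard
    _ ≤ 2916 * (5:ℝ)^m := by
        push_cast
        ring_nf
        nlinarith [pw_pos m]

end
end S7
namespace S7
open Finset Filter
noncomputable section

lemma five_rpow_lt {p : ℝ} (hp2 : p < Real.log 16 / Real.log 5) : (5:ℝ)^p < 16 := by
  have hlog5 : (0:ℝ) < Real.log 5 := Real.log_pos (by norm_num)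
  have h1 : p * Real.log 5 < Real.log 16 := by
    rw [lt_div_iff₀ hlog5] at hp2
    exact hp2
  calc (5:ℝ)^p = Real.exp (p * Real.log 5) := by
        rw [Real.rpow_def_of_pos (by norm_num)]
        ring_nf
    _ < Real.exp (Real.log 16) := Real.exp_lt_exp.2 h1
    _ = 16 := Real.exp_log (by norm_num)

end
end S7


open Filter in
/-- For `1 < p < log 16 / log 5`, the ratio of the conductances of the corner cube and the
center cube of `F⁽³⁾` tends to infinity. -/
theorem statement7 (p : ℝ) (hp1 : 1 < p) (hp2 : p < Real.log 16 / Real.log 5) :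
    Tendsto (fun m : ℕ =>
      conduct 3 1 m p {Qone 3} (GamC 3 1 (Qone 3)) /
        conduct 3 1 m p {Qtwo 3} (GamC 3 1 (Qtwo 3))) atTop atTop := by
  have h516 : (5:ℝ)^p < 16 := S7.five_rpow_lt hp2
  have h5p : (0:ℝ) < (5:ℝ)^p := Real.rpow_pos_of_pos (by norm_num) p
  set r : ℝ := 16 / (5:ℝ)^p with hr
  have hr1 : 1 < r := (one_lt_div h5p).2 h516
  set c : ℝ := ((1/2) * (3:ℝ)^(1-p)) / 2916 with hc
  have hcpos : 0 < c := by
    apply div_pos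
    · exact mul_pos (by norm_num) (Real.rpow_pos_of_pos (by norm_num) _)
    · norm_num
  have key : ∀ m : ℕ, c * r^m ≤
      conduct 3 1 m p {Qone 3} (GamC 3 1 (Qone 3)) /
        conduct 3 1 m p {Qtwo 3} (GamC 3 1 (Qtwo 3)) := by
    intro m
    have h5m : (0:ℝ) < (5:ℝ)^m := by positivity
    have hA := S7.numerator_lower hp1 m
    have hBlow := S7.denominator_lower hp1 m
    have hBup := S7.denominator_upper hp1 m
    have hBpos : 0 < conduct 3 1 m p {Qtwo 3} (GamC 3 1 (Qtwo 3)) := by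
      apply lt_of_lt_of_le _ hBlow
      exact mul_pos (by norm_num) (Real.rpow_pos_of_pos (by positivity) _)
    have hanon : (0:ℝ) ≤ (16:ℝ)^m * ((1/2) * ((3:ℝ)*5^m)^(1-p)) := by
      apply mul_nonneg (by positivity)
      exact mul_nonneg (by norm_num) (Real.rpow_nonneg (by positivity) _)
    have hdiv := div_le_div₀ (le_trans hanon hA) hA hBpos hBup
    refine le_trans ?_ hdiv
    have hsplit : ((3:ℝ)*5^m)^(1-p) = (3:ℝ)^(1-p) * ((5:ℝ)^m)^(1-p) :=
      Real.mul_rpow (by norm_num) (by positivity)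
    have hsub : ((5:ℝ)^m)^(1-p) = (5:ℝ)^m / ((5:ℝ)^m)^p := by
      rw [Real.rpow_sub h5m, Real.rpow_one]
    have hswap : ((5:ℝ)^m)^p = ((5:ℝ)^p)^m := by
      rw [← Real.rpow_natCast (5:ℝ) m, ← Real.rpow_natCast ((5:ℝ)^p) m,
        ← Real.rpow_mul (by norm_num : (0:ℝ) ≤ 5) (m:ℝ) p,
        ← Real.rpow_mul (by norm_num : (0:ℝ) ≤ 5) p (m:ℝ), mul_comm]
    have h5pm : (0:ℝ) < ((5:ℝ)^p)^m := by positivity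
    apply le_of_eq
    rw [hsplit, hsub, hswap, hc, hr, div_pow]
    field_simp
  exact tendsto_atTop_mono key
    (Tendsto.const_mul_atTop hcpos (tendsto_pow_atTop_atTop_of_one_lt hr1))
end
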